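/- arXiv:1909.00630 — 4 statements merged into one kernel-verified Lean document; each statement's English description precedes it below -/
import Mathlib

section
/- There exists a constant C > 0, independent of L ≥ 1, such that for every divergence-free u ∈ H^1((-L,L)×(0,1); ℝ²) with u·n = 0 on ∂Ω_L, one has ‖u‖_{L^2(Ω_L)} ≤ C ‖∂_y u‖_{L^2(Ω_L)}. -/
open MeasureTheory Set

set_option maxHeartbeats 1000000

/-- The rectangle `Ω_L = (-L,L) × (0,1)` in `ℝ²`. -/
def rect (L : ℝ) : Set (ℝ × ℝ) := Set.Ioo (-L) L ×ˢ Set.Ioo (0 : ℝ) 1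

/-- Horizontal partial derivative. -/
noncomputable def dx (g : ℝ × ℝ → ℝ) (q : ℝ × ℝ) : ℝ := fderiv ℝ g q (1, 0)

/-- Vertical partial derivative. -/
noncomputable def dy (g : ℝ × ℝ → ℝ) (q : ℝ × ℝ) : ℝ := fderiv ℝ g q (0, 1)

section Aux

lemma ioo_vol : (volume (Set.Ioo (0:ℝ) 1)).toReal = 1 := by
  simp [Real.volume_Ioo]

lemma ioo_vol_lt : volume (Set.Ioo (0:ℝ) 1) < ⊤ := by
  rw [Real.volume_Ioo]; exact ENNReal.ofReal_lt_top

/-- Cauchy–Schwarz / Jensen on the unit interval. -/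
lemma sq_integral_le {g : ℝ → ℝ} (hg : Continuous g) :
    (∫ t in Set.Ioo (0:ℝ) 1, g t) ^ 2 ≤ ∫ t in Set.Ioo (0:ℝ) 1, (g t) ^ 2 := by
  have hgi : IntegrableOn g (Set.Ioo (0:ℝ) 1) :=
    (hg.integrableOn_Icc (a := 0) (b := 1)).mono_set Set.Ioo_subset_Icc_self
  have hg2i : IntegrableOn (fun t => (g t) ^ 2) (Set.Ioo (0:ℝ) 1) :=
    ((hg.pow 2).integrableOn_Icc (a := 0) (b := 1)).mono_set Set.Ioo_subset_Icc_self
  have key : ∀ m : ℝ, ∫ t in Set.Ioo (0:ℝ) 1, (g t - m) ^ 2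
      = (∫ t in Set.Ioo (0:ℝ) 1, (g t) ^ 2) - (2 * m) * (∫ t in Set.Ioo (0:ℝ) 1, g t)
        + m ^ 2 := by
    intro m
    have e1 : IntegrableOn (fun t => (g t) ^ 2 - (2 * m) * g t) (Set.Ioo (0:ℝ) 1) :=
      hg2i.sub (hgi.const_mul (2 * m))
    have e2 : IntegrableOn (fun _ : ℝ => m ^ 2) (Set.Ioo (0:ℝ) 1) :=
      integrableOn_const ioo_vol_lt.ne
    calc ∫ t in Set.Ioo (0:ℝ) 1, (g t - m) ^ 2
        = ∫ t in Set.Ioo (0:ℝ) 1, (((g t) ^ 2 - (2 * m) * g t) + m ^ 2) :=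
          integral_congr_ae (Filter.Eventually.of_forall fun t => by ring)
      _ = (∫ t in Set.Ioo (0:ℝ) 1, ((g t) ^ 2 - (2 * m) * g t))
            + ∫ _ in Set.Ioo (0:ℝ) 1, m ^ 2 := integral_add e1 e2
      _ = (∫ t in Set.Ioo (0:ℝ) 1, (g t) ^ 2) - (2 * m) * (∫ t in Set.Ioo (0:ℝ) 1, g t)
            + m ^ 2 := by
          rw [integral_sub hg2i (hgi.const_mul (2 * m)), MeasureTheory.integral_const_mul,
            setIntegral_const]
          simp [ioo_vol]
  have h0 : 0 ≤ ∫ t in Set.Ioo (0:ℝ) 1, (g t - (∫ s in Set.Ioo (0:ℝ) 1, g s)) ^ 2 :=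
    setIntegral_nonneg measurableSet_Ioo (fun t _ => sq_nonneg _)
  have := key (∫ s in Set.Ioo (0:ℝ) 1, g s)
  nlinarith [h0, this]

/-- 1D Poincaré given a pointwise bound by the integral of |f'|. -/
lemma oneD_of_bound {f : ℝ → ℝ} (hf : ContDiff ℝ 1 f)
    (hb : ∀ y ∈ Set.Ioo (0:ℝ) 1, |f y| ≤ ∫ t in Set.Ioo (0:ℝ) 1, |deriv f t|) :
    ∫ y in Set.Ioo (0:ℝ) 1, (f y) ^ 2 ≤ ∫ y in Set.Ioo (0:ℝ) 1, (deriv f y) ^ 2 := by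
  have hd : Continuous (deriv f) := hf.continuous_deriv le_rfl
  have habs : Continuous fun t => |deriv f t| := hd.abs
  have key : ∀ y ∈ Set.Ioo (0:ℝ) 1,
      (f y) ^ 2 ≤ ∫ t in Set.Ioo (0:ℝ) 1, (deriv f t) ^ 2 := by
    intro y hy
    calc (f y) ^ 2 = |f y| ^ 2 := (sq_abs _).symm
      _ ≤ (∫ t in Set.Ioo (0:ℝ) 1, |deriv f t|) ^ 2 := by
          have h1 := hb y hy
          have h2 : (0:ℝ) ≤ |f y| := abs_nonneg _
          nlinarith
      _ ≤ ∫ t in Set.Ioo (0:ℝ) 1, |deriv f t| ^ 2 := sq_integral_le habs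
      _ = ∫ t in Set.Ioo (0:ℝ) 1, (deriv f t) ^ 2 := by
          exact integral_congr_ae (Filter.Eventually.of_forall fun t => sq_abs _)
  have hfi : IntegrableOn (fun y => (f y) ^ 2) (Set.Ioo (0:ℝ) 1) :=
    ((hf.continuous.pow 2).integrableOn_Icc (a := 0) (b := 1)).mono_set
      Set.Ioo_subset_Icc_self
  calc ∫ y in Set.Ioo (0:ℝ) 1, (f y) ^ 2
      ≤ ∫ _ in Set.Ioo (0:ℝ) 1, (∫ t in Set.Ioo (0:ℝ) 1, (deriv f t) ^ 2) := by
        exact setIntegral_mono_on hfi (integrableOn_const ioo_vol_lt.ne)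
          measurableSet_Ioo key
    _ = ∫ t in Set.Ioo (0:ℝ) 1, (deriv f t) ^ 2 := by
        rw [setIntegral_const]; simp [ioo_vol]

lemma my_ftc {f : ℝ → ℝ} (hf : ContDiff ℝ 1 f) (a b : ℝ) :
    ∫ t in a..b, deriv f t = f b - f a :=
  intervalIntegral.integral_deriv_eq_sub
    (fun t _ => (hf.differentiable one_ne_zero).differentiableAt)
    ((hf.continuous_deriv le_rfl).intervalIntegrable a b)

lemma diff_le_int {f : ℝ → ℝ} (hf : ContDiff ℝ 1 f) {y z : ℝ}
    (hy : y ∈ Set.Icc (0:ℝ) 1) (hz : z ∈ Set.Icc (0:ℝ) 1) :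
    |f y - f z| ≤ ∫ t in Set.Ioo (0:ℝ) 1, |deriv f t| := by
  have hd : Continuous (deriv f) := hf.continuous_deriv le_rfl
  have h1 : |f y - f z| = |∫ t in z..y, deriv f t| := by rw [my_ftc hf]
  have h2 : |∫ t in z..y, deriv f t| ≤ ∫ t in Set.uIoc z y, |deriv f t| := by
    simpa [Real.norm_eq_abs] using
      intervalIntegral.norm_integral_le_integral_norm_uIoc (f := deriv f) (a := z) (b := y)
        (μ := volume)
  have hsub : Set.uIoc z y ⊆ Set.Icc (0:ℝ) 1 := by
    rw [Set.uIoc]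
    intro t ht
    exact ⟨le_trans (le_min hz.1 hy.1) (le_of_lt ht.1), le_trans ht.2 (max_le hz.2 hy.2)⟩
  have h3 : ∫ t in Set.uIoc z y, |deriv f t| ≤ ∫ t in Set.Icc (0:ℝ) 1, |deriv f t| :=
    setIntegral_mono_set (hd.abs.integrableOn_Icc)
      (Filter.Eventually.of_forall fun t => abs_nonneg _) (hsub.eventuallyLE)
  rw [h1]
  exact (h2.trans h3).trans_eq integral_Icc_eq_integral_Ioo

lemma boundA {f : ℝ → ℝ} (hf : ContDiff ℝ 1 f) (h0 : f 0 = 0) :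
    ∀ y ∈ Set.Ioo (0:ℝ) 1, |f y| ≤ ∫ t in Set.Ioo (0:ℝ) 1, |deriv f t| := by
  intro y hy
  have := diff_le_int hf (Set.Ioo_subset_Icc_self hy) (Set.left_mem_Icc.2 zero_le_one)
  simpa [h0] using this

lemma boundB {f : ℝ → ℝ} (hf : ContDiff ℝ 1 f)
    (hmean : ∫ y in Set.Ioo (0:ℝ) 1, f y = 0) :
    ∀ y ∈ Set.Ioo (0:ℝ) 1, |f y| ≤ ∫ t in Set.Ioo (0:ℝ) 1, |deriv f t| := by
  intro y hy
  have hfi : IntegrableOn f (Set.Ioo (0:ℝ) 1) :=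
    (hf.continuous.integrableOn_Icc (a := 0) (b := 1)).mono_set Set.Ioo_subset_Icc_self
  have hrep : f y = ∫ z in Set.Ioo (0:ℝ) 1, (f y - f z) := by
    rw [integral_sub (integrableOn_const (C := f y) ioo_vol_lt.ne) hfi, setIntegral_const,
      hmean]
    simp [ioo_vol]
  have h1 : |f y| ≤ ∫ z in Set.Ioo (0:ℝ) 1, |f y - f z| := by
    calc |f y| = |∫ z in Set.Ioo (0:ℝ) 1, (f y - f z)| := by rw [← hrep]
      _ ≤ ∫ z in Set.Ioo (0:ℝ) 1, |f y - f z| := by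
          simpa [Real.norm_eq_abs] using
            norm_integral_le_integral_norm (μ := volume.restrict (Set.Ioo (0:ℝ) 1))
              (f := fun z => f y - f z)
  refine h1.trans ?_
  have hconti : IntegrableOn (fun z => |f y - f z|) (Set.Ioo (0:ℝ) 1) :=
    (((continuous_const.sub hf.continuous).abs).integrableOn_Icc (a := 0) (b := 1)).mono_set
      Set.Ioo_subset_Icc_self
  calc ∫ z in Set.Ioo (0:ℝ) 1, |f y - f z|
      ≤ ∫ _ in Set.Ioo (0:ℝ) 1, (∫ t in Set.Ioo (0:ℝ) 1, |deriv f t|) :=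
        setIntegral_mono_on hconti (integrableOn_const ioo_vol_lt.ne)
          measurableSet_Ioo (fun z hz =>
            diff_le_int hf (Set.Ioo_subset_Icc_self hy) (Set.Ioo_subset_Icc_self hz))
    _ = ∫ t in Set.Ioo (0:ℝ) 1, |deriv f t| := by rw [setIntegral_const]; simp [ioo_vol]

variable {u : ℝ × ℝ → ℝ × ℝ}

lemma hasDerivAt_sliceY (hu : ContDiff ℝ 1 u) (x y : ℝ) :
    HasDerivAt (fun t => u (x, t)) (fderiv ℝ u (x, y) (0, 1)) y := by
  have h := (hu.differentiable one_ne_zero (x, y)).hasFDerivAt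
  have hφ : HasDerivAt (fun t : ℝ => ((x : ℝ), t)) ((0 : ℝ), (1 : ℝ)) y :=
    (hasDerivAt_const y x).prodMk (hasDerivAt_id y)
  exact h.comp_hasDerivAt y hφ

lemma hasDerivAt_sliceX (hu : ContDiff ℝ 1 u) (x y : ℝ) :
    HasDerivAt (fun s => u (s, y)) (fderiv ℝ u (x, y) (1, 0)) x := by
  have h := (hu.differentiable one_ne_zero (x, y)).hasFDerivAt
  have hφ : HasDerivAt (fun s : ℝ => (s, (y : ℝ))) ((1 : ℝ), (0 : ℝ)) x :=
    (hasDerivAt_id x).prodMk (hasDerivAt_const x y)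
  exact h.comp_hasDerivAt x hφ

lemma sliceY_fst (hu : ContDiff ℝ 1 u) (x y : ℝ) :
    HasDerivAt (fun t => (u (x, t)).1) ((fderiv ℝ u (x, y) (0, 1)).1) y :=
  (hasDerivAt_sliceY hu x y).fst

lemma sliceY_snd (hu : ContDiff ℝ 1 u) (x y : ℝ) :
    HasDerivAt (fun t => (u (x, t)).2) ((fderiv ℝ u (x, y) (0, 1)).2) y :=
  (hasDerivAt_sliceY hu x y).snd

lemma sliceX_fst (hu : ContDiff ℝ 1 u) (x y : ℝ) :
    HasDerivAt (fun s => (u (s, y)).1) ((fderiv ℝ u (x, y) (1, 0)).1) x :=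
  (hasDerivAt_sliceX hu x y).fst

lemma dx_fst (hu : ContDiff ℝ 1 u) (p : ℝ × ℝ) :
    dx (fun q => (u q).1) p = (fderiv ℝ u p (1, 0)).1 := by
  have h := (hu.differentiable one_ne_zero p).hasFDerivAt
  have h2 : HasFDerivAt (fun q => (u q).1)
      ((ContinuousLinearMap.fst ℝ ℝ ℝ).comp (fderiv ℝ u p)) p :=
    (ContinuousLinearMap.fst ℝ ℝ ℝ).hasFDerivAt.comp p h
  rw [dx, h2.fderiv]; rfl

lemma dy_snd (hu : ContDiff ℝ 1 u) (p : ℝ × ℝ) :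
    dy (fun q => (u q).2) p = (fderiv ℝ u p (0, 1)).2 := by
  have h := (hu.differentiable one_ne_zero p).hasFDerivAt
  have h2 : HasFDerivAt (fun q => (u q).2)
      ((ContinuousLinearMap.snd ℝ ℝ ℝ).comp (fderiv ℝ u p)) p :=
    (ContinuousLinearMap.snd ℝ ℝ ℝ).hasFDerivAt.comp p h
  rw [dy, h2.fderiv]; rfl

lemma cont_fderiv_apply (hu : ContDiff ℝ 1 u) (v : ℝ × ℝ) :
    Continuous fun p => fderiv ℝ u p v :=
  (hu.continuous_fderiv one_ne_zero).clm_apply continuous_const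

lemma integrableOn_box {f : ℝ × ℝ → ℝ} (hf : Continuous f) (a b c d : ℝ) :
    IntegrableOn f (Set.Ioo a b ×ˢ Set.Ioo c d) := by
  have h : IntegrableOn f (Set.Icc ((a, c) : ℝ × ℝ) (b, d)) :=
    hf.continuousOn.integrableOn_compact isCompact_Icc
  refine h.mono_set ?_
  rw [Icc_prod_eq]
  exact Set.prod_mono Set.Ioo_subset_Icc_self Set.Ioo_subset_Icc_self

lemma meanzero (hu : ContDiff ℝ 1 u) {L : ℝ}
    (hdiv : ∀ p : ℝ × ℝ, dx (fun q => (u q).1) p + dy (fun q => (u q).2) p = 0)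
    (hside : ∀ y ∈ Set.Icc (0 : ℝ) 1, (u (-L, y)).1 = 0 ∧ (u (L, y)).1 = 0)
    (htop : ∀ x ∈ Set.Icc (-L) L, (u (x, 0)).2 = 0 ∧ (u (x, 1)).2 = 0)
    {x : ℝ} (hx : x ∈ Set.Icc (-L) L) :
    ∫ y in Set.Ioo (0:ℝ) 1, (u (x, y)).1 = 0 := by
  set D : ℝ × ℝ → ℝ := fun p => (fderiv ℝ u p (1, 0)).1 with hD
  have hDc : Continuous D := (continuous_fst.comp (cont_fderiv_apply hu (1, 0)))
  have step1 : ∀ y ∈ Set.Icc (0:ℝ) 1, (u (x, y)).1 = ∫ s in Set.Ioo (-L) x, D (s, y) := by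
    intro y hy
    have hftc : ∫ s in (-L)..x, D (s, y) = (u (x, y)).1 - (u (-L, y)).1 := by
      refine intervalIntegral.integral_eq_sub_of_hasDerivAt (fun s _ => sliceX_fst hu s y)
        ((hDc.comp (continuous_id.prodMk continuous_const)).intervalIntegrable _ _)
    rw [(hside y hy).1, sub_zero] at hftc
    rw [← hftc, intervalIntegral.integral_of_le hx.1, integral_Ioc_eq_integral_Ioo]
  have step2 : ∀ s ∈ Set.Icc (-L) L, ∫ y in Set.Ioo (0:ℝ) 1, D (s, y) = 0 := by
    intro s hs
    have hdiv' : ∀ y : ℝ, D (s, y) = -((fderiv ℝ u (s, y) (0, 1)).2) := by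
      intro y
      have := hdiv (s, y)
      rw [dx_fst hu, dy_snd hu] at this
      simp only [hD]; linarith
    have hftc : ∫ y in (0:ℝ)..1, (fderiv ℝ u (s, y) (0, 1)).2
        = (u (s, 1)).2 - (u (s, 0)).2 := by
      refine intervalIntegral.integral_eq_sub_of_hasDerivAt (fun y _ => sliceY_snd hu s y)
        (((continuous_snd.comp (cont_fderiv_apply hu (0, 1))).comp
          (continuous_const.prodMk continuous_id)).intervalIntegrable _ _)
    rw [(htop s hs).1, (htop s hs).2, sub_zero] at hftc
    rw [intervalIntegral.integral_of_le zero_le_one, integral_Ioc_eq_integral_Ioo] at hftc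
    calc ∫ y in Set.Ioo (0:ℝ) 1, D (s, y)
        = ∫ y in Set.Ioo (0:ℝ) 1, -((fderiv ℝ u (s, y) (0, 1)).2) :=
          integral_congr_ae (Filter.Eventually.of_forall fun y => hdiv' y)
      _ = -∫ y in Set.Ioo (0:ℝ) 1, (fderiv ℝ u (s, y) (0, 1)).2 := integral_neg _
      _ = 0 := by rw [hftc]; ring
  have hint : Integrable (Function.uncurry fun y s => D (s, y))
      ((volume.restrict (Set.Ioo (0:ℝ) 1)).prod (volume.restrict (Set.Ioo (-L) x))) := by
    rw [Measure.prod_restrict]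
    have : Integrable (D ∘ Prod.swap) ((volume.prod volume).restrict
        (Set.Ioo (0:ℝ) 1 ×ˢ Set.Ioo (-L) x)) := by
      rw [← Measure.volume_eq_prod]
      exact integrableOn_box (hDc.comp continuous_swap) 0 1 (-L) x
    exact this.congr (Filter.Eventually.of_forall fun p => rfl)
  calc ∫ y in Set.Ioo (0:ℝ) 1, (u (x, y)).1
      = ∫ y in Set.Ioo (0:ℝ) 1, ∫ s in Set.Ioo (-L) x, D (s, y) :=
        setIntegral_congr_fun measurableSet_Ioo fun y hy =>
          step1 y (Set.Ioo_subset_Icc_self hy)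
    _ = ∫ s in Set.Ioo (-L) x, ∫ y in Set.Ioo (0:ℝ) 1, D (s, y) :=
        integral_integral_swap hint
    _ = ∫ s in Set.Ioo (-L) x, (0:ℝ) := by
        refine setIntegral_congr_fun measurableSet_Ioo fun s hs => step2 s ?_
        exact ⟨le_of_lt hs.1, le_trans (le_of_lt hs.2) hx.2⟩
    _ = 0 := by simp

end Aux

/-- Uniform-in-`L` Poincaré inequality: there is `C > 0`, independent of `L ≥ 1`, with
`‖u‖_{L²(Ω_L)} ≤ C ‖∂_y u‖_{L²(Ω_L)}` for all divergence-free `u ∈ H¹(Ω_L;ℝ²)` tangent to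
the boundary of `Ω_L = (-L,L)×(0,1)`. -/
theorem uniform_poincare :
    ∃ C > 0, ∀ (L : ℝ), 1 ≤ L → ∀ (u : ℝ × ℝ → ℝ × ℝ),
      ContDiff ℝ 1 u →
      (∀ p : ℝ × ℝ, dx (fun q => (u q).1) p + dy (fun q => (u q).2) p = 0) →
      (∀ y ∈ Set.Icc (0 : ℝ) 1, (u (-L, y)).1 = 0 ∧ (u (L, y)).1 = 0) →
      (∀ x ∈ Set.Icc (-L) L, (u (x, 0)).2 = 0 ∧ (u (x, 1)).2 = 0) →
      (∫ p in rect L, ‖u p‖ ^ 2) ^ ((1 : ℝ) / 2) ≤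
        C * (∫ p in rect L, ‖fderiv ℝ u p (0, 1)‖ ^ 2) ^ ((1 : ℝ) / 2) := by
  refine ⟨2, by norm_num, fun L hL u hu hdiv hside htop => ?_⟩
  have hLL : -L < L := by linarith
  have huc : Continuous u := hu.continuous
  have hvc : Continuous fun p => fderiv ℝ u p (0, 1) := cont_fderiv_apply hu (0, 1)
  -- component C¹ slices
  have hsliceC1 : ∀ x : ℝ, ContDiff ℝ 1 (fun t : ℝ => u (x, t)) := fun x =>
    hu.comp (contDiff_const.prodMk contDiff_id)
  -- slice Poincaré for each component
  have P1 : ∀ x ∈ Set.Ioo (-L) L,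
      ∫ y in Set.Ioo (0:ℝ) 1, ((u (x, y)).1) ^ 2
        ≤ ∫ y in Set.Ioo (0:ℝ) 1, ((fderiv ℝ u (x, y) (0, 1)).1) ^ 2 := by
    intro x hx
    have hf : ContDiff ℝ 1 (fun t : ℝ => (u (x, t)).1) := contDiff_fst.comp (hsliceC1 x)
    have hderiv : deriv (fun t : ℝ => (u (x, t)).1)
        = fun y => (fderiv ℝ u (x, y) (0, 1)).1 :=
      funext fun y => (sliceY_fst hu x y).deriv
    have hmean : ∫ y in Set.Ioo (0:ℝ) 1, (fun t : ℝ => (u (x, t)).1) y = 0 :=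
      meanzero hu hdiv hside htop (Set.mem_Icc_of_Ioo hx)
    have := oneD_of_bound hf (boundB hf hmean)
    rwa [hderiv] at this
  have P2 : ∀ x ∈ Set.Ioo (-L) L,
      ∫ y in Set.Ioo (0:ℝ) 1, ((u (x, y)).2) ^ 2
        ≤ ∫ y in Set.Ioo (0:ℝ) 1, ((fderiv ℝ u (x, y) (0, 1)).2) ^ 2 := by
    intro x hx
    have hf : ContDiff ℝ 1 (fun t : ℝ => (u (x, t)).2) := contDiff_snd.comp (hsliceC1 x)
    have hderiv : deriv (fun t : ℝ => (u (x, t)).2)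
        = fun y => (fderiv ℝ u (x, y) (0, 1)).2 :=
      funext fun y => (sliceY_snd hu x y).deriv
    have h0 : (fun t : ℝ => (u (x, t)).2) 0 = 0 :=
      (htop x (Set.mem_Icc_of_Ioo hx)).1
    have := oneD_of_bound hf (boundA hf h0)
    rwa [hderiv] at this
  -- pointwise slice inequality, combined
  set F : ℝ × ℝ → ℝ := fun p => ((u p).1) ^ 2 + ((u p).2) ^ 2 with hF
  set G : ℝ × ℝ → ℝ := fun p => 2 * ‖fderiv ℝ u p (0, 1)‖ ^ 2 with hG
  have hFc : Continuous F := ((huc.fst.pow 2).add (huc.snd.pow 2))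
  have hGc : Continuous G := continuous_const.mul (hvc.norm.pow 2)
  have slice : ∀ x ∈ Set.Ioo (-L) L,
      ∫ y in Set.Ioo (0:ℝ) 1, F (x, y) ≤ ∫ y in Set.Ioo (0:ℝ) 1, G (x, y) := by
    intro x hx
    have i1 : IntegrableOn (fun y => ((u (x, y)).1) ^ 2) (Set.Ioo (0:ℝ) 1) :=
      (((huc.fst.comp (continuous_const.prodMk continuous_id)).pow 2).integrableOn_Icc
        (a := 0) (b := 1)).mono_set Set.Ioo_subset_Icc_self
    have i2 : IntegrableOn (fun y => ((u (x, y)).2) ^ 2) (Set.Ioo (0:ℝ) 1) :=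
      (((huc.snd.comp (continuous_const.prodMk continuous_id)).pow 2).integrableOn_Icc
        (a := 0) (b := 1)).mono_set Set.Ioo_subset_Icc_self
    have j1 : IntegrableOn (fun y => ((fderiv ℝ u (x, y) (0, 1)).1) ^ 2)
        (Set.Ioo (0:ℝ) 1) :=
      ((((hvc.comp (continuous_const.prodMk continuous_id)).fst.pow 2)).integrableOn_Icc
        (a := 0) (b := 1)).mono_set Set.Ioo_subset_Icc_self
    have j2 : IntegrableOn (fun y => ((fderiv ℝ u (x, y) (0, 1)).2) ^ 2)
        (Set.Ioo (0:ℝ) 1) :=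
      ((((hvc.comp (continuous_const.prodMk continuous_id)).snd.pow 2)).integrableOn_Icc
        (a := 0) (b := 1)).mono_set Set.Ioo_subset_Icc_self
    have jG : IntegrableOn (fun y => G (x, y)) (Set.Ioo (0:ℝ) 1) :=
      ((hGc.comp (continuous_const.prodMk continuous_id)).integrableOn_Icc
        (a := 0) (b := 1)).mono_set Set.Ioo_subset_Icc_self
    calc ∫ y in Set.Ioo (0:ℝ) 1, F (x, y)
        = (∫ y in Set.Ioo (0:ℝ) 1, ((u (x, y)).1) ^ 2)
            + ∫ y in Set.Ioo (0:ℝ) 1, ((u (x, y)).2) ^ 2 := integral_add i1 i2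
      _ ≤ (∫ y in Set.Ioo (0:ℝ) 1, ((fderiv ℝ u (x, y) (0, 1)).1) ^ 2)
            + ∫ y in Set.Ioo (0:ℝ) 1, ((fderiv ℝ u (x, y) (0, 1)).2) ^ 2 :=
          add_le_add (P1 x hx) (P2 x hx)
      _ = ∫ y in Set.Ioo (0:ℝ) 1, (((fderiv ℝ u (x, y) (0, 1)).1) ^ 2
            + ((fderiv ℝ u (x, y) (0, 1)).2) ^ 2) := (integral_add j1 j2).symm
      _ ≤ ∫ y in Set.Ioo (0:ℝ) 1, G (x, y) := by
          refine setIntegral_mono_on (j1.add j2) jG measurableSet_Ioo fun y _ => ?_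
          have hn1 : |(fderiv ℝ u (x, y) (0, 1)).1| ≤ ‖fderiv ℝ u (x, y) (0, 1)‖ := by
            simpa [Real.norm_eq_abs] using norm_fst_le (fderiv ℝ u (x, y) (0, 1))
          have hn2 : |(fderiv ℝ u (x, y) (0, 1)).2| ≤ ‖fderiv ℝ u (x, y) (0, 1)‖ := by
            simpa [Real.norm_eq_abs] using norm_snd_le (fderiv ℝ u (x, y) (0, 1))
          have ha := abs_nonneg ((fderiv ℝ u (x, y) (0, 1)).1)
          have hb := abs_nonneg ((fderiv ℝ u (x, y) (0, 1)).2)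
          simp only [hG]
          nlinarith [sq_abs ((fderiv ℝ u (x, y) (0, 1)).1),
            sq_abs ((fderiv ℝ u (x, y) (0, 1)).2)]
  -- global integrability on the rectangle
  have hFint : IntegrableOn F (rect L) := integrableOn_box hFc _ _ _ _
  have hGint : IntegrableOn G (rect L) := integrableOn_box hGc _ _ _ _
  have hUint : IntegrableOn (fun p => ‖u p‖ ^ 2) (rect L) :=
    integrableOn_box (huc.norm.pow 2) _ _ _ _
  -- the main L² inequality
  have main : (∫ p in rect L, ‖u p‖ ^ 2)
      ≤ 2 * ∫ p in rect L, ‖fderiv ℝ u p (0, 1)‖ ^ 2 := by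
    have volprod : (volume : Measure (ℝ × ℝ)) = volume.prod volume :=
      Measure.volume_eq_prod ℝ ℝ
    have hFint' : IntegrableOn F (Set.Ioo (-L) L ×ˢ Set.Ioo (0:ℝ) 1)
        (volume.prod volume) := by rw [← volprod]; exact hFint
    have hGint' : IntegrableOn G (Set.Ioo (-L) L ×ˢ Set.Ioo (0:ℝ) 1)
        (volume.prod volume) := by rw [← volprod]; exact hGint
    have fub1 : ∫ p in rect L, F p
        = ∫ x in Set.Ioo (-L) L, ∫ y in Set.Ioo (0:ℝ) 1, F (x, y) := by
      rw [rect, volprod]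
      exact setIntegral_prod F hFint'
    have fub2 : ∫ p in rect L, G p
        = ∫ x in Set.Ioo (-L) L, ∫ y in Set.Ioo (0:ℝ) 1, G (x, y) := by
      rw [rect, volprod]
      exact setIntegral_prod G hGint'
    have iF : Integrable (fun x => ∫ y in Set.Ioo (0:ℝ) 1, F (x, y))
        (volume.restrict (Set.Ioo (-L) L)) := by
      have := (by rw [Measure.prod_restrict, ← volprod]; exact hFint :
        Integrable F ((volume.restrict (Set.Ioo (-L) L)).prod
          (volume.restrict (Set.Ioo (0:ℝ) 1))))
      exact this.integral_prod_left
    have iG : Integrable (fun x => ∫ y in Set.Ioo (0:ℝ) 1, G (x, y))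
        (volume.restrict (Set.Ioo (-L) L)) := by
      have := (by rw [Measure.prod_restrict, ← volprod]; exact hGint :
        Integrable G ((volume.restrict (Set.Ioo (-L) L)).prod
          (volume.restrict (Set.Ioo (0:ℝ) 1))))
      exact this.integral_prod_left
    have step : ∫ p in rect L, F p ≤ ∫ p in rect L, G p := by
      rw [fub1, fub2]
      exact setIntegral_mono_on iF iG measurableSet_Ioo slice
    have hptF : ∀ p : ℝ × ℝ, ‖u p‖ ^ 2 ≤ F p := by
      intro p
      have h1 : |(u p).1| ≤ max |(u p).1| |(u p).2| := le_max_left _ _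
      have h2 : |(u p).2| ≤ max |(u p).1| |(u p).2| := le_max_right _ _
      have hnorm : ‖u p‖ = max |(u p).1| |(u p).2| := by
        rw [Prod.norm_def]; simp [Real.norm_eq_abs]
      have hFp : F p = ((u p).1) ^ 2 + ((u p).2) ^ 2 := rfl
      rw [hFp, hnorm]
      rcases max_cases |(u p).1| |(u p).2| with ⟨h, _⟩ | ⟨h, _⟩ <;> rw [h] <;>
        nlinarith [sq_abs ((u p).1), sq_abs ((u p).2), abs_nonneg ((u p).1),
          abs_nonneg ((u p).2)]
    have first : ∫ p in rect L, ‖u p‖ ^ 2 ≤ ∫ p in rect L, F p :=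
      setIntegral_mono_on hUint hFint (measurableSet_Ioo.prod measurableSet_Ioo)
        (fun p _ => hptF p)
    have last : ∫ p in rect L, G p
        = 2 * ∫ p in rect L, ‖fderiv ℝ u p (0, 1)‖ ^ 2 := by
      simp only [hG]
      exact MeasureTheory.integral_const_mul 2 _
    linarith [first, step, last.le, last.ge]
  -- take square roots
  have hBnn : 0 ≤ ∫ p in rect L, ‖fderiv ℝ u p (0, 1)‖ ^ 2 :=
    setIntegral_nonneg (measurableSet_Ioo.prod measurableSet_Ioo)
      (fun p _ => by positivity)
  have hAnn : 0 ≤ ∫ p in rect L, ‖u p‖ ^ 2 :=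
    setIntegral_nonneg (measurableSet_Ioo.prod measurableSet_Ioo)
      (fun p _ => by positivity)
  set A := ∫ p in rect L, ‖u p‖ ^ 2
  set B := ∫ p in rect L, ‖fderiv ℝ u p (0, 1)‖ ^ 2
  have h1 : A ^ ((1:ℝ)/2) ≤ (2 * B) ^ ((1:ℝ)/2) :=
    Real.rpow_le_rpow hAnn main (by norm_num)
  have h2 : (2 * B) ^ ((1:ℝ)/2) = 2 ^ ((1:ℝ)/2) * B ^ ((1:ℝ)/2) :=
    Real.mul_rpow (by norm_num) hBnn
  have h3 : (2:ℝ) ^ ((1:ℝ)/2) ≤ 2 := by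
    rw [← Real.sqrt_eq_rpow]
    nlinarith [Real.sq_sqrt (by norm_num : (0:ℝ) ≤ 2), Real.sqrt_nonneg 2]
  have h4 : (0:ℝ) ≤ B ^ ((1:ℝ)/2) := Real.rpow_nonneg hBnn _
  calc A ^ ((1:ℝ)/2) ≤ 2 ^ ((1:ℝ)/2) * B ^ ((1:ℝ)/2) := by rw [← h2]; exact h1
    _ ≤ 2 * B ^ ((1:ℝ)/2) := mul_le_mul_of_nonneg_right h3 h4
end

section
/- Let Ω = ℝ×(0,1) and let u ∈ H^1(Ω;ℝ²) be divergence free with u·n = 0 on ∂Ω (that is, u²(x,0)=u²(x,1)=0). Then there is a constant C > 0 (independent of u) with ‖u‖_{L^2(Ω)} ≤ C ‖∂_y u‖_{L^2(Ω)}. -/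
open MeasureTheory Set

/-- The strip `Ω = ℝ × (0,1)` in `ℝ²`. -/
def strip : Set (ℝ × ℝ) := Set.univ ×ˢ Set.Ioo (0 : ℝ) 1

namespace PoincareAux

lemma vol01 : (volume (Ioo (0:ℝ) 1)).toReal = 1 := by
  simp [Real.volume_Ioo]

lemma intOn01 {g : ℝ → ℝ} (hg : Continuous g) : IntegrableOn g (Ioo (0:ℝ) 1) :=
  (hg.integrableOn_Icc (a := 0) (b := 1)).mono_set Ioo_subset_Icc_self

lemma cs01 {g : ℝ → ℝ} (hg : Continuous g) :
    (∫ y in Ioo (0:ℝ) 1, g y) ^ 2 ≤ ∫ y in Ioo (0:ℝ) 1, (g y) ^ 2 := by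
  set c := ∫ y in Ioo (0:ℝ) 1, g y with hc
  have hg2 : IntegrableOn (fun y => (g y) ^ 2) (Ioo (0:ℝ) 1) := intOn01 (hg.pow 2)
  have hgi : IntegrableOn g (Ioo (0:ℝ) 1) := intOn01 hg
  have h0 : (0:ℝ) ≤ ∫ y in Ioo (0:ℝ) 1, (g y - c) ^ 2 :=
    setIntegral_nonneg measurableSet_Ioo (fun y _ => sq_nonneg _)
  have hsub : IntegrableOn (fun y => (g y) ^ 2 - 2 * c * g y) (Ioo (0:ℝ) 1) := by
    exact hg2.sub (hgi.const_mul (2 * c))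
  have hconst : IntegrableOn (fun _ : ℝ => c ^ 2) (Ioo (0:ℝ) 1) :=
    integrableOn_const (by simp [Real.volume_Ioo])
  have e0 : ∫ y in Ioo (0:ℝ) 1, (g y - c) ^ 2
      = ∫ y in Ioo (0:ℝ) 1, ((g y) ^ 2 - 2 * c * g y + c ^ 2) := by
    apply setIntegral_congr_fun measurableSet_Ioo
    intro y _; ring
  have e1 : ∫ y in Ioo (0:ℝ) 1, ((g y) ^ 2 - 2 * c * g y + c ^ 2)
      = (∫ y in Ioo (0:ℝ) 1, ((g y) ^ 2 - 2 * c * g y)) + ∫ _y in Ioo (0:ℝ) 1, c ^ 2 :=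
    integral_add hsub hconst
  have e2 : ∫ y in Ioo (0:ℝ) 1, ((g y) ^ 2 - 2 * c * g y)
      = (∫ y in Ioo (0:ℝ) 1, (g y) ^ 2) - ∫ y in Ioo (0:ℝ) 1, 2 * c * g y :=
    integral_sub hg2 (hgi.const_mul (2 * c))
  have e3 : ∫ y in Ioo (0:ℝ) 1, 2 * c * g y = 2 * c * c := by
    rw [integral_const_mul, ← hc]
  have e4 : ∫ _y in Ioo (0:ℝ) 1, (c:ℝ) ^ 2 = c ^ 2 := by
    rw [setIntegral_const]; simp [vol01]
  nlinarith [h0, e0, e1, e2, e3, e4]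

lemma exists_zero_01 {f : ℝ → ℝ} (hf : Continuous f)
    (h : ∫ y in Ioo (0:ℝ) 1, f y = 0) : ∃ z ∈ Icc (0:ℝ) 1, f z = 0 := by
  by_contra hcon
  push_neg at hcon
  have hIcc : uIcc (0:ℝ) 1 = Icc 0 1 := uIcc_of_le zero_le_one
  have hsign : (∀ z ∈ Icc (0:ℝ) 1, 0 < f z) ∨ (∀ z ∈ Icc (0:ℝ) 1, f z < 0) := by
    rcases (hcon 0 (by norm_num)).lt_or_gt with h0 | h0
    · right
      intro z hz
      rcases (hcon z hz).lt_or_gt with h1 | h1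
      · exact h1
      · exfalso
        have hmem : (0:ℝ) ∈ uIcc (f 0) (f z) := by
          rw [mem_uIcc]; left; exact ⟨h0.le, h1.le⟩
        obtain ⟨w, hw, hfw⟩ := intermediate_value_uIcc hf.continuousOn hmem
        have hwmem : w ∈ Icc (0:ℝ) 1 := by
          have hsub : uIcc (0:ℝ) z ⊆ Icc 0 1 := by
            rw [← hIcc]
            exact uIcc_subset_uIcc left_mem_uIcc (by rw [hIcc]; exact hz)
          exact hsub hw
        exact hcon w hwmem hfw
    · left
      intro z hz
      rcases (hcon z hz).lt_or_gt with h1 | h1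
      · exfalso
        have hmem : (0:ℝ) ∈ uIcc (f 0) (f z) := by
          rw [mem_uIcc]; right; exact ⟨h1.le, h0.le⟩
        obtain ⟨w, hw, hfw⟩ := intermediate_value_uIcc hf.continuousOn hmem
        have hwmem : w ∈ Icc (0:ℝ) 1 := by
          have hsub : uIcc (0:ℝ) z ⊆ Icc 0 1 := by
            rw [← hIcc]
            exact uIcc_subset_uIcc left_mem_uIcc (by rw [hIcc]; exact hz)
          exact hsub hw
        exact hcon w hwmem hfw
      · exact h1
  have hioo : ∫ y in (0:ℝ)..1, f y = 0 := by
    rw [intervalIntegral.integral_of_le zero_le_one, integral_Ioc_eq_integral_Ioo, h]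
  rcases hsign with hs | hs
  · have := intervalIntegral.intervalIntegral_pos_of_pos_on
      (hf.intervalIntegrable 0 1) (fun x hx => hs x (Ioo_subset_Icc_self hx)) zero_lt_one
    rw [hioo] at this; exact lt_irrefl _ this
  · have := intervalIntegral.intervalIntegral_pos_of_pos_on
      (hf.neg.intervalIntegrable 0 1)
      (fun x hx => by simpa using hs x (Ioo_subset_Icc_self hx)) zero_lt_one
    simp only [Pi.neg_apply] at this; rw [intervalIntegral.integral_neg, hioo, neg_zero] at this; exact lt_irrefl _ this

lemma poincare1D {f f' : ℝ → ℝ} (hd : ∀ y, HasDerivAt f (f' y) y) (hc : Continuous f')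
    (hz : ∃ z ∈ Icc (0:ℝ) 1, f z = 0) :
    ∫ y in Ioo (0:ℝ) 1, (f y) ^ 2 ≤ ∫ y in Ioo (0:ℝ) 1, (f' y) ^ 2 := by
  obtain ⟨z, hzmem, hz0⟩ := hz
  have hfc : Continuous f := by
    rw [continuous_iff_continuousAt]; exact fun y => (hd y).continuousAt
  have habs : Continuous fun t => |f' t| := hc.abs
  set M := ∫ t in Ioo (0:ℝ) 1, |f' t| with hM
  have hM0 : 0 ≤ M := setIntegral_nonneg measurableSet_Ioo (fun t _ => abs_nonneg _)
  have h4 : ∫ t in (0:ℝ)..1, |f' t| = M := by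
    rw [intervalIntegral.integral_of_le zero_le_one, integral_Ioc_eq_integral_Ioo]
  have key : ∀ y ∈ Icc (0:ℝ) 1, |f y| ≤ M := by
    intro y hy
    have ftc : ∫ t in z..y, f' t = f y - f z :=
      intervalIntegral.integral_eq_sub_of_hasDerivAt (fun t _ => hd t)
        (hc.intervalIntegrable _ _)
    have h1 : |f y| = |∫ t in z..y, f' t| := by rw [ftc, hz0, sub_zero]
    have h2 : |∫ t in z..y, f' t| ≤ |(∫ t in z..y, |f' t|)| := by
      simpa [Real.norm_eq_abs] using
        intervalIntegral.norm_integral_le_abs_integral_norm (f := f') (a := z) (b := y)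
          (μ := volume)
    have h3 : |(∫ t in z..y, |f' t|)| ≤ ∫ t in (0:ℝ)..1, |f' t| := by
      rcases le_total z y with hzy | hzy
      · rw [abs_of_nonneg (intervalIntegral.integral_nonneg hzy (fun t _ => abs_nonneg _))]
        exact intervalIntegral.integral_mono_interval hzmem.1 hzy hy.2
          (Filter.Eventually.of_forall fun t => abs_nonneg _) (habs.intervalIntegrable _ _)
      · rw [intervalIntegral.integral_symm, abs_neg,
          abs_of_nonneg (intervalIntegral.integral_nonneg hzy (fun t _ => abs_nonneg _))]
        exact intervalIntegral.integral_mono_interval hy.1 hzy hzmem.2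
          (Filter.Eventually.of_forall fun t => abs_nonneg _) (habs.intervalIntegrable _ _)
    rw [h1]
    exact h2.trans (h3.trans_eq h4)
  calc ∫ y in Ioo (0:ℝ) 1, (f y) ^ 2
      ≤ ∫ _y in Ioo (0:ℝ) 1, M ^ 2 := by
        apply setIntegral_mono_on (intOn01 (hfc.pow 2))
          (integrableOn_const (by simp [Real.volume_Ioo])) measurableSet_Ioo
        intro y hy
        have hky := key y (Ioo_subset_Icc_self hy)
        calc (f y) ^ 2 = |f y| ^ 2 := (sq_abs _).symm
          _ ≤ M ^ 2 := by nlinarith [abs_nonneg (f y)]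
    _ = M ^ 2 := by rw [setIntegral_const]; simp [vol01]
    _ ≤ ∫ t in Ioo (0:ℝ) 1, |f' t| ^ 2 := cs01 habs
    _ = ∫ t in Ioo (0:ℝ) 1, (f' t) ^ 2 := by simp [sq_abs]

end PoincareAux

open PoincareAux

set_option maxHeartbeats 2000000 in
/-- Poincaré inequality on the strip `Ω = ℝ×(0,1)`: there is `C > 0` with
`‖u‖_{L²(Ω)} ≤ C ‖∂_y u‖_{L²(Ω)}` for all divergence-free `u ∈ H¹(Ω;ℝ²)` with
`u²(x,0)=u²(x,1)=0`. -/
theorem poincare_strip :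
    ∃ C > 0, ∀ (u : ℝ × ℝ → ℝ × ℝ),
      ContDiff ℝ 1 u →
      (∀ p : ℝ × ℝ, dx (fun q => (u q).1) p + dy (fun q => (u q).2) p = 0) →
      (∀ x : ℝ, (u (x, 0)).2 = 0 ∧ (u (x, 1)).2 = 0) →
      IntegrableOn (fun p => ‖u p‖ ^ 2) strip →
      IntegrableOn (fun p => ‖fderiv ℝ u p (0, 1)‖ ^ 2) strip →
      (∫ p in strip, ‖u p‖ ^ 2) ^ ((1 : ℝ) / 2) ≤
        C * (∫ p in strip, ‖fderiv ℝ u p (0, 1)‖ ^ 2) ^ ((1 : ℝ) / 2) := by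
  refine ⟨2, by norm_num, ?_⟩
  intro u hu hdiv hbc hIu hId
  have hud : Differentiable ℝ u := hu.differentiable one_ne_zero
  have hucont : Continuous u := hu.continuous
  have hDcont : Continuous (fderiv ℝ u) := hu.continuous_fderiv one_ne_zero
  have hD01 : Continuous fun p : ℝ × ℝ => fderiv ℝ u p (0, 1) :=
    hDcont.clm_apply continuous_const
  have hD10 : Continuous fun p : ℝ × ℝ => fderiv ℝ u p (1, 0) :=
    hDcont.clm_apply continuous_const
  -- vertical and horizontal derivatives of components
  have hvert : ∀ x y : ℝ, HasDerivAt (fun t => u (x, t)) (fderiv ℝ u (x, y) (0, 1)) y := by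
    intro x y
    have h1 : HasDerivAt (fun t : ℝ => ((x : ℝ), t)) ((0 : ℝ), (1 : ℝ)) y :=
      (hasDerivAt_const y x).prodMk (hasDerivAt_id y)
    simpa [Function.comp_def] using (hud (x, y)).hasFDerivAt.comp_hasDerivAt y h1
  have hhor : ∀ x y : ℝ, HasDerivAt (fun t => u (t, y)) (fderiv ℝ u (x, y) (1, 0)) x := by
    intro x y
    have h1 : HasDerivAt (fun t : ℝ => (t, (y : ℝ))) ((1 : ℝ), (0 : ℝ)) x :=
      (hasDerivAt_id x).prodMk (hasDerivAt_const x y)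
    simpa [Function.comp_def] using (hud (x, y)).hasFDerivAt.comp_hasDerivAt x h1
  have hvert1 : ∀ x y : ℝ,
      HasDerivAt (fun t => (u (x, t)).1) ((fderiv ℝ u (x, y) (0, 1)).1) y := by
    intro x y
    simpa [Function.comp_def] using
      (ContinuousLinearMap.fst ℝ ℝ ℝ).hasFDerivAt.comp_hasDerivAt y (hvert x y)
  have hvert2 : ∀ x y : ℝ,
      HasDerivAt (fun t => (u (x, t)).2) ((fderiv ℝ u (x, y) (0, 1)).2) y := by
    intro x y
    simpa [Function.comp_def] using
      (ContinuousLinearMap.snd ℝ ℝ ℝ).hasFDerivAt.comp_hasDerivAt y (hvert x y)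
  have hhor1 : ∀ x y : ℝ,
      HasDerivAt (fun t => (u (t, y)).1) ((fderiv ℝ u (x, y) (1, 0)).1) x := by
    intro x y
    simpa [Function.comp_def] using
      (ContinuousLinearMap.fst ℝ ℝ ℝ).hasFDerivAt.comp_hasDerivAt x (hhor x y)
  -- the divergence-free condition, rewritten
  have hdiv' : ∀ p : ℝ × ℝ, (fderiv ℝ u p (1, 0)).1 = -(fderiv ℝ u p (0, 1)).2 := by
    intro p
    have h1 : dx (fun q => (u q).1) p = (fderiv ℝ u p (1, 0)).1 := by
      rw [dx, ((hud p).hasFDerivAt.fst).fderiv]; rfl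
    have h2 : dy (fun q => (u q).2) p = (fderiv ℝ u p (0, 1)).2 := by
      rw [dy, ((hud p).hasFDerivAt.snd).fderiv]; rfl
    have h3 := hdiv p
    rw [h1, h2] at h3
    linarith
  -- measure-theoretic setup
  have hmeas_strip : MeasurableSet strip := MeasurableSet.univ.prod measurableSet_Ioo
  have hstrip : (volume : Measure (ℝ × ℝ)).restrict strip
      = (volume : Measure ℝ).prod (volume.restrict (Ioo (0:ℝ) 1)) := by
    rw [strip, Measure.volume_eq_prod, ← Measure.prod_restrict, Measure.restrict_univ]
  have hIu' : Integrable (fun p => ‖u p‖ ^ 2)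
      ((volume : Measure ℝ).prod (volume.restrict (Ioo (0:ℝ) 1))) := by
    rw [← hstrip]; exact hIu
  have hId' : Integrable (fun p => ‖fderiv ℝ u p (0, 1)‖ ^ 2)
      ((volume : Measure ℝ).prod (volume.restrict (Ioo (0:ℝ) 1))) := by
    rw [← hstrip]; exact hId
  have hsplit : ∀ G : ℝ × ℝ → ℝ,
      Integrable G ((volume : Measure ℝ).prod (volume.restrict (Ioo (0:ℝ) 1))) →
      ∫ p in strip, G p = ∫ x : ℝ, ∫ y in Ioo (0:ℝ) 1, G (x, y) := by
    intro G hG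
    calc ∫ p in strip, G p
        = ∫ p, G p ∂((volume : Measure ℝ).prod (volume.restrict (Ioo (0:ℝ) 1))) := by
          rw [← hstrip]
      _ = ∫ x : ℝ, ∫ y in Ioo (0:ℝ) 1, G (x, y) := integral_prod G hG
  -- slice continuity facts
  have hcu1 : ∀ x : ℝ, Continuous fun y => (u (x, y)).1 :=
    fun x => (hucont.comp (continuous_const.prodMk continuous_id)).fst
  have hcu2 : ∀ x : ℝ, Continuous fun y => (u (x, y)).2 :=
    fun x => (hucont.comp (continuous_const.prodMk continuous_id)).snd
  have hcD1 : ∀ x : ℝ, Continuous fun y => (fderiv ℝ u (x, y) (0, 1)).1 :=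
    fun x => (hD01.comp (continuous_const.prodMk continuous_id)).fst
  have hcD2 : ∀ x : ℝ, Continuous fun y => (fderiv ℝ u (x, y) (0, 1)).2 :=
    fun x => (hD01.comp (continuous_const.prodMk continuous_id)).snd
  -- FTC in the vertical direction
  have ftcy : ∀ x : ℝ, ∫ y in Ioo (0:ℝ) 1, (fderiv ℝ u (x, y) (0, 1)).2 = 0 := by
    intro x
    have h1 : ∫ y in (0:ℝ)..1, (fderiv ℝ u (x, y) (0, 1)).2 = (u (x, 1)).2 - (u (x, 0)).2 :=
      intervalIntegral.integral_eq_sub_of_hasDerivAt (fun y _ => hvert2 x y)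
        ((hcD2 x).intervalIntegrable _ _)
    rw [(hbc x).1, (hbc x).2, sub_zero] at h1
    rw [← integral_Ioc_eq_integral_Ioo, ← intervalIntegral.integral_of_le zero_le_one, h1]
  -- the vertical average of u¹ is constant
  set v : ℝ → ℝ := fun x => ∫ y in Ioo (0:ℝ) 1, (u (x, y)).1 with hv
  have hvconst : ∀ x₁ x₂ : ℝ, v x₁ = v x₂ := by
    have main : ∀ x₁ x₂ : ℝ, x₁ ≤ x₂ → v x₁ = v x₂ := by
      intro x₁ x₂ h12
      set a : ℝ × ℝ → ℝ := fun p => (fderiv ℝ u p (1, 0)).1 with ha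
      have hacont : Continuous a := hD10.fst
      have ftcx : ∀ y : ℝ, ∫ x in x₁..x₂, a (x, y) = (u (x₂, y)).1 - (u (x₁, y)).1 := by
        intro y
        exact intervalIntegral.integral_eq_sub_of_hasDerivAt (fun x _ => hhor1 x y)
          ((hacont.comp (continuous_id.prodMk continuous_const)).intervalIntegrable _ _)
      have hswap : ∫ y in Ioo (0:ℝ) 1, ∫ x in Ioc x₁ x₂, a (x, y)
          = ∫ x in Ioc x₁ x₂, ∫ y in Ioo (0:ℝ) 1, a (x, y) := by
        have hint : Integrable (Function.uncurry fun y x => a (x, y))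
            ((volume.restrict (Ioo (0:ℝ) 1)).prod (volume.restrict (Ioc x₁ x₂))) := by
          rw [Measure.prod_restrict, ← Measure.volume_eq_prod]
          refine (ContinuousOn.integrableOn_compact (isCompact_Icc.prod isCompact_Icc)
            (Continuous.continuousOn ?_)).mono_set
            (prod_mono Ioo_subset_Icc_self Ioc_subset_Icc_self)
          exact hacont.comp (continuous_snd.prodMk continuous_fst)
        exact integral_integral_swap hint
      have e4 : ∀ x : ℝ, ∫ y in Ioo (0:ℝ) 1, a (x, y) = 0 := by
        intro x
        have heq : ∀ y ∈ Ioo (0:ℝ) 1, a (x, y) = -(fderiv ℝ u (x, y) (0, 1)).2 :=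
          fun y _ => hdiv' (x, y)
        rw [setIntegral_congr_fun measurableSet_Ioo heq, integral_neg, ftcy x, neg_zero]
      have e1 : v x₂ - v x₁ = ∫ y in Ioo (0:ℝ) 1, ((u (x₂, y)).1 - (u (x₁, y)).1) :=
        (integral_sub (intOn01 (hcu1 x₂)) (intOn01 (hcu1 x₁))).symm
      have e2 : ∫ y in Ioo (0:ℝ) 1, ((u (x₂, y)).1 - (u (x₁, y)).1)
          = ∫ y in Ioo (0:ℝ) 1, ∫ x in Ioc x₁ x₂, a (x, y) := by
        refine setIntegral_congr_fun measurableSet_Ioo fun y _ => ?_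
        rw [← ftcx y, intervalIntegral.integral_of_le h12]
      have e5 : ∫ x in Ioc x₁ x₂, ∫ y in Ioo (0:ℝ) 1, a (x, y) = 0 := by
        rw [setIntegral_congr_fun measurableSet_Ioc fun x _ => e4 x]
        simp
      have e6 : v x₂ - v x₁ = 0 := by rw [e1, e2, hswap, e5]
      linarith
    intro x₁ x₂
    rcases le_total x₁ x₂ with h | h
    exacts [main _ _ h, (main _ _ h).symm]
  -- v vanishes identically
  have hWint : Integrable (fun x => ∫ y in Ioo (0:ℝ) 1, ‖u (x, y)‖ ^ 2) volume :=
    hIu'.integral_prod_left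
  have hv0 : ∀ x : ℝ, v x = 0 := by
    have hle : ∀ x : ℝ, (v 0) ^ 2 ≤ ∫ y in Ioo (0:ℝ) 1, ‖u (x, y)‖ ^ 2 := by
      intro x
      have h1 : (v x) ^ 2 ≤ ∫ y in Ioo (0:ℝ) 1, ((u (x, y)).1) ^ 2 := cs01 (hcu1 x)
      have h2 : ∫ y in Ioo (0:ℝ) 1, ((u (x, y)).1) ^ 2
          ≤ ∫ y in Ioo (0:ℝ) 1, ‖u (x, y)‖ ^ 2 := by
        refine setIntegral_mono_on (intOn01 ((hcu1 x).pow 2))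
          (intOn01 (((hucont.comp (continuous_const.prodMk continuous_id)).norm).pow 2))
          measurableSet_Ioo fun y _ => ?_
        have hle1 := norm_fst_le (u (x, y))
        have e1 : ((u (x, y)).1) ^ 2 = ‖(u (x, y)).1‖ ^ 2 := by
          rw [Real.norm_eq_abs, sq_abs]
        nlinarith [norm_nonneg (u (x, y)).1]
      rw [hvconst 0 x]
      exact h1.trans h2
    have hconst_int : Integrable (fun _ : ℝ => (v 0) ^ 2) volume := by
      refine Integrable.mono' hWint aestronglyMeasurable_const ?_
      filter_upwards with x
      rw [Real.norm_eq_abs, abs_of_nonneg (sq_nonneg _)]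
      exact hle x
    have hsq : (v 0) ^ 2 = 0 := by
      rcases integrable_const_iff.1 hconst_int with h | h
      · exact h
      · simp [isFiniteMeasure_iff, Real.volume_univ] at h
    have hv00 : v 0 = 0 := pow_eq_zero_iff two_ne_zero |>.1 hsq
    intro x
    exact (hvconst x 0).trans hv00
  -- the per-slice Poincaré inequality
  have hPQ : ∀ x : ℝ,
      (∫ y in Ioo (0:ℝ) 1, (((u (x, y)).1) ^ 2 + ((u (x, y)).2) ^ 2))
      ≤ ∫ y in Ioo (0:ℝ) 1,
          (((fderiv ℝ u (x, y) (0, 1)).1) ^ 2 + ((fderiv ℝ u (x, y) (0, 1)).2) ^ 2) := by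
    intro x
    have p1 : ∫ y in Ioo (0:ℝ) 1, ((u (x, y)).1) ^ 2
        ≤ ∫ y in Ioo (0:ℝ) 1, ((fderiv ℝ u (x, y) (0, 1)).1) ^ 2 :=
      poincare1D (hvert1 x) (hcD1 x) (exists_zero_01 (hcu1 x) (hv0 x))
    have p2 : ∫ y in Ioo (0:ℝ) 1, ((u (x, y)).2) ^ 2
        ≤ ∫ y in Ioo (0:ℝ) 1, ((fderiv ℝ u (x, y) (0, 1)).2) ^ 2 :=
      poincare1D (hvert2 x) (hcD2 x) ⟨0, by norm_num, (hbc x).1⟩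
    rw [integral_add (f := fun y => ((u (x, y)).1) ^ 2) (g := fun y => ((u (x, y)).2) ^ 2) (intOn01 ((hcu1 x).pow 2)) (intOn01 ((hcu2 x).pow 2)),
      integral_add (f := fun y => ((fderiv ℝ u (x, y) (0, 1)).1) ^ 2) (g := fun y => ((fderiv ℝ u (x, y) (0, 1)).2) ^ 2) (intOn01 ((hcD1 x).pow 2)) (intOn01 ((hcD2 x).pow 2))]
    exact add_le_add p1 p2
  -- assembling the two-dimensional estimate
  set A := ∫ p in strip, ‖u p‖ ^ 2 with hA
  set B := ∫ p in strip, ‖fderiv ℝ u p (0, 1)‖ ^ 2 with hB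
  have hA0 : 0 ≤ A := setIntegral_nonneg hmeas_strip fun p _ => sq_nonneg _
  have hB0 : 0 ≤ B := setIntegral_nonneg hmeas_strip fun p _ => sq_nonneg _
  have hnormsq : ∀ w : ℝ × ℝ, ‖w‖ ^ 2 ≤ w.1 ^ 2 + w.2 ^ 2 := by
    intro w
    rw [Prod.norm_def, Real.norm_eq_abs, Real.norm_eq_abs]
    rcases max_cases |w.1| |w.2| with ⟨h1, _⟩ | ⟨h1, _⟩ <;> rw [h1] <;>
      nlinarith [sq_abs w.1, sq_abs w.2, sq_nonneg w.1, sq_nonneg w.2]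
  have hcompsq : ∀ w : ℝ × ℝ, w.1 ^ 2 + w.2 ^ 2 ≤ 2 * ‖w‖ ^ 2 := by
    intro w
    have h1 := norm_fst_le w
    have h2 := norm_snd_le w
    have e1 : w.1 ^ 2 = ‖w.1‖ ^ 2 := by rw [Real.norm_eq_abs, sq_abs]
    have e2 : w.2 ^ 2 = ‖w.2‖ ^ 2 := by rw [Real.norm_eq_abs, sq_abs]
    nlinarith [norm_nonneg w.1, norm_nonneg w.2]
  have hsum_cont : Continuous fun p : ℝ × ℝ => ((u p).1) ^ 2 + ((u p).2) ^ 2 :=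
    ((hucont.fst).pow 2).add ((hucont.snd).pow 2)
  have hsum_int : Integrable (fun p : ℝ × ℝ => ((u p).1) ^ 2 + ((u p).2) ^ 2)
      ((volume : Measure ℝ).prod (volume.restrict (Ioo (0:ℝ) 1))) := by
    refine Integrable.mono' (hIu'.const_mul 2) hsum_cont.aestronglyMeasurable ?_
    filter_upwards with p
    rw [Real.norm_eq_abs, abs_of_nonneg (by positivity)]
    exact hcompsq (u p)
  have hDsum_cont : Continuous fun p : ℝ × ℝ =>
      ((fderiv ℝ u p (0, 1)).1) ^ 2 + ((fderiv ℝ u p (0, 1)).2) ^ 2 :=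
    ((hD01.fst).pow 2).add ((hD01.snd).pow 2)
  have key : A ≤ 2 * B := by
    have step1 : A ≤ ∫ p in strip, (((u p).1) ^ 2 + ((u p).2) ^ 2) := by
      refine setIntegral_mono_on hIu ?_ hmeas_strip fun p _ => hnormsq (u p)
      rw [IntegrableOn, hstrip]; exact hsum_int
    have step2 : ∫ p in strip, (((u p).1) ^ 2 + ((u p).2) ^ 2)
        = ∫ x : ℝ, ∫ y in Ioo (0:ℝ) 1, (((u (x, y)).1) ^ 2 + ((u (x, y)).2) ^ 2) :=
      hsplit _ hsum_int
    set Q : ℝ → ℝ := fun x => ∫ y in Ioo (0:ℝ) 1,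
      (((fderiv ℝ u (x, y) (0, 1)).1) ^ 2 + ((fderiv ℝ u (x, y) (0, 1)).2) ^ 2) with hQ
    set R : ℝ → ℝ := fun x => ∫ y in Ioo (0:ℝ) 1, ‖fderiv ℝ u (x, y) (0, 1)‖ ^ 2 with hR
    have hRint : Integrable R volume := hId'.integral_prod_left
    have hQnonneg : ∀ x, 0 ≤ Q x :=
      fun x => setIntegral_nonneg measurableSet_Ioo fun y _ => by positivity
    have hQleR : ∀ x : ℝ, Q x ≤ 2 * R x := by
      intro x
      rw [hR, ← integral_const_mul]
      refine setIntegral_mono_on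
        (intOn01 (hDsum_cont.comp (continuous_const.prodMk continuous_id)))
        (intOn01 (continuous_const.mul (((hD01.comp
          (continuous_const.prodMk continuous_id)).norm).pow 2)))
        measurableSet_Ioo fun y _ => hcompsq _
    have hQmeas : AEStronglyMeasurable Q volume :=
      (hDsum_cont.aestronglyMeasurable
        (μ := (volume : Measure ℝ).prod (volume.restrict (Ioo (0:ℝ) 1)))).integral_prod_right'
    have hQint : Integrable Q volume := by
      refine Integrable.mono' (hRint.const_mul 2) hQmeas ?_
      filter_upwards with x
      rw [Real.norm_eq_abs, abs_of_nonneg (hQnonneg x)]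
      exact hQleR x
    have step3 : ∫ x : ℝ, ∫ y in Ioo (0:ℝ) 1, (((u (x, y)).1) ^ 2 + ((u (x, y)).2) ^ 2)
        ≤ ∫ x : ℝ, Q x := by
      refine integral_mono_of_nonneg ?_ hQint ?_
      · filter_upwards with x
        exact setIntegral_nonneg measurableSet_Ioo fun y _ => by positivity
      · filter_upwards with x
        exact hPQ x
    have step4 : ∫ x : ℝ, Q x ≤ ∫ x : ℝ, 2 * R x := by
      refine integral_mono_of_nonneg ?_ (hRint.const_mul 2) ?_
      · filter_upwards with x; exact hQnonneg x
      · filter_upwards with x; exact hQleR x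
    have step5 : ∫ x : ℝ, 2 * R x = 2 * B := by
      rw [integral_const_mul, hB, hsplit _ hId']
    linarith
  -- conclude with rpow manipulations
  have h2B : A ^ ((1:ℝ)/2) ≤ (2 * B) ^ ((1:ℝ)/2) :=
    Real.rpow_le_rpow hA0 key (by norm_num)
  have hmul : (2 * B) ^ ((1:ℝ)/2) = 2 ^ ((1:ℝ)/2) * B ^ ((1:ℝ)/2) :=
    Real.mul_rpow (by norm_num) hB0
  have hsqrt2 : (2:ℝ) ^ ((1:ℝ)/2) ≤ 2 := by
    rw [← Real.sqrt_eq_rpow]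
    nlinarith [Real.sq_sqrt (by norm_num : (0:ℝ) ≤ 2), Real.sqrt_nonneg 2]
  have hBr : 0 ≤ B ^ ((1:ℝ)/2) := Real.rpow_nonneg hB0 _
  calc A ^ ((1:ℝ)/2) ≤ 2 ^ ((1:ℝ)/2) * B ^ ((1:ℝ)/2) := by rw [← hmul]; exact h2B
    _ ≤ 2 * B ^ ((1:ℝ)/2) := by nlinarith
end

section
/- There exists a constant C > 0, independent of L ≥ 1, such that for every u ∈ H^2((-L,L)×(0,1); ℝ²) that is divergence free, satisfies u·n=0 on ∂Ω_L, and satisfies the Navier-slip boundary conditions μ ∂_y u¹(x,0) = −k₀ u¹(x,0), μ ∂_y u¹(x,1) = k₁ u¹(x,1), ∂_x u²(±L,y) = 0, one has ‖u‖_{L^4(Ω_L)}² ≤ C ‖u‖_{L^2(Ω_L)} ‖∇u‖_{L^2(Ω_L)}, where C depends only on μ, k₀, k₁. -/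
open MeasureTheory Set

namespace UniformL4Aux

lemma finIoo (a b : ℝ) : IsFiniteMeasure (volume.restrict (Ioo a b)) := by
  constructor; rw [Measure.restrict_apply_univ]; exact measure_Ioo_lt_top

lemma rect_subset (L : ℝ) : rect L ⊆ Icc (-L) L ×ˢ Icc (0:ℝ) 1 :=
  prod_mono Ioo_subset_Icc_self Ioo_subset_Icc_self

lemma compactRect (L : ℝ) : IsCompact (Icc (-L) L ×ˢ Icc (0:ℝ) 1) :=
  isCompact_Icc.prod isCompact_Icc

lemma finRect (L : ℝ) : IsFiniteMeasure (volume.restrict (rect L)) := by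
  constructor
  rw [Measure.restrict_apply_univ]
  exact lt_of_le_of_lt (measure_mono (rect_subset L)) (compactRect L).measure_lt_top

lemma measurableRect (L : ℝ) : MeasurableSet (rect L) :=
  measurableSet_Ioo.prod measurableSet_Ioo

lemma intOnRect {F : ℝ × ℝ → ℝ} (h : Continuous F) (L : ℝ) : IntegrableOn F (rect L) :=
  (h.continuousOn.integrableOn_compact (compactRect L)).mono_set (rect_subset L)

lemma intOnIoo {ψ : ℝ → ℝ} (h : Continuous ψ) (a b : ℝ) : IntegrableOn ψ (Ioo a b) :=
  (h.integrableOn_Icc).mono_set Ioo_subset_Icc_self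

lemma memL2Ioo {ψ : ℝ → ℝ} (h : Continuous ψ) (a b : ℝ) :
    MemLp ψ 2 (volume.restrict (Ioo a b)) := by
  haveI := finIoo a b
  obtain ⟨C, hC⟩ := (isCompact_Icc (a := a) (b := b)).exists_bound_of_continuousOn
    h.continuousOn
  refine MemLp.of_bound (h.aestronglyMeasurable.restrict) C ?_
  filter_upwards [ae_restrict_mem measurableSet_Ioo] with x hx
  exact hC x (Ioo_subset_Icc_self hx)

lemma memL2Rect {F : ℝ × ℝ → ℝ} (h : Continuous F) (L : ℝ) :
    MemLp F 2 (volume.restrict (rect L)) := by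
  haveI := finRect L
  obtain ⟨C, hC⟩ := (compactRect L).exists_bound_of_continuousOn h.continuousOn
  refine MemLp.of_bound (h.aestronglyMeasurable.restrict) C ?_
  filter_upwards [ae_restrict_mem (measurableRect L)] with p hp
  exact hC p (rect_subset L hp)

lemma prodIntegrable {F : ℝ × ℝ → ℝ} (hF : Continuous F) (L : ℝ) {a b : ℝ} :
    Integrable F (((volume : Measure ℝ).restrict (Ioo a b)).prod
      ((volume : Measure ℝ).restrict (Ioo (0:ℝ) 1))) := by
  rw [Measure.prod_restrict, ← Measure.volume_eq_prod _ _]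
  exact (hF.continuousOn.integrableOn_compact
    (isCompact_Icc.prod isCompact_Icc)).mono_set
    (prod_mono Ioo_subset_Icc_self Ioo_subset_Icc_self)

lemma rect_fubini {F : ℝ × ℝ → ℝ} (h : Continuous F) (L : ℝ) :
    ∫ p in rect L, F p = ∫ x in Ioo (-L) L, ∫ y in Ioo (0:ℝ) 1, F (x, y) := by
  rw [show (volume : Measure (ℝ × ℝ)) = (volume : Measure ℝ).prod volume from
    Measure.volume_eq_prod _ _, show rect L = Ioo (-L) L ×ˢ Ioo (0:ℝ) 1 from rfl]
  refine setIntegral_prod F ?_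
  rw [← Measure.volume_eq_prod _ _]
  exact intOnRect h L

lemma swap_fubini {F : ℝ × ℝ → ℝ} (hF : Continuous F) (L : ℝ) :
    ∫ y in Ioo (0:ℝ) 1, ∫ x in Ioo (-L) L, F (x, y) = ∫ p in rect L, F p := by
  have hint : Integrable (Function.uncurry fun y x => F (x, y))
      (((volume : Measure ℝ).restrict (Ioo (0:ℝ) 1)).prod
        ((volume : Measure ℝ).restrict (Ioo (-L) L))) := by
    rw [Measure.prod_restrict, ← Measure.volume_eq_prod _ _]
    exact ((hF.comp (continuous_snd.prodMk continuous_fst)).continuousOn.integrableOn_compact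
      (isCompact_Icc.prod isCompact_Icc)).mono_set
      (prod_mono Ioo_subset_Icc_self Ioo_subset_Icc_self)
  rw [integral_integral_swap hint, rect_fubini hF L]

lemma marg_left {F : ℝ × ℝ → ℝ} (hF : Continuous F) (L : ℝ) :
    IntegrableOn (fun x => ∫ t in Ioo (0:ℝ) 1, F (x, t)) (Ioo (-L) L) :=
  (prodIntegrable hF L).integral_prod_left

lemma marg_right {F : ℝ × ℝ → ℝ} (hF : Continuous F) (L : ℝ) :
    IntegrableOn (fun y => ∫ s in Ioo (-L) L, F (s, y)) (Ioo (0:ℝ) 1) :=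
  (prodIntegrable hF L).integral_prod_right

lemma hasDerivAt_vert {g : ℝ × ℝ → ℝ} (hg : Differentiable ℝ g) (x t : ℝ) :
    HasDerivAt (fun s => g (x, s)) (dy g (x, t)) t :=
  (hg (x, t)).hasFDerivAt.comp_hasDerivAt t
    ((hasDerivAt_const t x).prodMk (hasDerivAt_id t))

lemma hasDerivAt_horiz {g : ℝ × ℝ → ℝ} (hg : Differentiable ℝ g) (x t : ℝ) :
    HasDerivAt (fun s => g (s, t)) (dx g (x, t)) x :=
  (hg (x, t)).hasFDerivAt.comp_hasDerivAt x
    ((hasDerivAt_id x).prodMk (hasDerivAt_const x t))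

lemma cont_dy {g : ℝ × ℝ → ℝ} (hg : ContDiff ℝ 2 g) : Continuous (dy g) :=
  (hg.continuous_fderiv two_ne_zero).clm_apply continuous_const

lemma cont_dx {g : ℝ × ℝ → ℝ} (hg : ContDiff ℝ 2 g) : Continuous (dx g) :=
  (hg.continuous_fderiv two_ne_zero).clm_apply continuous_const

lemma abs_intervalIntegral_le {ψ : ℝ → ℝ} {a b t y : ℝ} (hψ : Continuous ψ)
    (ht : t ∈ Ico a b) (hy : y ∈ Ico a b) :
    |∫ s in t..y, ψ s| ≤ ∫ s in Ioo a b, |ψ s| := by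
  have hint : IntegrableOn (fun s => |ψ s|) (Ioo a b) := intOnIoo hψ.abs a b
  have key : ∀ c d : ℝ, c ≤ d → c ∈ Ico a b → d ∈ Ico a b →
      |∫ s in c..d, ψ s| ≤ ∫ s in Ioo a b, |ψ s| := by
    intro c d hcd hc hd
    rw [intervalIntegral.integral_of_le hcd]
    calc |∫ s in Ioc c d, ψ s| ≤ ∫ s in Ioc c d, |ψ s| :=
          norm_integral_le_integral_norm ψ
      _ ≤ ∫ s in Ioo a b, |ψ s| := by
          apply setIntegral_mono_set hint
            (Filter.Eventually.of_forall fun s => abs_nonneg _)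
          exact HasSubset.Subset.eventuallyLE fun s hs =>
            ⟨lt_of_le_of_lt hc.1 hs.1, lt_of_le_of_lt hs.2 hd.2⟩
  rcases le_total t y with hty | hty
  · exact key t y hty ht hy
  · rw [intervalIntegral.integral_symm, abs_neg]
    exact key y t hty hy ht

lemma sq_ftc {φ ψ : ℝ → ℝ} (hφψ : ∀ s, HasDerivAt φ (ψ s) s) (hψc : Continuous ψ)
    {a b t y : ℝ} (ht : t ∈ Ico a b) (hy : y ∈ Ico a b) :
    φ y ^ 2 ≤ φ t ^ 2 + ∫ s in Ioo a b, 2 * |φ s| * |ψ s| := by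
  have hφc : Continuous φ := by
    rw [continuous_iff_continuousAt]; exact fun s => (hφψ s).continuousAt
  have hder : ∀ s : ℝ, HasDerivAt (fun r => φ r ^ 2) (2 * φ s * ψ s) s := by
    intro s
    have := (hφψ s).fun_pow 2
    simpa [mul_comm, mul_assoc, mul_left_comm] using this
  have h := intervalIntegral.integral_eq_sub_of_hasDerivAt
    (f := fun r => φ r ^ 2) (f' := fun s => 2 * φ s * ψ s) (a := t) (b := y)
    (fun s _ => hder s)
    (((continuous_const.mul hφc).mul hψc).intervalIntegrable t y)
  beta_reduce at h
  have h2 : |∫ s in t..y, 2 * φ s * ψ s| ≤ ∫ s in Ioo a b, 2 * |φ s| * |ψ s| := by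
    have := abs_intervalIntegral_le (ψ := fun s => 2 * φ s * ψ s)
      ((continuous_const.mul hφc).mul hψc) ht hy
    calc |∫ s in t..y, 2 * φ s * ψ s| ≤ ∫ s in Ioo a b, |2 * φ s * ψ s| := this
      _ = ∫ s in Ioo a b, 2 * |φ s| * |ψ s| := by
          congr 1; funext s; rw [abs_mul, abs_mul, abs_two]
  have := abs_le.mp h2
  linarith [h ▸ this.2, this.1]

lemma cs_general {α : Type*} [MeasurableSpace α] {μ : Measure α} [IsFiniteMeasure μ]
    {f g : α → ℝ} (hf : MemLp f 2 μ) (hg : MemLp g 2 μ) :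
    ∫ a, |f a| * |g a| ∂μ ≤
      Real.sqrt (∫ a, f a ^ 2 ∂μ) * Real.sqrt (∫ a, g a ^ 2 ∂μ) := by
  have hpq : Real.HolderConjugate 2 2 := Real.HolderConjugate.two_two
  have h := integral_mul_le_Lp_mul_Lq_of_nonneg (μ := μ) hpq
    (f := fun a => |f a|) (g := fun a => |g a|)
    (Filter.Eventually.of_forall fun a => abs_nonneg _)
    (Filter.Eventually.of_forall fun a => abs_nonneg _)
    (by rw [show ENNReal.ofReal 2 = 2 by norm_num]; exact hf.abs)
    (by rw [show ENNReal.ofReal 2 = 2 by norm_num]; exact hg.abs)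
  calc ∫ a, |f a| * |g a| ∂μ ≤
      (∫ a, |f a| ^ (2:ℝ) ∂μ) ^ ((1:ℝ) / 2) * (∫ a, |g a| ^ (2:ℝ) ∂μ) ^ ((1:ℝ) / 2) := h
    _ = _ := by
        rw [Real.sqrt_eq_rpow, Real.sqrt_eq_rpow]
        congr 2
        · apply integral_congr_ae; filter_upwards with a
          rw [show ((2:ℝ)) = ((2:ℕ):ℝ) by norm_num, Real.rpow_natCast, sq_abs]
        · apply integral_congr_ae; filter_upwards with a
          rw [show ((2:ℝ)) = ((2:ℕ):ℝ) by norm_num, Real.rpow_natCast, sq_abs]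

lemma sq_int {ψ : ℝ → ℝ} (hψ : Continuous ψ) :
    (∫ t in Ioo (0:ℝ) 1, |ψ t|) ^ 2 ≤ ∫ t in Ioo (0:ℝ) 1, ψ t ^ 2 := by
  haveI := finIoo (0:ℝ) 1
  have h := cs_general (memL2Ioo hψ 0 1) (memL2Ioo continuous_const (0:ℝ) 1 (ψ := fun _ => 1))
  simp only [abs_one, mul_one, one_pow] at h
  rw [setIntegral_const, Real.volume_real_Ioo] at h
  norm_num at h
  have h1 : (0:ℝ) ≤ ∫ t in Ioo (0:ℝ) 1, ψ t ^ 2 :=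
    integral_nonneg fun t => sq_nonneg _
  have h2 : (∫ t in Ioo (0:ℝ) 1, |ψ t|) ^ 2 ≤
      (Real.sqrt (∫ t in Ioo (0:ℝ) 1, ψ t ^ 2)) ^ 2 :=
    pow_le_pow_left₀ (integral_nonneg fun t => abs_nonneg _) h 2
  rwa [Real.sq_sqrt h1] at h2

lemma ftc_vert {g : ℝ × ℝ → ℝ} (hg : Differentiable ℝ g)
    (hc : Continuous (dy g)) (s : ℝ) :
    ∫ t in Ioo (0:ℝ) 1, dy g (s, t) = g (s, 1) - g (s, 0) := by
  have h := intervalIntegral.integral_eq_sub_of_hasDerivAt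
    (f := fun t => g (s, t)) (f' := fun t => dy g (s, t)) (a := (0:ℝ)) (b := 1)
    (fun t _ => hasDerivAt_vert hg s t)
    ((hc.comp (continuous_const.prodMk continuous_id)).intervalIntegrable 0 1)
  rw [intervalIntegral.integral_of_le zero_le_one, integral_Ioc_eq_integral_Ioo] at h
  exact h

lemma mean_zero {f g : ℝ × ℝ → ℝ} {L : ℝ}
    (hfd : Differentiable ℝ f) (hgd : Differentiable ℝ g)
    (hfxc : Continuous (dx f)) (hgyc : Continuous (dy g))
    (hdiv : ∀ p, dx f p + dy g p = 0)
    (hfL : ∀ t ∈ Icc (0:ℝ) 1, f (L, t) = 0)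
    (hg01 : ∀ s ∈ Icc (-L) L, g (s, 0) = 0 ∧ g (s, 1) = 0)
    {x : ℝ} (hx : x ∈ Ioo (-L) L) :
    ∫ t in Ioo (0:ℝ) 1, f (x, t) = 0 := by
  have hxL : x ≤ L := le_of_lt hx.2
  have step1 : ∀ t ∈ Ioo (0:ℝ) 1,
      f (x, t) = -∫ s in Ioo x L, dx f (s, t) := by
    intro t ht
    have h := intervalIntegral.integral_eq_sub_of_hasDerivAt
      (f := fun s => f (s, t)) (f' := fun s => dx f (s, t)) (a := x) (b := L)
      (fun s _ => hasDerivAt_horiz hfd s t)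
      ((hfxc.comp (continuous_id.prodMk continuous_const)).intervalIntegrable x L)
    rw [intervalIntegral.integral_of_le hxL, integral_Ioc_eq_integral_Ioo] at h
    beta_reduce at h
    rw [hfL t (Ioo_subset_Icc_self ht)] at h
    linarith [h]
  rw [setIntegral_congr_fun measurableSet_Ioo step1, integral_neg, neg_eq_zero]
  have hcont : Continuous (fun p : ℝ × ℝ => dx f (p.2, p.1)) :=
    hfxc.comp (continuous_snd.prodMk continuous_fst)
  have hint : Integrable (Function.uncurry fun t s => dx f (s, t))
      ((volume.restrict (Ioo (0:ℝ) 1)).prod (volume.restrict (Ioo x L))) := by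
    rw [Measure.prod_restrict, ← Measure.volume_eq_prod _ _]
    exact (hcont.continuousOn.integrableOn_compact
      (isCompact_Icc.prod isCompact_Icc)).mono_set
      (prod_mono Ioo_subset_Icc_self Ioo_subset_Icc_self)
  rw [integral_integral_swap hint]
  have inner0 : ∀ s ∈ Ioo x L, (∫ t in Ioo (0:ℝ) 1, dx f (s, t)) = 0 := by
    intro s hs
    have hsIcc : s ∈ Icc (-L) L := ⟨le_of_lt (lt_of_le_of_lt (le_of_lt hx.1) hs.1),
      le_of_lt hs.2⟩
    have heq : ∀ t, dx f (s, t) = -dy g (s, t) := fun t => by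
      have := hdiv (s, t); linarith
    simp_rw [heq]
    rw [integral_neg, ftc_vert hgd hgyc s, (hg01 s hsIcc).1, (hg01 s hsIcc).2]
    ring
  rw [setIntegral_congr_fun measurableSet_Ioo inner0]
  simp

lemma poincare_pt {f : ℝ × ℝ → ℝ} (hfd : Differentiable ℝ f)
    (hfyc : Continuous (dy f)) {x y : ℝ} (hy : y ∈ Ioo (0:ℝ) 1)
    (hmean : ∫ t in Ioo (0:ℝ) 1, f (x, t) = 0) :
    |f (x, y)| ≤ ∫ t in Ioo (0:ℝ) 1, |dy f (x, t)| := by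
  have hK : Continuous (fun s => dy f (x, s)) :=
    hfyc.comp (continuous_const.prodMk continuous_id)
  have key : ∀ t ∈ Ioo (0:ℝ) 1,
      |f (x, y) - f (x, t)| ≤ ∫ s in Ioo (0:ℝ) 1, |dy f (x, s)| := by
    intro t ht
    have h := intervalIntegral.integral_eq_sub_of_hasDerivAt
      (f := fun s => f (x, s)) (f' := fun s => dy f (x, s)) (a := t) (b := y)
      (fun s _ => hasDerivAt_vert hfd x s) (hK.intervalIntegrable t y)
    beta_reduce at h
    rw [← h]
    exact abs_intervalIntegral_le hK ⟨ht.1.le, ht.2⟩ ⟨hy.1.le, hy.2⟩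
  have hcont : Continuous fun t : ℝ => f (x, t) :=
    hfd.continuous.comp (continuous_const.prodMk continuous_id)
  have h2 : f (x, y) = ∫ t in Ioo (0:ℝ) 1, (f (x, y) - f (x, t)) := by
    rw [integral_sub (integrableOn_const (C := f (x, y)) measure_Ioo_lt_top.ne enorm_ne_top)
      (hcont.integrableOn_Icc.mono_set Ioo_subset_Icc_self),
      hmean, sub_zero, setIntegral_const, Real.volume_real_Ioo]
    simp
  calc |f (x, y)| = |∫ t in Ioo (0:ℝ) 1, (f (x, y) - f (x, t))| := by rw [← h2]
    _ ≤ ∫ t in Ioo (0:ℝ) 1, |f (x, y) - f (x, t)| := by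
        simpa [Real.norm_eq_abs] using
          norm_integral_le_integral_norm (μ := volume.restrict (Ioo (0:ℝ) 1))
            (fun t => f (x, y) - f (x, t))
    _ ≤ ∫ t in Ioo (0:ℝ) 1, (∫ s in Ioo (0:ℝ) 1, |dy f (x, s)|) := by
        apply setIntegral_mono_on
        · exact (continuous_const.sub hcont).abs.integrableOn_Icc.mono_set
            Ioo_subset_Icc_self
        · exact integrableOn_const measure_Ioo_lt_top.ne
        · exact measurableSet_Ioo
        · exact key
    _ = ∫ s in Ioo (0:ℝ) 1, |dy f (x, s)| := by
        rw [setIntegral_const, Real.volume_real_Ioo]; simp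

lemma vanish_pt {g : ℝ × ℝ → ℝ} (hgd : Differentiable ℝ g)
    (hgyc : Continuous (dy g)) {x y : ℝ} (hy : y ∈ Ioo (0:ℝ) 1)
    (h0 : g (x, 0) = 0) :
    |g (x, y)| ≤ ∫ t in Ioo (0:ℝ) 1, |dy g (x, t)| := by
  have hK : Continuous (fun s => dy g (x, s)) :=
    hgyc.comp (continuous_const.prodMk continuous_id)
  have h := intervalIntegral.integral_eq_sub_of_hasDerivAt
    (f := fun s => g (x, s)) (f' := fun s => dy g (x, s)) (a := (0:ℝ)) (b := y)
    (fun s _ => hasDerivAt_vert hgd x s) (hK.intervalIntegrable 0 y)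
  beta_reduce at h
  rw [h0, sub_zero] at h
  rw [← h]
  exact abs_intervalIntegral_le hK ⟨le_refl 0, zero_lt_one⟩ ⟨hy.1.le, hy.2⟩

end UniformL4Aux

/-- Uniform-in-`L` Ladyzhenskaya inequality for vector fields satisfying Navier-slip
boundary conditions on `Ω_L = (-L,L)×(0,1)`: `‖u‖²_{L⁴} ≤ C ‖u‖_{L²} ‖∇u‖_{L²}` with `C`
depending only on `μ, k₀, k₁`. -/
theorem uniform_L4_navier_slip (μ k₀ k₁ : ℝ) (hμ : 0 < μ) :
    ∃ C > 0, ∀ (L : ℝ), 1 ≤ L → ∀ (u : ℝ × ℝ → ℝ × ℝ),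
      ContDiff ℝ 2 u →
      (∀ p : ℝ × ℝ, dx (fun q => (u q).1) p + dy (fun q => (u q).2) p = 0) →
      (∀ y ∈ Set.Icc (0 : ℝ) 1, (u (-L, y)).1 = 0 ∧ (u (L, y)).1 = 0) →
      (∀ x ∈ Set.Icc (-L) L, (u (x, 0)).2 = 0 ∧ (u (x, 1)).2 = 0) →
      (∀ x ∈ Set.Icc (-L) L,
        μ * dy (fun q => (u q).1) (x, 0) = -k₀ * (u (x, 0)).1 ∧
        μ * dy (fun q => (u q).1) (x, 1) = k₁ * (u (x, 1)).1) →
      (∀ y ∈ Set.Icc (0 : ℝ) 1,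
        dx (fun q => (u q).2) (-L, y) = 0 ∧ dx (fun q => (u q).2) (L, y) = 0) →
      (∫ p in rect L, ‖u p‖ ^ 4) ^ ((1 : ℝ) / 2) ≤
        C * (∫ p in rect L, ‖u p‖ ^ 2) ^ ((1 : ℝ) / 2) *
          (∫ p in rect L, ‖fderiv ℝ u p‖ ^ 2) ^ ((1 : ℝ) / 2) := by
  clear hμ
  refine ⟨4, by norm_num, ?_⟩
  intro L hL u hu hdiv h1 h2 _h3 _h4
  open UniformL4Aux in
  have hL0 : (0:ℝ) < L := lt_of_lt_of_le one_pos hL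
  have hLL : -L < L := by linarith
  haveI := UniformL4Aux.finRect L
  set f : ℝ × ℝ → ℝ := fun q => (u q).1 with hfdef
  set g : ℝ × ℝ → ℝ := fun q => (u q).2 with hgdef
  have hfC2 : ContDiff ℝ 2 f := contDiff_fst.comp hu
  have hgC2 : ContDiff ℝ 2 g := contDiff_snd.comp hu
  have hfd : Differentiable ℝ f := hfC2.differentiable two_ne_zero
  have hgd : Differentiable ℝ g := hgC2.differentiable two_ne_zero
  have hfc : Continuous f := hfd.continuous
  have hgc : Continuous g := hgd.continuous
  have hfxc : Continuous (dx f) := UniformL4Aux.cont_dx hfC2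
  have hfyc : Continuous (dy f) := UniformL4Aux.cont_dy hfC2
  have hgxc : Continuous (dx g) := UniformL4Aux.cont_dx hgC2
  have hgyc : Continuous (dy g) := UniformL4Aux.cont_dy hgC2
  have hud : Differentiable ℝ u := hu.differentiable two_ne_zero
  have hfL : ∀ t ∈ Icc (0:ℝ) 1, f (L, t) = 0 := fun t ht => (h1 t ht).2
  have hfnL : ∀ t ∈ Icc (0:ℝ) 1, f (-L, t) = 0 := fun t ht => (h1 t ht).1
  have hg01 : ∀ s ∈ Icc (-L) L, g (s, 0) = 0 ∧ g (s, 1) = 0 := fun s hs => h2 s hs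
  -- pointwise norm comparisons
  have hval_f : ∀ p, |f p| ≤ ‖u p‖ := fun p => by
    simpa [Real.norm_eq_abs] using norm_fst_le (u p)
  have hval_g : ∀ p, |g p| ≤ ‖u p‖ := fun p => by
    simpa [Real.norm_eq_abs] using norm_snd_le (u p)
  have hfds : ∀ (p v : ℝ × ℝ), fderiv ℝ f p v = (fderiv ℝ u p v).1 := by
    intro p v
    rw [hfdef, ((hud p).hasFDerivAt.fst).fderiv]
    rfl
  have hgds : ∀ (p v : ℝ × ℝ), fderiv ℝ g p v = (fderiv ℝ u p v).2 := by
    intro p v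
    rw [hgdef, ((hud p).hasFDerivAt.snd).fderiv]
    rfl
  have hnorm10 : ‖((1:ℝ), (0:ℝ))‖ = 1 := by
    simp [Prod.norm_def]
  have hnorm01 : ‖((0:ℝ), (1:ℝ))‖ = 1 := by
    simp [Prod.norm_def]
  have hder_bound : ∀ (p v : ℝ × ℝ), ‖v‖ = 1 →
      ‖fderiv ℝ u p v‖ ≤ ‖fderiv ℝ u p‖ := by
    intro p v hv
    calc ‖fderiv ℝ u p v‖ ≤ ‖fderiv ℝ u p‖ * ‖v‖ := (fderiv ℝ u p).le_opNorm v
      _ = ‖fderiv ℝ u p‖ := by rw [hv, mul_one]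
  have hdx_f : ∀ p, |dx f p| ≤ ‖fderiv ℝ u p‖ := by
    intro p
    calc |dx f p| = |(fderiv ℝ u p (1, 0)).1| := by rw [dx, hfds p (1, 0)]
      _ ≤ ‖fderiv ℝ u p (1, 0)‖ := by
          simpa [Real.norm_eq_abs] using norm_fst_le (fderiv ℝ u p (1, 0))
      _ ≤ ‖fderiv ℝ u p‖ := hder_bound p _ hnorm10
  have hdy_f : ∀ p, |dy f p| ≤ ‖fderiv ℝ u p‖ := by
    intro p
    calc |dy f p| = |(fderiv ℝ u p (0, 1)).1| := by rw [dy, hfds p (0, 1)]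
      _ ≤ ‖fderiv ℝ u p (0, 1)‖ := by
          simpa [Real.norm_eq_abs] using norm_fst_le (fderiv ℝ u p (0, 1))
      _ ≤ ‖fderiv ℝ u p‖ := hder_bound p _ hnorm01
  have hdx_g : ∀ p, |dx g p| ≤ ‖fderiv ℝ u p‖ := by
    intro p
    calc |dx g p| = |(fderiv ℝ u p (1, 0)).2| := by rw [dx, hgds p (1, 0)]
      _ ≤ ‖fderiv ℝ u p (1, 0)‖ := by
          simpa [Real.norm_eq_abs] using norm_snd_le (fderiv ℝ u p (1, 0))
      _ ≤ ‖fderiv ℝ u p‖ := hder_bound p _ hnorm10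
  have hdy_g : ∀ p, |dy g p| ≤ ‖fderiv ℝ u p‖ := by
    intro p
    calc |dy g p| = |(fderiv ℝ u p (0, 1)).2| := by rw [dy, hgds p (0, 1)]
      _ ≤ ‖fderiv ℝ u p (0, 1)‖ := by
          simpa [Real.norm_eq_abs] using norm_snd_le (fderiv ℝ u p (0, 1))
      _ ≤ ‖fderiv ℝ u p‖ := hder_bound p _ hnorm01
  -- main quantities
  have hU2c : Continuous fun p : ℝ × ℝ => ‖u p‖ ^ 2 := hu.continuous.norm.pow 2
  have hD2c : Continuous fun p : ℝ × ℝ => ‖fderiv ℝ u p‖ ^ 2 :=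
    (hu.continuous_fderiv two_ne_zero).norm.pow 2
  set N2 := ∫ p in rect L, ‖u p‖ ^ 2 with hN2def
  set D2 := ∫ p in rect L, ‖fderiv ℝ u p‖ ^ 2 with hD2def
  set ND := Real.sqrt N2 * Real.sqrt D2 with hNDdef
  have hND : 0 ≤ ND := mul_nonneg (Real.sqrt_nonneg _) (Real.sqrt_nonneg _)
  have mono_rect : ∀ {F G : ℝ × ℝ → ℝ}, Continuous F → Continuous G →
      (∀ p, F p ≤ G p) → (∫ p in rect L, F p) ≤ ∫ p in rect L, G p := by
    intro F G hF hG h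
    exact setIntegral_mono_on (UniformL4Aux.intOnRect hF L)
      (UniformL4Aux.intOnRect hG L) (UniformL4Aux.measurableRect L) fun p _ => h p
  have sq_le : ∀ a b : ℝ, |a| ≤ b → a ^ 2 ≤ b ^ 2 := by
    intro a b h
    have h0 : 0 ≤ |a| := abs_nonneg a
    nlinarith [sq_abs a]
  have hIf2N : (∫ p in rect L, f p ^ 2) ≤ N2 :=
    mono_rect (hfc.pow 2) hU2c fun p => sq_le _ _ (hval_f p)
  have hIg2N : (∫ p in rect L, g p ^ 2) ≤ N2 :=
    mono_rect (hgc.pow 2) hU2c fun p => sq_le _ _ (hval_g p)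
  have hIfx2D : (∫ p in rect L, dx f p ^ 2) ≤ D2 :=
    mono_rect (hfxc.pow 2) hD2c fun p => sq_le _ _ (hdx_f p)
  have hIfy2D : (∫ p in rect L, dy f p ^ 2) ≤ D2 :=
    mono_rect (hfyc.pow 2) hD2c fun p => sq_le _ _ (hdy_f p)
  have hIgx2D : (∫ p in rect L, dx g p ^ 2) ≤ D2 :=
    mono_rect (hgxc.pow 2) hD2c fun p => sq_le _ _ (hdx_g p)
  have hIgy2D : (∫ p in rect L, dy g p ^ 2) ≤ D2 :=
    mono_rect (hgyc.pow 2) hD2c fun p => sq_le _ _ (hdy_g p)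
  -- zero vertical mean of f
  have means : ∀ x ∈ Ioo (-L) L, ∫ t in Ioo (0:ℝ) 1, f (x, t) = 0 := fun x hx =>
    UniformL4Aux.mean_zero hfd hgd hfxc hgyc hdiv hfL hg01 hx
  -- Poincaré for f
  have hPf : (∫ p in rect L, f p ^ 2) ≤ ∫ p in rect L, dy f p ^ 2 := by
    have e1 : (∫ p in rect L, f p ^ 2) =
        ∫ x in Ioo (-L) L, ∫ t in Ioo (0:ℝ) 1, f (x, t) ^ 2 :=
      UniformL4Aux.rect_fubini (hfc.pow 2) L
    have e2 : (∫ p in rect L, dy f p ^ 2) =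
        ∫ x in Ioo (-L) L, ∫ t in Ioo (0:ℝ) 1, dy f (x, t) ^ 2 :=
      UniformL4Aux.rect_fubini (hfyc.pow 2) L
    rw [e1, e2]
    apply setIntegral_mono_on
    · exact UniformL4Aux.marg_left (hfc.pow 2) L
    · exact UniformL4Aux.marg_left (hfyc.pow 2) L
    · exact measurableSet_Ioo
    intro x hx
    have hin : ∀ t ∈ Ioo (0:ℝ) 1,
        f (x, t) ^ 2 ≤ ∫ s in Ioo (0:ℝ) 1, dy f (x, s) ^ 2 := by
      intro t ht
      have hp := UniformL4Aux.poincare_pt hfd hfyc ht (means x hx)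
      have hs := UniformL4Aux.sq_int (ψ := fun s => dy f (x, s))
        (hfyc.comp (continuous_const.prodMk continuous_id))
      calc f (x, t) ^ 2 = |f (x, t)| ^ 2 := (sq_abs _).symm
        _ ≤ (∫ s in Ioo (0:ℝ) 1, |dy f (x, s)|) ^ 2 :=
            pow_le_pow_left₀ (abs_nonneg _) hp 2
        _ ≤ _ := hs
    calc (∫ t in Ioo (0:ℝ) 1, f (x, t) ^ 2)
        ≤ ∫ _t in Ioo (0:ℝ) 1, (∫ s in Ioo (0:ℝ) 1, dy f (x, s) ^ 2) := by
          apply setIntegral_mono_on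
          · exact UniformL4Aux.intOnIoo
              ((hfc.comp (continuous_const.prodMk continuous_id)).pow 2) 0 1
          · exact integrableOn_const measure_Ioo_lt_top.ne
          · exact measurableSet_Ioo
          · exact hin
      _ = ∫ s in Ioo (0:ℝ) 1, dy f (x, s) ^ 2 := by
          rw [setIntegral_const, Real.volume_real_Ioo]; simp
  -- Poincaré for g
  have hPg : (∫ p in rect L, g p ^ 2) ≤ ∫ p in rect L, dy g p ^ 2 := by
    have e1 : (∫ p in rect L, g p ^ 2) =
        ∫ x in Ioo (-L) L, ∫ t in Ioo (0:ℝ) 1, g (x, t) ^ 2 :=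
      UniformL4Aux.rect_fubini (hgc.pow 2) L
    have e2 : (∫ p in rect L, dy g p ^ 2) =
        ∫ x in Ioo (-L) L, ∫ t in Ioo (0:ℝ) 1, dy g (x, t) ^ 2 :=
      UniformL4Aux.rect_fubini (hgyc.pow 2) L
    rw [e1, e2]
    apply setIntegral_mono_on
    · exact UniformL4Aux.marg_left (hgc.pow 2) L
    · exact UniformL4Aux.marg_left (hgyc.pow 2) L
    · exact measurableSet_Ioo
    intro x hx
    have hin : ∀ t ∈ Ioo (0:ℝ) 1,
        g (x, t) ^ 2 ≤ ∫ s in Ioo (0:ℝ) 1, dy g (x, s) ^ 2 := by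
      intro t ht
      have hp := UniformL4Aux.vanish_pt hgd hgyc ht (hg01 x ⟨hx.1.le, hx.2.le⟩).1
      have hs := UniformL4Aux.sq_int (ψ := fun s => dy g (x, s))
        (hgyc.comp (continuous_const.prodMk continuous_id))
      calc g (x, t) ^ 2 = |g (x, t)| ^ 2 := (sq_abs _).symm
        _ ≤ (∫ s in Ioo (0:ℝ) 1, |dy g (x, s)|) ^ 2 :=
            pow_le_pow_left₀ (abs_nonneg _) hp 2
        _ ≤ _ := hs
    calc (∫ t in Ioo (0:ℝ) 1, g (x, t) ^ 2)
        ≤ ∫ _t in Ioo (0:ℝ) 1, (∫ s in Ioo (0:ℝ) 1, dy g (x, s) ^ 2) := by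
          apply setIntegral_mono_on
          · exact UniformL4Aux.intOnIoo
              ((hgc.comp (continuous_const.prodMk continuous_id)).pow 2) 0 1
          · exact integrableOn_const measure_Ioo_lt_top.ne
          · exact measurableSet_Ioo
          · exact hin
      _ = ∫ s in Ioo (0:ℝ) 1, dy g (x, s) ^ 2 := by
          rw [setIntegral_const, Real.volume_real_Ioo]; simp
  have hIf2_nonneg : 0 ≤ ∫ p in rect L, f p ^ 2 := integral_nonneg fun p => sq_nonneg _
  have hIg2_nonneg : 0 ≤ ∫ p in rect L, g p ^ 2 := integral_nonneg fun p => sq_nonneg _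
  have hIf2ND : (∫ p in rect L, f p ^ 2) ≤ ND := by
    have ha : Real.sqrt (∫ p in rect L, f p ^ 2) ≤ Real.sqrt N2 := Real.sqrt_le_sqrt hIf2N
    have hb : Real.sqrt (∫ p in rect L, f p ^ 2) ≤ Real.sqrt D2 :=
      Real.sqrt_le_sqrt (le_trans hPf hIfy2D)
    calc (∫ p in rect L, f p ^ 2)
        = Real.sqrt (∫ p in rect L, f p ^ 2) * Real.sqrt (∫ p in rect L, f p ^ 2) :=
          (Real.mul_self_sqrt hIf2_nonneg).symm
      _ ≤ ND := mul_le_mul ha hb (Real.sqrt_nonneg _) (Real.sqrt_nonneg _)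
  have hIg2ND : (∫ p in rect L, g p ^ 2) ≤ ND := by
    have ha : Real.sqrt (∫ p in rect L, g p ^ 2) ≤ Real.sqrt N2 := Real.sqrt_le_sqrt hIg2N
    have hb : Real.sqrt (∫ p in rect L, g p ^ 2) ≤ Real.sqrt D2 :=
      Real.sqrt_le_sqrt (le_trans hPg hIgy2D)
    calc (∫ p in rect L, g p ^ 2)
        = Real.sqrt (∫ p in rect L, g p ^ 2) * Real.sqrt (∫ p in rect L, g p ^ 2) :=
          (Real.mul_self_sqrt hIg2_nonneg).symm
      _ ≤ ND := mul_le_mul ha hb (Real.sqrt_nonneg _) (Real.sqrt_nonneg _)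
  -- Cauchy-Schwarz instances
  have CS : ∀ {F G : ℝ × ℝ → ℝ}, Continuous F → Continuous G →
      (∫ p in rect L, F p ^ 2) ≤ N2 → (∫ p in rect L, G p ^ 2) ≤ D2 →
      (∫ p in rect L, |F p| * |G p|) ≤ ND := by
    intro F G hF hG ha hb
    calc (∫ p in rect L, |F p| * |G p|)
        ≤ Real.sqrt (∫ p in rect L, F p ^ 2) * Real.sqrt (∫ p in rect L, G p ^ 2) :=
          UniformL4Aux.cs_general (UniformL4Aux.memL2Rect hF L)
            (UniformL4Aux.memL2Rect hG L)
      _ ≤ ND := mul_le_mul (Real.sqrt_le_sqrt ha) (Real.sqrt_le_sqrt hb)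
          (Real.sqrt_nonneg _) (Real.sqrt_nonneg _)
  have CSffy : (∫ p in rect L, |f p| * |dy f p|) ≤ ND := CS hfc hfyc hIf2N hIfy2D
  have CSffx : (∫ p in rect L, |f p| * |dx f p|) ≤ ND := CS hfc hfxc hIf2N hIfx2D
  have CSggy : (∫ p in rect L, |g p| * |dy g p|) ≤ ND := CS hgc hgyc hIg2N hIgy2D
  have CSggx : (∫ p in rect L, |g p| * |dx g p|) ≤ ND := CS hgc hgxc hIg2N hIgx2D
  -- continuity of the various integrands
  have hFAc : Continuous fun p : ℝ × ℝ => f p ^ 2 + 2 * |f p| * |dy f p| :=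
    (hfc.pow 2).add ((continuous_const.mul hfc.abs).mul hfyc.abs)
  have hFBc : Continuous fun p : ℝ × ℝ => 2 * |f p| * |dx f p| :=
    (continuous_const.mul hfc.abs).mul hfxc.abs
  have hGAc : Continuous fun p : ℝ × ℝ => 2 * |g p| * |dy g p| :=
    (continuous_const.mul hgc.abs).mul hgyc.abs
  have hGBc : Continuous fun p : ℝ × ℝ => 2 * |g p| * |dx g p| :=
    (continuous_const.mul hgc.abs).mul hgxc.abs
  -- pointwise bounds
  have hA : ∀ x ∈ Ioo (-L) L, ∀ y ∈ Ioo (0:ℝ) 1,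
      f (x, y) ^ 2 ≤ ∫ t in Ioo (0:ℝ) 1,
        (f (x, t) ^ 2 + 2 * |f (x, t)| * |dy f (x, t)|) := by
    intro x hx y hy
    have hψc : Continuous fun s => dy f (x, s) :=
      hfyc.comp (continuous_const.prodMk continuous_id)
    have hφc : Continuous fun s : ℝ => f (x, s) :=
      hfc.comp (continuous_const.prodMk continuous_id)
    have key : ∀ t ∈ Ioo (0:ℝ) 1,
        f (x, y) ^ 2 - (∫ s in Ioo (0:ℝ) 1, 2 * |f (x, s)| * |dy f (x, s)|) ≤
          f (x, t) ^ 2 := by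
      intro t ht
      have h := UniformL4Aux.sq_ftc (φ := fun s => f (x, s)) (ψ := fun s => dy f (x, s))
        (fun s => UniformL4Aux.hasDerivAt_vert hfd x s) hψc
        (⟨ht.1.le, ht.2⟩ : t ∈ Ico (0:ℝ) 1) ⟨hy.1.le, hy.2⟩
      linarith [h]
    have hconst : f (x, y) ^ 2 - (∫ s in Ioo (0:ℝ) 1, 2 * |f (x, s)| * |dy f (x, s)|) ≤
        ∫ t in Ioo (0:ℝ) 1, f (x, t) ^ 2 := by
      have h := setIntegral_mono_on (s := Ioo (0:ℝ) 1)
        (integrableOn_const measure_Ioo_lt_top.ne)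
        (UniformL4Aux.intOnIoo (hφc.pow 2) 0 1)
        measurableSet_Ioo key
      rwa [setIntegral_const, Real.volume_real_Ioo_of_le zero_le_one, show (1:ℝ) - 0 = 1 by norm_num, one_smul] at h
    have hsplit : (∫ t in Ioo (0:ℝ) 1, (f (x, t) ^ 2 + 2 * |f (x, t)| * |dy f (x, t)|)) =
        (∫ t in Ioo (0:ℝ) 1, f (x, t) ^ 2) +
          ∫ s in Ioo (0:ℝ) 1, 2 * |f (x, s)| * |dy f (x, s)| :=
      integral_add (UniformL4Aux.intOnIoo (hφc.pow 2) 0 1)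
        (UniformL4Aux.intOnIoo ((continuous_const.mul hφc.abs).mul hψc.abs) 0 1)
    linarith
  have hB : ∀ x ∈ Ioo (-L) L, ∀ y ∈ Ioo (0:ℝ) 1,
      f (x, y) ^ 2 ≤ ∫ s in Ioo (-L) L, 2 * |f (s, y)| * |dx f (s, y)| := by
    intro x hx y hy
    have hψc : Continuous fun s => dx f (s, y) :=
      hfxc.comp (continuous_id.prodMk continuous_const)
    have h := UniformL4Aux.sq_ftc (φ := fun s => f (s, y)) (ψ := fun s => dx f (s, y))
      (fun s => UniformL4Aux.hasDerivAt_horiz hfd s y) hψc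
      (⟨le_refl (-L), hLL⟩ : -L ∈ Ico (-L) L) ⟨hx.1.le, hx.2⟩
    simpa [hfnL y (Ioo_subset_Icc_self hy)] using h
  have hA' : ∀ x ∈ Ioo (-L) L, ∀ y ∈ Ioo (0:ℝ) 1,
      g (x, y) ^ 2 ≤ ∫ t in Ioo (0:ℝ) 1, 2 * |g (x, t)| * |dy g (x, t)| := by
    intro x hx y hy
    have hψc : Continuous fun s => dy g (x, s) :=
      hgyc.comp (continuous_const.prodMk continuous_id)
    have h := UniformL4Aux.sq_ftc (φ := fun s => g (x, s)) (ψ := fun s => dy g (x, s))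
      (fun s => UniformL4Aux.hasDerivAt_vert hgd x s) hψc
      (⟨le_refl (0:ℝ), zero_lt_one⟩ : (0:ℝ) ∈ Ico (0:ℝ) 1) ⟨hy.1.le, hy.2⟩
    simpa [(hg01 x ⟨hx.1.le, hx.2.le⟩).1] using h
  have hB' : ∀ x ∈ Ioo (-L) L, ∀ y ∈ Ioo (0:ℝ) 1,
      g (x, y) ^ 2 ≤ (2 * L)⁻¹ * (∫ s in Ioo (-L) L, g (s, y) ^ 2) +
        ∫ s in Ioo (-L) L, 2 * |g (s, y)| * |dx g (s, y)| := by
    intro x hx y hy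
    have hψc : Continuous fun s => dx g (s, y) :=
      hgxc.comp (continuous_id.prodMk continuous_const)
    have hφc : Continuous fun s : ℝ => g (s, y) :=
      hgc.comp (continuous_id.prodMk continuous_const)
    have key : ∀ s ∈ Ioo (-L) L,
        g (x, y) ^ 2 - (∫ r in Ioo (-L) L, 2 * |g (r, y)| * |dx g (r, y)|) ≤
          g (s, y) ^ 2 := by
      intro s hs
      have h := UniformL4Aux.sq_ftc (φ := fun r => g (r, y)) (ψ := fun r => dx g (r, y))
        (fun r => UniformL4Aux.hasDerivAt_horiz hgd r y) hψc
        (⟨hs.1.le, hs.2⟩ : s ∈ Ico (-L) L) ⟨hx.1.le, hx.2⟩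
      linarith [h]
    have h := setIntegral_mono_on (s := Ioo (-L) L)
      (integrableOn_const measure_Ioo_lt_top.ne)
      (UniformL4Aux.intOnIoo (hφc.pow 2) (-L) L)
      measurableSet_Ioo key
    rw [setIntegral_const, Real.volume_real_Ioo_of_le (by linarith : -L ≤ L), smul_eq_mul,
      show L - -L = 2 * L by ring] at h
    have h2L : (0:ℝ) < 2 * L := by linarith
    have h3 := mul_le_mul_of_nonneg_left h (le_of_lt (inv_pos.mpr h2L))
    rw [← mul_assoc, inv_mul_cancel₀ (ne_of_gt h2L), one_mul] at h3
    have h4 : (2 * L)⁻¹ * (∫ s in Ioo (-L) L, g (s, y) ^ 2) =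
        (2 * L)⁻¹ * ∫ s in Ioo (-L) L, g (s, y) ^ 2 := rfl
    simp only [Pi.pow_apply] at h3
    linarith [h3]
  -- integral identities via Fubini
  have eqA : (∫ p in rect L, (f p ^ 2 + 2 * |f p| * |dy f p|)) =
      ∫ x in Ioo (-L) L, ∫ t in Ioo (0:ℝ) 1,
        (f (x, t) ^ 2 + 2 * |f (x, t)| * |dy f (x, t)|) :=
    UniformL4Aux.rect_fubini hFAc L
  have eqB : (∫ y in Ioo (0:ℝ) 1, ∫ s in Ioo (-L) L, 2 * |f (s, y)| * |dx f (s, y)|) =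
      ∫ p in rect L, 2 * |f p| * |dx f p| := UniformL4Aux.swap_fubini hFBc L
  have eqA' : (∫ p in rect L, 2 * |g p| * |dy g p|) =
      ∫ x in Ioo (-L) L, ∫ t in Ioo (0:ℝ) 1, 2 * |g (x, t)| * |dy g (x, t)| :=
    UniformL4Aux.rect_fubini hGAc L
  have eqB'1 : (∫ y in Ioo (0:ℝ) 1, ∫ s in Ioo (-L) L, g (s, y) ^ 2) =
      ∫ p in rect L, g p ^ 2 := UniformL4Aux.swap_fubini (hgc.pow 2) L
  have eqB'2 : (∫ y in Ioo (0:ℝ) 1, ∫ s in Ioo (-L) L, 2 * |g (s, y)| * |dx g (s, y)|) =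
      ∫ p in rect L, 2 * |g p| * |dx g p| := UniformL4Aux.swap_fubini hGBc L
  -- split integrals
  have splitA : (∫ p in rect L, (f p ^ 2 + 2 * |f p| * |dy f p|)) =
      (∫ p in rect L, f p ^ 2) + ∫ p in rect L, 2 * (|f p| * |dy f p|) := by
    simp_rw [mul_assoc]
    exact integral_add (UniformL4Aux.intOnRect (hfc.pow 2) L)
      (UniformL4Aux.intOnRect (continuous_const.mul (hfc.abs.mul hfyc.abs)) L)
  -- bounds on the four A/B integrals
  have hIA : (∫ x in Ioo (-L) L, ∫ t in Ioo (0:ℝ) 1,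
      (f (x, t) ^ 2 + 2 * |f (x, t)| * |dy f (x, t)|)) ≤ 3 * ND := by
    rw [← eqA, splitA, integral_const_mul]
    linarith [hIf2ND, CSffy]
  have hIB : (∫ y in Ioo (0:ℝ) 1, ∫ s in Ioo (-L) L, 2 * |f (s, y)| * |dx f (s, y)|) ≤
      2 * ND := by
    rw [eqB]
    have : (∫ p in rect L, 2 * |f p| * |dx f p|) =
        2 * ∫ p in rect L, |f p| * |dx f p| := by
      simp_rw [mul_assoc]
      exact integral_const_mul 2 _
    rw [this]
    linarith [CSffx]
  have hIA' : (∫ x in Ioo (-L) L, ∫ t in Ioo (0:ℝ) 1,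
      2 * |g (x, t)| * |dy g (x, t)|) ≤ 2 * ND := by
    rw [← eqA']
    have : (∫ p in rect L, 2 * |g p| * |dy g p|) =
        2 * ∫ p in rect L, |g p| * |dy g p| := by
      simp_rw [mul_assoc]
      exact integral_const_mul 2 _
    rw [this]
    linarith [CSggy]
  have hIB' : (∫ y in Ioo (0:ℝ) 1,
      ((2 * L)⁻¹ * (∫ s in Ioo (-L) L, g (s, y) ^ 2) +
        ∫ s in Ioo (-L) L, 2 * |g (s, y)| * |dx g (s, y)|)) ≤ 5 / 2 * ND := by
    have hm1 : IntegrableOn (fun y => ∫ s in Ioo (-L) L, g (s, y) ^ 2) (Ioo (0:ℝ) 1) :=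
      UniformL4Aux.marg_right (hgc.pow 2) L
    have hm2 : IntegrableOn (fun y => ∫ s in Ioo (-L) L, 2 * |g (s, y)| * |dx g (s, y)|)
        (Ioo (0:ℝ) 1) := UniformL4Aux.marg_right hGBc L
    rw [integral_add (hm1.const_mul _) hm2, integral_const_mul, eqB'1, eqB'2]
    have hinv : (2 * L)⁻¹ ≤ 2⁻¹ := by
      apply inv_anti₀ (by norm_num) (by linarith)
    have ht1 : (2 * L)⁻¹ * (∫ p in rect L, g p ^ 2) ≤ 2⁻¹ * ND :=
      mul_le_mul hinv hIg2ND hIg2_nonneg (by norm_num)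
    have ht2 : (∫ p in rect L, 2 * |g p| * |dx g p|) =
        2 * ∫ p in rect L, |g p| * |dx g p| := by
      simp_rw [mul_assoc]
      exact integral_const_mul 2 _
    rw [ht2]
    linarith [CSggx]
  -- nonnegativity of B-integrals
  have hIBpos : 0 ≤ ∫ y in Ioo (0:ℝ) 1, ∫ s in Ioo (-L) L,
      2 * |f (s, y)| * |dx f (s, y)| :=
    integral_nonneg fun y => integral_nonneg fun s => by positivity
  have hIB'pos : 0 ≤ ∫ y in Ioo (0:ℝ) 1,
      ((2 * L)⁻¹ * (∫ s in Ioo (-L) L, g (s, y) ^ 2) +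
        ∫ s in Ioo (-L) L, 2 * |g (s, y)| * |dx g (s, y)|) := by
    apply integral_nonneg
    intro y
    have h1' : (0:ℝ) ≤ ∫ s in Ioo (-L) L, g (s, y) ^ 2 :=
      integral_nonneg fun s => sq_nonneg _
    have h2' : (0:ℝ) ≤ ∫ s in Ioo (-L) L, 2 * |g (s, y)| * |dx g (s, y)| :=
      integral_nonneg fun s => by positivity
    have : (0:ℝ) ≤ (2 * L)⁻¹ := by positivity
    positivity
  -- product bound for f
  have hprod_f : (∫ p in rect L, f p ^ 4) ≤
      (∫ x in Ioo (-L) L, ∫ t in Ioo (0:ℝ) 1,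
        (f (x, t) ^ 2 + 2 * |f (x, t)| * |dy f (x, t)|)) *
      (∫ y in Ioo (0:ℝ) 1, ∫ s in Ioo (-L) L, 2 * |f (s, y)| * |dx f (s, y)|) := by
    have hAi : IntegrableOn (fun x => ∫ t in Ioo (0:ℝ) 1,
        (f (x, t) ^ 2 + 2 * |f (x, t)| * |dy f (x, t)|)) (Ioo (-L) L) :=
      UniformL4Aux.marg_left hFAc L
    have hBi : IntegrableOn (fun y => ∫ s in Ioo (-L) L,
        2 * |f (s, y)| * |dx f (s, y)|) (Ioo (0:ℝ) 1) :=
      UniformL4Aux.marg_right hFBc L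
    have hABi : IntegrableOn (fun p : ℝ × ℝ =>
        (∫ t in Ioo (0:ℝ) 1, (f (p.1, t) ^ 2 + 2 * |f (p.1, t)| * |dy f (p.1, t)|)) *
        (∫ s in Ioo (-L) L, 2 * |f (s, p.2)| * |dx f (s, p.2)|)) (rect L) := by
      rw [IntegrableOn, show rect L = Ioo (-L) L ×ˢ Ioo (0:ℝ) 1 from rfl,
        show (volume : Measure (ℝ × ℝ)) = (volume : Measure ℝ).prod volume from
          Measure.volume_eq_prod _ _, ← Measure.prod_restrict]
      exact hAi.mul_prod hBi
    have step1 : (∫ p in rect L, f p ^ 4) ≤ ∫ p in rect L,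
        ((∫ t in Ioo (0:ℝ) 1, (f (p.1, t) ^ 2 + 2 * |f (p.1, t)| * |dy f (p.1, t)|)) *
        (∫ s in Ioo (-L) L, 2 * |f (s, p.2)| * |dx f (s, p.2)|)) := by
      apply setIntegral_mono_on (UniformL4Aux.intOnRect (hfc.pow 4) L) hABi
        (UniformL4Aux.measurableRect L)
      intro p hp
      obtain ⟨hp1, hp2⟩ := hp
      have ha := hA p.1 hp1 p.2 hp2
      have hb := hB p.1 hp1 p.2 hp2
      calc f p ^ 4 = f p ^ 2 * f p ^ 2 := by ring
        _ ≤ _ := mul_le_mul ha hb (sq_nonneg _) (le_trans (sq_nonneg _) ha)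
    have step2 : (∫ p in rect L,
        ((∫ t in Ioo (0:ℝ) 1, (f (p.1, t) ^ 2 + 2 * |f (p.1, t)| * |dy f (p.1, t)|)) *
        (∫ s in Ioo (-L) L, 2 * |f (s, p.2)| * |dx f (s, p.2)|))) =
        (∫ x in Ioo (-L) L, ∫ t in Ioo (0:ℝ) 1,
          (f (x, t) ^ 2 + 2 * |f (x, t)| * |dy f (x, t)|)) *
        (∫ y in Ioo (0:ℝ) 1, ∫ s in Ioo (-L) L, 2 * |f (s, y)| * |dx f (s, y)|) := by
      rw [show rect L = Ioo (-L) L ×ˢ Ioo (0:ℝ) 1 from rfl,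
        show (volume : Measure (ℝ × ℝ)) = (volume : Measure ℝ).prod volume from
          Measure.volume_eq_prod _ _]
      exact setIntegral_prod_mul
        (fun x => ∫ t in Ioo (0:ℝ) 1, (f (x, t) ^ 2 + 2 * |f (x, t)| * |dy f (x, t)|))
        (fun y => ∫ s in Ioo (-L) L, 2 * |f (s, y)| * |dx f (s, y)|) _ _
    rw [step2] at step1
    exact step1
  -- product bound for g
  have hprod_g : (∫ p in rect L, g p ^ 4) ≤
      (∫ x in Ioo (-L) L, ∫ t in Ioo (0:ℝ) 1, 2 * |g (x, t)| * |dy g (x, t)|) *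
      (∫ y in Ioo (0:ℝ) 1, ((2 * L)⁻¹ * (∫ s in Ioo (-L) L, g (s, y) ^ 2) +
        ∫ s in Ioo (-L) L, 2 * |g (s, y)| * |dx g (s, y)|)) := by
    have hAi : IntegrableOn (fun x => ∫ t in Ioo (0:ℝ) 1,
        2 * |g (x, t)| * |dy g (x, t)|) (Ioo (-L) L) :=
      UniformL4Aux.marg_left hGAc L
    have hBi : IntegrableOn (fun y => (2 * L)⁻¹ * (∫ s in Ioo (-L) L, g (s, y) ^ 2) +
        ∫ s in Ioo (-L) L, 2 * |g (s, y)| * |dx g (s, y)|) (Ioo (0:ℝ) 1) :=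
      ((UniformL4Aux.marg_right (hgc.pow 2) L).const_mul _).add
        (UniformL4Aux.marg_right hGBc L)
    have hABi : IntegrableOn (fun p : ℝ × ℝ =>
        (∫ t in Ioo (0:ℝ) 1, 2 * |g (p.1, t)| * |dy g (p.1, t)|) *
        ((2 * L)⁻¹ * (∫ s in Ioo (-L) L, g (s, p.2) ^ 2) +
          ∫ s in Ioo (-L) L, 2 * |g (s, p.2)| * |dx g (s, p.2)|)) (rect L) := by
      rw [IntegrableOn, show rect L = Ioo (-L) L ×ˢ Ioo (0:ℝ) 1 from rfl,
        show (volume : Measure (ℝ × ℝ)) = (volume : Measure ℝ).prod volume from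
          Measure.volume_eq_prod _ _, ← Measure.prod_restrict]
      exact hAi.mul_prod hBi
    have step1 : (∫ p in rect L, g p ^ 4) ≤ ∫ p in rect L,
        ((∫ t in Ioo (0:ℝ) 1, 2 * |g (p.1, t)| * |dy g (p.1, t)|) *
        ((2 * L)⁻¹ * (∫ s in Ioo (-L) L, g (s, p.2) ^ 2) +
          ∫ s in Ioo (-L) L, 2 * |g (s, p.2)| * |dx g (s, p.2)|)) := by
      apply setIntegral_mono_on (UniformL4Aux.intOnRect (hgc.pow 4) L) hABi
        (UniformL4Aux.measurableRect L)
      intro p hp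
      obtain ⟨hp1, hp2⟩ := hp
      have ha := hA' p.1 hp1 p.2 hp2
      have hb := hB' p.1 hp1 p.2 hp2
      calc g p ^ 4 = g p ^ 2 * g p ^ 2 := by ring
        _ ≤ _ := mul_le_mul ha hb (sq_nonneg _) (le_trans (sq_nonneg _) ha)
    have step2 : (∫ p in rect L,
        ((∫ t in Ioo (0:ℝ) 1, 2 * |g (p.1, t)| * |dy g (p.1, t)|) *
        ((2 * L)⁻¹ * (∫ s in Ioo (-L) L, g (s, p.2) ^ 2) +
          ∫ s in Ioo (-L) L, 2 * |g (s, p.2)| * |dx g (s, p.2)|))) =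
        (∫ x in Ioo (-L) L, ∫ t in Ioo (0:ℝ) 1, 2 * |g (x, t)| * |dy g (x, t)|) *
        (∫ y in Ioo (0:ℝ) 1, ((2 * L)⁻¹ * (∫ s in Ioo (-L) L, g (s, y) ^ 2) +
          ∫ s in Ioo (-L) L, 2 * |g (s, y)| * |dx g (s, y)|)) := by
      rw [show rect L = Ioo (-L) L ×ˢ Ioo (0:ℝ) 1 from rfl,
        show (volume : Measure (ℝ × ℝ)) = (volume : Measure ℝ).prod volume from
          Measure.volume_eq_prod _ _]
      exact setIntegral_prod_mul
        (fun x => ∫ t in Ioo (0:ℝ) 1, 2 * |g (x, t)| * |dy g (x, t)|)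
        (fun y => (2 * L)⁻¹ * (∫ s in Ioo (-L) L, g (s, y) ^ 2) +
          ∫ s in Ioo (-L) L, 2 * |g (s, y)| * |dx g (s, y)|) _ _
    rw [step2] at step1
    exact step1
  -- combine
  have hf4 : (∫ p in rect L, f p ^ 4) ≤ 6 * (ND * ND) := by
    calc (∫ p in rect L, f p ^ 4) ≤ _ := hprod_f
      _ ≤ (3 * ND) * (2 * ND) := mul_le_mul hIA hIB hIBpos (by linarith)
      _ = 6 * (ND * ND) := by ring
  have hg4 : (∫ p in rect L, g p ^ 4) ≤ 5 * (ND * ND) := by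
    calc (∫ p in rect L, g p ^ 4) ≤ _ := hprod_g
      _ ≤ (2 * ND) * (5 / 2 * ND) := mul_le_mul hIA' hIB' hIB'pos (by linarith)
      _ = 5 * (ND * ND) := by ring
  have htotal : (∫ p in rect L, ‖u p‖ ^ 4) ≤ 16 * (ND * ND) := by
    have hpt : ∀ p : ℝ × ℝ, ‖u p‖ ^ 4 ≤ f p ^ 4 + g p ^ 4 := by
      intro p
      have hmax : ‖u p‖ = max |f p| |g p| := by
        rw [Prod.norm_def, Real.norm_eq_abs, Real.norm_eq_abs]
      have hf4' : |f p| ^ 4 = f p ^ 4 := by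
        rw [← abs_pow, abs_of_nonneg (by positivity)]
      have hg4' : |g p| ^ 4 = g p ^ 4 := by
        rw [← abs_pow, abs_of_nonneg (by positivity)]
      rcases max_choice |f p| |g p| with hc | hc <;> rw [hmax, hc]
      · rw [hf4']
        have : (0:ℝ) ≤ g p ^ 4 := by positivity
        linarith
      · rw [hg4']
        have : (0:ℝ) ≤ f p ^ 4 := by positivity
        linarith
    have hmono := mono_rect (hu.continuous.norm.pow 4)
      ((hfc.pow 4).add (hgc.pow 4)) hpt
    have hsplit := integral_add (μ := volume.restrict (rect L))
      (UniformL4Aux.intOnRect (hfc.pow 4) L) (UniformL4Aux.intOnRect (hgc.pow 4) L)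
    simp only [Pi.add_apply, Pi.pow_apply] at hmono hsplit
    rw [hsplit] at hmono
    linarith [hf4, hg4, mul_nonneg hND hND]
  -- conclusion
  have hint4 : 0 ≤ ∫ p in rect L, ‖u p‖ ^ 4 := integral_nonneg fun p => by positivity
  rw [← Real.sqrt_eq_rpow, ← Real.sqrt_eq_rpow, ← Real.sqrt_eq_rpow]
  calc Real.sqrt (∫ p in rect L, ‖u p‖ ^ 4) ≤ Real.sqrt (16 * (ND * ND)) :=
      Real.sqrt_le_sqrt htotal
    _ = 4 * ND := by
        rw [show 16 * (ND * ND) = (4 * ND) ^ 2 by ring, Real.sqrt_sq (by positivity)]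
    _ = 4 * Real.sqrt N2 * Real.sqrt D2 := by rw [hNDdef]; ring
end

section
/- There exists a constant C > 0, independent of L ≥ 1, such that for every u ∈ H^2((-L,L)×(0,1);ℝ²) that is divergence free, tangential on the boundary, and satisfies the Navier-slip boundary conditions with coefficients k₀ at y=0 and k₁ at y=1, one has ‖∇u‖_{L^2(Ω_L)}² ≤ C ‖u‖_{L^2(Ω_L)} ‖∇u‖_{H^1(Ω_L)}. -/
open MeasureTheory Set

set_option maxHeartbeats 1000000

/-- integrability of continuous functions on open rectangles -/
lemma contIntegrableOn {F : ℝ×ℝ → ℝ} (hF : Continuous F) (a b c d : ℝ) :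
    IntegrableOn F (Ioo a b ×ˢ Ioo c d) := by
  have h1 : IntegrableOn F (Icc a b ×ˢ Icc c d) :=
    hF.continuousOn.integrableOn_compact (isCompact_Icc.prod isCompact_Icc)
  exact h1.mono_set (prod_mono Ioo_subset_Icc_self Ioo_subset_Icc_self)

lemma cont1dIntegrableOn {f : ℝ → ℝ} (hf : Continuous f) (a b : ℝ) :
    IntegrableOn f (Ioo a b) := by
  exact (hf.continuousOn.integrableOn_compact isCompact_Icc).mono_set Ioo_subset_Icc_self

/-- Fubini on rectangle, x first -/
lemma prodInt₁ {F : ℝ×ℝ → ℝ} (hF : Continuous F) (a b c d : ℝ) :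
    ∫ p in Ioo a b ×ˢ Ioo c d, F p = ∫ x in Ioo a b, ∫ y in Ioo c d, F (x, y) := by
  rw [show (volume : Measure (ℝ×ℝ)) = (volume : Measure ℝ).prod volume from
    Measure.volume_eq_prod ℝ ℝ]
  exact MeasureTheory.setIntegral_prod F (by
    rw [← Measure.volume_eq_prod]; exact contIntegrableOn hF a b c d)

/-- Fubini on rectangle, y first -/
lemma prodInt₂ {F : ℝ×ℝ → ℝ} (hF : Continuous F) (a b c d : ℝ) :
    ∫ p in Ioo a b ×ˢ Ioo c d, F p = ∫ y in Ioo c d, ∫ x in Ioo a b, F (x, y) := by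
  rw [prodInt₁ hF a b c d]
  have h : Integrable (Function.uncurry fun x y => F (x, y))
      ((volume.restrict (Ioo a b)).prod (volume.restrict (Ioo c d))) := by
    rw [Measure.prod_restrict]
    have := contIntegrableOn hF a b c d
    rw [IntegrableOn, show (volume : Measure (ℝ×ℝ)) = (volume : Measure ℝ).prod volume from
      Measure.volume_eq_prod ℝ ℝ] at this
    exact this
  exact MeasureTheory.integral_integral_swap h

/-- Cauchy–Schwarz for integrals (DIY) -/
lemma csIntegral {α : Type*} [MeasurableSpace α] (μ : Measure α) (f g : α → ℝ)
    (hf : Integrable (fun x => (f x)^2) μ) (hg : Integrable (fun x => (g x)^2) μ)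
    (hfg : Integrable (fun x => |f x * g x|) μ) :
    ∫ x, |f x * g x| ∂μ ≤ Real.sqrt (∫ x, (f x)^2 ∂μ) * Real.sqrt (∫ x, (g x)^2 ∂μ) := by
  set A := ∫ x, (f x)^2 ∂μ with hA
  set B := ∫ x, (g x)^2 ∂μ with hB
  have hA0 : 0 ≤ A := integral_nonneg fun x => sq_nonneg _
  have hB0 : 0 ≤ B := integral_nonneg fun x => sq_nonneg _
  have key : ∀ t : ℝ, 0 < t → ∫ x, |f x * g x| ∂μ ≤ (t * A + B / t) / 2 := by
    intro t ht
    have hpt : ∀ x, |f x * g x| ≤ (t * (f x)^2 + (g x)^2 / t) / 2 := by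
      intro x
      have key2 : 2*t*|f x * g x| ≤ t*(t*(f x)^2) + (g x)^2 := by
        have h1 : |2*t*(f x * g x)| ≤ t*(t*(f x)^2) + (g x)^2 := by
          rw [abs_le]
          constructor
          · nlinarith [sq_nonneg (t*f x + g x)]
          · nlinarith [sq_nonneg (t*f x - g x)]
        calc 2*t*|f x * g x| = |2*t*(f x*g x)| := by
              rw [abs_mul (2*t) (f x * g x), abs_of_pos (by linarith : (0:ℝ) < 2*t)]
          _ ≤ _ := h1
      have h2t : (0:ℝ) < 2*t := by linarith
      calc |f x * g x| = (2*t*|f x * g x|)/(2*t) := by field_simp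
        _ ≤ (t*(t*(f x)^2) + (g x)^2)/(2*t) := by
            gcongr
        _ = (t * (f x)^2 + (g x)^2 / t) / 2 := by field_simp
    calc ∫ x, |f x * g x| ∂μ ≤ ∫ x, (t * (f x)^2 + (g x)^2 / t) / 2 ∂μ := by
          apply integral_mono hfg _ hpt
          exact (((hf.const_mul t).add (hg.div_const t)).div_const 2)
      _ = (t * A + B / t) / 2 := by
          rw [integral_div, integral_add (hf.const_mul t) (hg.div_const t),
            integral_const_mul, integral_div]
  set I := ∫ x, |f x * g x| ∂μ with hI
  by_contra hcon
  push_neg at hcon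
  have hI0 : 0 < I := lt_of_le_of_lt (by positivity) hcon
  rcases eq_or_lt_of_le hA0 with hAz | hApos
  · rcases eq_or_lt_of_le hB0 with hBz | hBpos
    · have := key 1 one_pos
      rw [← hAz, ← hBz] at this
      simp at this
      linarith
    · have := key (B / I) (div_pos hBpos hI0)
      rw [← hAz] at this
      have heq : B / I * 0 + B / (B / I) = I := by
        field_simp
        ring
      rw [heq] at this
      linarith
  · rcases eq_or_lt_of_le hB0 with hBz | hBpos
    · have := key (I / A) (div_pos hI0 hApos)
      rw [← hBz] at this
      have heq : I / A * A + 0 / (I / A) = I := by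
        field_simp
        ring
      rw [heq] at this
      linarith
    · have := key (Real.sqrt B / Real.sqrt A)
        (div_pos (Real.sqrt_pos.2 hBpos) (Real.sqrt_pos.2 hApos))
      have hsA : Real.sqrt A * Real.sqrt A = A := Real.mul_self_sqrt hA0
      have hsB : Real.sqrt B * Real.sqrt B = B := Real.mul_self_sqrt hB0
      have hsA0 : (0:ℝ) < Real.sqrt A := Real.sqrt_pos.2 hApos
      have hsB0 : (0:ℝ) < Real.sqrt B := Real.sqrt_pos.2 hBpos
      have heq : (Real.sqrt B / Real.sqrt A * A + B / (Real.sqrt B / Real.sqrt A)) / 2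
          = Real.sqrt A * Real.sqrt B := by
        field_simp
        nlinarith [hsA, hsB]
      rw [heq] at this
      linarith


section Helpers
variable {F : ℝ×ℝ → ℝ}

lemma sliceContX (hF : Continuous F) (y : ℝ) : Continuous fun x => F (x, y) :=
  hF.comp (continuous_id.prodMk continuous_const)

lemma sliceContY (hF : Continuous F) (x : ℝ) : Continuous fun y => F (x, y) :=
  hF.comp (continuous_const.prodMk continuous_id)

lemma sliceDerivX (hF : Differentiable ℝ F) (x y : ℝ) :
    HasDerivAt (fun t => F (t, y)) (dx F (x, y)) x := by
  have h1 : HasDerivAt (fun t : ℝ => (t, y)) ((1:ℝ), (0:ℝ)) x :=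
    (hasDerivAt_id x).prodMk (hasDerivAt_const x y)
  have h2 := (hF (x,y)).hasFDerivAt.comp_hasDerivAt x h1
  exact h2

lemma dxContDiff (hF : ContDiff ℝ 2 F) : ContDiff ℝ 1 (dx F) := by
  have h := hF.fderiv_right (m := 1) (by norm_num)
  exact h.clm_apply contDiff_const

lemma dxCont (hF : ContDiff ℝ 1 F) : Continuous (dx F) := by
  have h := hF.fderiv_right (m := 0) (by norm_num)
  exact (h.clm_apply contDiff_const).continuous

end Helpers

/-- convert interval integral to Ioo set integral -/
lemma intervalToIoo (f : ℝ → ℝ) (a b : ℝ) (hab : a ≤ b) :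
    ∫ x in a..b, f x = ∫ x in Ioo a b, f x := by
  rw [intervalIntegral.integral_of_le hab, integral_Ioc_eq_integral_Ioo]

/-- The key algebraic absorption lemma. -/
lemma algLemma (M S Z : ℝ) (hM : 0 ≤ M) (hS : 0 ≤ S) (hZ : 0 ≤ Z)
    (h : S ≤ 2*Real.sqrt (M + 2*Real.sqrt M*Real.sqrt S) *
      Real.sqrt (S + 2*Real.sqrt S*Real.sqrt Z) + Real.sqrt M*Real.sqrt Z) :
    S ≤ 200000*(M + Real.sqrt M * Real.sqrt Z) := by
  set α := Real.sqrt (Real.sqrt M) with hα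
  set β := Real.sqrt (Real.sqrt S) with hβ
  set γ := Real.sqrt (Real.sqrt Z) with hγ
  have hα0 : 0 ≤ α := Real.sqrt_nonneg _
  have hβ0 : 0 ≤ β := Real.sqrt_nonneg _
  have hγ0 : 0 ≤ γ := Real.sqrt_nonneg _
  have hα2 : α^2 = Real.sqrt M := Real.sq_sqrt (Real.sqrt_nonneg M)
  have hβ2 : β^2 = Real.sqrt S := Real.sq_sqrt (Real.sqrt_nonneg S)
  have hγ2 : γ^2 = Real.sqrt Z := Real.sq_sqrt (Real.sqrt_nonneg Z)
  have hα4 : α^4 = M := by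
    have : (α^2)^2 = M := by rw [hα2]; exact Real.sq_sqrt hM
    nlinarith [this]
  have hβ4 : β^4 = S := by
    have : (β^2)^2 = S := by rw [hβ2]; exact Real.sq_sqrt hS
    nlinarith [this]
  have hγ4 : γ^4 = Z := by
    have : (γ^2)^2 = Z := by rw [hγ2]; exact Real.sq_sqrt hZ
    nlinarith [this]
  -- bound the square roots
  have h1 : Real.sqrt (M + 2*Real.sqrt M*Real.sqrt S) ≤ α^2 + 2*α*β := by
    have hle : M + 2*Real.sqrt M*Real.sqrt S ≤ (α^2 + 2*α*β)^2 := by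
      rw [← hα2, ← hβ2, ← hα4]
      nlinarith [mul_nonneg (mul_nonneg hα0 hα0) (mul_nonneg hα0 hβ0),
        mul_nonneg (mul_nonneg hα0 hα0) (mul_nonneg hβ0 hβ0)]
    calc Real.sqrt (M + 2*Real.sqrt M*Real.sqrt S) ≤ Real.sqrt ((α^2 + 2*α*β)^2) :=
          Real.sqrt_le_sqrt hle
      _ = α^2 + 2*α*β := Real.sqrt_sq (by positivity)
  have h2 : Real.sqrt (S + 2*Real.sqrt S*Real.sqrt Z) ≤ β^2 + 2*β*γ := by
    have hle : S + 2*Real.sqrt S*Real.sqrt Z ≤ (β^2 + 2*β*γ)^2 := by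
      rw [← hβ2, ← hγ2, ← hβ4]
      nlinarith [mul_nonneg (mul_nonneg hβ0 hβ0) (mul_nonneg hβ0 hγ0),
        mul_nonneg (mul_nonneg hβ0 hβ0) (mul_nonneg hγ0 hγ0)]
    calc Real.sqrt (S + 2*Real.sqrt S*Real.sqrt Z) ≤ Real.sqrt ((β^2 + 2*β*γ)^2) :=
          Real.sqrt_le_sqrt hle
      _ = β^2 + 2*β*γ := Real.sqrt_sq (by positivity)
  have hmain : β^4 ≤ 2*(α^2 + 2*α*β)*(β^2 + 2*β*γ) + α^2*γ^2 := by
    have hprod : 2*Real.sqrt (M + 2*Real.sqrt M*Real.sqrt S) *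
        Real.sqrt (S + 2*Real.sqrt S*Real.sqrt Z) ≤ 2*(α^2 + 2*α*β)*(β^2 + 2*β*γ) := by
      have := mul_le_mul h1 h2 (Real.sqrt_nonneg _) (by positivity)
      linarith
    have hmz : Real.sqrt M * Real.sqrt Z = α^2*γ^2 := by rw [hα2, hγ2]
    rw [hmz] at h
    rw [hβ4]
    linarith [h, hprod]
  -- polynomial absorption
  have t1 : 2*α^2*β^2 ≤ β^4/8 + 8*α^4 := by nlinarith [sq_nonneg (β^2 - 8*α^2)]
  have t2 : 4*α^2*β*γ ≤ 2*α^2*β^2 + 2*α^2*γ^2 := by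
    nlinarith [mul_nonneg (sq_nonneg α) (sq_nonneg (β - γ))]
  have t3a : 4*α*β^3 ≤ β^4/16 + 64*α^2*β^2 := by nlinarith [sq_nonneg (β^2 - 32*α*β)]
  have t3b : 64*α^2*β^2 ≤ β^4/64 + 65536*α^4 := by nlinarith [sq_nonneg (β^2 - 2048*α^2)]
  have t4 : 8*α*β^2*γ ≤ β^4/16 + 256*α^2*γ^2 := by nlinarith [sq_nonneg (β^2 - 64*α*γ)]
  have hmain' : β^4 ≤ 2*α^2*β^2 + 4*α^2*β*γ + 4*α*β^3 + 8*α*β^2*γ + α^2*γ^2 := by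
    nlinarith [hmain]
  have hα4n : (0:ℝ) ≤ α^4 := by positivity
  have hagn : (0:ℝ) ≤ α^2*γ^2 := by positivity
  have hpoly : β^4 ≤ 200000*(α^4 + α^2*γ^2) := by
    linarith [hmain', t1, t2, t3a, t3b, t4, hα4n, hagn]
  calc S = β^4 := hβ4.symm
    _ ≤ 200000*(α^4 + α^2*γ^2) := hpoly
    _ = 200000*(M + Real.sqrt M*Real.sqrt Z) := by rw [hα4, hα2, hγ2]

lemma sliceDerivY {F : ℝ×ℝ → ℝ} (hF : Differentiable ℝ F) (x y : ℝ) :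
    HasDerivAt (fun t => F (x, t)) (dy F (x, y)) y := by
  have h1 : HasDerivAt (fun t : ℝ => ((x:ℝ), t)) ((0:ℝ), (1:ℝ)) y :=
    (hasDerivAt_const y x).prodMk (hasDerivAt_id y)
  have h2 := (hF (x,y)).hasFDerivAt.comp_hasDerivAt y h1
  exact h2

lemma cont1dIntegrableOnIoc {f : ℝ → ℝ} (hf : Continuous f) (a b : ℝ) :
    IntegrableOn f (Ioc a b) :=
  (hf.continuousOn.integrableOn_compact isCompact_Icc).mono_set Ioc_subset_Icc_self

lemma innerIntIntegrableY {F : ℝ×ℝ → ℝ} (hF : Continuous F) (a b c d : ℝ) :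
    IntegrableOn (fun y => ∫ x in Ioo a b, F (x, y)) (Ioo c d) := by
  have h1 : IntegrableOn (fun p : ℝ×ℝ => F (p.2, p.1)) (Ioo c d ×ˢ Ioo a b) :=
    contIntegrableOn (hF.comp (continuous_snd.prodMk continuous_fst)) c d a b
  rw [IntegrableOn, show (volume : Measure (ℝ×ℝ)) = (volume : Measure ℝ).prod volume from
    Measure.volume_eq_prod ℝ ℝ, ← Measure.prod_restrict] at h1
  exact h1.integral_prod_left

lemma absIntervalLe {D : ℝ→ℝ} (hD : Continuous D) (p q x e : ℝ)
    (hx : x ∈ Icc p q) (he : e ∈ Icc p q) :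
    |∫ t in x..e, D t| ≤ ∫ t in Ioo p q, |D t| := by
  have habs : ∀ u v : ℝ, p ≤ u → v ≤ q →
      |∫ t in Ioc u v, D t| ≤ ∫ t in Ioo p q, |D t| := by
    intro u v hu hv
    calc |∫ t in Ioc u v, D t| ≤ ∫ t in Ioc u v, |D t| := by
          simpa [Real.norm_eq_abs] using
            norm_integral_le_integral_norm (μ := volume.restrict (Ioc u v)) D
      _ ≤ ∫ t in Ioc p q, |D t| := by
          apply setIntegral_mono_set (cont1dIntegrableOnIoc hD.abs p q)
            (Filter.Eventually.of_forall (fun t => abs_nonneg _))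
          exact (Ioc_subset_Ioc hu hv).eventuallyLE
      _ = ∫ t in Ioo p q, |D t| := integral_Ioc_eq_integral_Ioo
  rcases le_total x e with h | h
  · rw [intervalIntegral.integral_of_le h]
    exact habs x e hx.1 he.2
  · rw [intervalIntegral.integral_symm, abs_neg, intervalIntegral.integral_of_le h]
    exact habs e x he.1 hx.2

lemma traceLemma (p q c d : ℝ) (hpq : q = p + 1) {φ : ℝ×ℝ → ℝ} (hφ : ContDiff ℝ 1 φ)
    (e : ℝ) (he : e ∈ Icc p q) :
    ∫ y in Ioo c d, (φ (e, y))^2 ≤ (∫ pt in Ioo p q ×ˢ Ioo c d, (φ pt)^2)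
      + 2 * ∫ pt in Ioo p q ×ˢ Ioo c d, |φ pt * dx φ pt| := by
  have hφc : Continuous φ := hφ.continuous
  have hφx : Continuous (dx φ) := dxCont hφ
  have hφd : Differentiable ℝ φ := hφ.differentiable (by norm_num)
  have hmeas1 : (volume (Ioo p q)).toReal = 1 := by
    rw [Real.volume_Ioo, hpq]; simp
  have hpt : ∀ y : ℝ, (φ (e, y))^2 ≤ (∫ x in Ioo p q, (φ (x, y))^2)
      + 2 * ∫ x in Ioo p q, |φ (x, y) * dx φ (x, y)| := by
    intro y
    set W := ∫ x in Ioo p q, |φ (x, y) * dx φ (x, y)| with hWdef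
    have hx : ∀ x ∈ Ioo p q, (φ (e, y))^2 ≤ (φ (x, y))^2 + 2*W := by
      intro x hxm
      have hderiv : ∀ t ∈ uIcc x e, HasDerivAt (fun s => φ (s, y) * φ (s, y))
          (2*(φ (t, y) * dx φ (t, y))) t := by
        intro t _
        have h := (sliceDerivX hφd t y).fun_mul (sliceDerivX hφd t y)
        exact h.congr_deriv (by ring)
      have hcont : Continuous fun t => 2*(φ (t, y) * dx φ (t, y)) :=
        continuous_const.mul ((sliceContX hφc y).mul (sliceContX hφx y))
      have hftc := intervalIntegral.integral_eq_sub_of_hasDerivAt hderiv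
        (hcont.intervalIntegrable x e)
      have habs := absIntervalLe hcont p q x e ⟨hxm.1.le, hxm.2.le⟩ he
      have habs2 : ∫ t in Ioo p q, |2*(φ (t, y) * dx φ (t, y))| = 2*W := by
        rw [hWdef, ← integral_const_mul]
        apply setIntegral_congr_fun measurableSet_Ioo
        intro t _
        simp only [abs_mul, abs_two]
      rw [habs2] at habs
      have h1 : φ (e,y) * φ (e,y) - φ (x,y) * φ (x,y) ≤ 2*W := by
        rw [hftc] at habs
        calc φ (e,y) * φ (e,y) - φ (x,y) * φ (x,y)
            ≤ |φ (e,y) * φ (e,y) - φ (x,y) * φ (x,y)| := le_abs_self _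
          _ ≤ 2*W := habs
      rw [pow_two, pow_two]
      linarith
    have havg : (φ (e,y))^2 = ∫ (_x : ℝ) in Ioo p q, (φ (e,y))^2 := by
      rw [setIntegral_const, measureReal_def, hmeas1, one_smul]
    rw [havg]
    have hmono := setIntegral_mono_on
      (cont1dIntegrableOn continuous_const p q)
      (cont1dIntegrableOn (((sliceContX hφc y).pow 2).add continuous_const) p q)
      measurableSet_Ioo hx
    calc ∫ (_x : ℝ) in Ioo p q, (φ (e,y))^2
        ≤ ∫ x in Ioo p q, ((φ (x,y))^2 + 2*W) := hmono
      _ = (∫ x in Ioo p q, (φ (x,y))^2) + 2*W := by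
          rw [integral_add (cont1dIntegrableOn ((sliceContX hφc y).fun_pow 2) p q)
            (cont1dIntegrableOn continuous_const p q), setIntegral_const, measureReal_def, hmeas1, one_smul]
  -- integrate over y
  have hLHSint : IntegrableOn (fun y => (φ (e,y))^2) (Ioo c d) :=
    cont1dIntegrableOn ((sliceContY hφc e).pow 2) c d
  have hR1int : IntegrableOn (fun y => ∫ x in Ioo p q, (φ (x,y))^2) (Ioo c d) :=
    innerIntIntegrableY (hφc.pow 2) p q c d
  have hR2int : IntegrableOn (fun y => ∫ x in Ioo p q, |φ (x,y) * dx φ (x,y)|) (Ioo c d) :=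
    innerIntIntegrableY ((hφc.mul hφx).abs) p q c d
  calc ∫ y in Ioo c d, (φ (e,y))^2
      ≤ ∫ y in Ioo c d, ((∫ x in Ioo p q, (φ (x,y))^2)
          + 2 * ∫ x in Ioo p q, |φ (x,y) * dx φ (x,y)|) := by
        apply setIntegral_mono_on hLHSint _ measurableSet_Ioo (fun y _ => hpt y)
        exact hR1int.add (hR2int.const_mul 2)
    _ = (∫ y in Ioo c d, ∫ x in Ioo p q, (φ (x,y))^2)
        + 2 * ∫ y in Ioo c d, ∫ x in Ioo p q, |φ (x,y) * dx φ (x,y)| := by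
        rw [integral_add hR1int (hR2int.const_mul 2), integral_const_mul]
    _ = (∫ pt in Ioo p q ×ˢ Ioo c d, (φ pt)^2)
        + 2 * ∫ pt in Ioo p q ×ˢ Ioo c d, |φ pt * dx φ pt| := by
        rw [← prodInt₂ (hφc.fun_pow 2) p q c d, ← prodInt₂ ((hφc.fun_mul hφx).abs) p q c d]

lemma coreGN (a b c d : ℝ) (hab : a + 1 ≤ b) {G : ℝ×ℝ → ℝ} (hG : ContDiff ℝ 2 G) :
    (∫ pt in Ioo a b ×ˢ Ioo c d, (dx G pt)^2) ≤
      200000 * ((∫ pt in Ioo a b ×ˢ Ioo c d, (G pt)^2) +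
        Real.sqrt (∫ pt in Ioo a b ×ˢ Ioo c d, (G pt)^2) *
        Real.sqrt (∫ pt in Ioo a b ×ˢ Ioo c d, (dx (dx G) pt)^2)) := by
  have hG1 : ContDiff ℝ 1 (dx G) := dxContDiff hG
  have hcG : Continuous G := hG.continuous
  have hcGx : Continuous (dx G) := hG1.continuous
  have hcGxx : Continuous (dx (dx G)) := dxCont hG1
  have hGd : Differentiable ℝ G := hG.differentiable (by norm_num)
  have hGxd : Differentiable ℝ (dx G) := hG1.differentiable (by norm_num)
  have hab' : a ≤ b := by linarith
  set Q := Ioo a b ×ˢ Ioo c d with hQ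
  set M := ∫ pt in Q, (G pt)^2 with hM
  set S := ∫ pt in Q, (dx G pt)^2 with hS
  set Z := ∫ pt in Q, (dx (dx G) pt)^2 with hZ
  have hQm : MeasurableSet Q := measurableSet_Ioo.prod measurableSet_Ioo
  have hM0 : 0 ≤ M := setIntegral_nonneg hQm (fun _ _ => sq_nonneg _)
  have hS0 : 0 ≤ S := setIntegral_nonneg hQm (fun _ _ => sq_nonneg _)
  have hZ0 : 0 ≤ Z := setIntegral_nonneg hQm (fun _ _ => sq_nonneg _)
  -- integration by parts in x, for each fixed y
  have hslice : ∀ y : ℝ, ∫ x in Ioo a b, (dx G (x,y))^2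
      = G (b,y) * dx G (b,y) - G (a,y) * dx G (a,y)
        - ∫ x in Ioo a b, G (x,y) * dx (dx G) (x,y) := by
    intro y
    have hderiv : ∀ t ∈ uIcc a b, HasDerivAt (fun s => G (s,y) * dx G (s,y))
        ((dx G (t,y))^2 + G (t,y) * dx (dx G) (t,y)) t := by
      intro t _
      have h := (sliceDerivX hGd t y).fun_mul (sliceDerivX hGxd t y)
      exact h.congr_deriv (by rw [pow_two])
    have hint1 : IntervalIntegrable (fun t => (dx G (t,y))^2) volume a b :=
      ((sliceContX hcGx y).pow 2).intervalIntegrable a b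
    have hint2 : IntervalIntegrable (fun t => G (t,y) * dx (dx G) (t,y)) volume a b :=
      ((sliceContX hcG y).mul (sliceContX hcGxx y)).intervalIntegrable a b
    have hftc := intervalIntegral.integral_eq_sub_of_hasDerivAt hderiv (hint1.add hint2)
    rw [intervalIntegral.integral_add hint1 hint2] at hftc
    rw [← intervalToIoo _ a b hab', ← intervalToIoo _ a b hab']
    linarith [hftc]
  -- Cauchy-Schwarz on Q for |G * Gxx| and friends
  have csQ : ∀ (f g : ℝ×ℝ → ℝ), Continuous f → Continuous g →
      (∫ pt in Q, |f pt * g pt|) ≤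
        Real.sqrt (∫ pt in Q, (f pt)^2) * Real.sqrt (∫ pt in Q, (g pt)^2) := by
    intro f g hf hg
    exact csIntegral (volume.restrict Q) f g
      (contIntegrableOn (hf.pow 2) a b c d)
      (contIntegrableOn (hg.pow 2) a b c d)
      (contIntegrableOn ((hf.mul hg).abs) a b c d)
  -- trace bounds at the two endpoints
  have hwinb : Ioo (b-1) b ×ˢ Ioo c d ⊆ Q := by
    apply prod_mono _ (subset_refl _)
    exact Ioo_subset_Ioo (by linarith) le_rfl
  have hwina : Ioo a (a+1) ×ˢ Ioo c d ⊆ Q := by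
    apply prod_mono _ (subset_refl _)
    exact Ioo_subset_Ioo le_rfl (by linarith)
  have hwmono : ∀ (f : ℝ×ℝ → ℝ), Continuous f → (∀ pt, 0 ≤ f pt) →
      ∀ (R : Set (ℝ×ℝ)), R ⊆ Q → (∫ pt in R, f pt) ≤ ∫ pt in Q, f pt := by
    intro f hf hf0 R hR
    apply setIntegral_mono_set (contIntegrableOn hf a b c d)
      (Filter.Eventually.of_forall hf0) hR.eventuallyLE
  have htraceG : ∀ e : ℝ, (e = a ∨ e = b) →
      (∫ y in Ioo c d, (G (e,y))^2) ≤ M + 2*(Real.sqrt M * Real.sqrt S) := by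
    intro e he
    have h2 : (∫ pt in Q, |G pt * dx G pt|) ≤ Real.sqrt M * Real.sqrt S :=
      csQ G (dx G) hcG hcGx
    have hm1 := hwmono (fun pt => (G pt)^2) (hcG.pow 2) (fun pt => sq_nonneg _)
    have hm2 := hwmono (fun pt => |G pt * dx G pt|) ((hcG.mul hcGx).abs)
      (fun pt => abs_nonneg _)
    rcases he with he | he
    · have h1 := traceLemma a (a+1) c d rfl (hG.of_le (by norm_num)) e
        ⟨by rw [he], by rw [he]; linarith⟩
      have hm1' := hm1 _ hwina
      have hm2' := hm2 _ hwina
      linarith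
    · have h1 := traceLemma (b-1) b c d (by ring) (hG.of_le (by norm_num)) e
        ⟨by rw [he]; linarith, by rw [he]⟩
      have hm1' := hm1 _ hwinb
      have hm2' := hm2 _ hwinb
      linarith
  have htraceGx : ∀ e : ℝ, (e = a ∨ e = b) →
      (∫ y in Ioo c d, (dx G (e,y))^2) ≤ S + 2*(Real.sqrt S * Real.sqrt Z) := by
    intro e he
    have h2 : (∫ pt in Q, |dx G pt * dx (dx G) pt|) ≤ Real.sqrt S * Real.sqrt Z :=
      csQ (dx G) (dx (dx G)) hcGx hcGxx
    have hm1 := hwmono (fun pt => (dx G pt)^2) (hcGx.pow 2) (fun pt => sq_nonneg _)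
    have hm2 := hwmono (fun pt => |dx G pt * dx (dx G) pt|) ((hcGx.mul hcGxx).abs)
      (fun pt => abs_nonneg _)
    rcases he with he | he
    · have h1 := traceLemma a (a+1) c d rfl hG1 e ⟨by rw [he], by rw [he]; linarith⟩
      have hm1' := hm1 _ hwina
      have hm2' := hm2 _ hwina
      linarith
    · have h1 := traceLemma (b-1) b c d (by ring) hG1 e ⟨by rw [he]; linarith, by rw [he]⟩
      have hm1' := hm1 _ hwinb
      have hm2' := hm2 _ hwinb
      linarith
  -- boundary terms via Cauchy-Schwarz in y
  have hbdry : ∀ e : ℝ, (e = a ∨ e = b) →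
      (∫ y in Ioo c d, |G (e,y) * dx G (e,y)|) ≤
        Real.sqrt (M + 2*(Real.sqrt M * Real.sqrt S)) *
        Real.sqrt (S + 2*(Real.sqrt S * Real.sqrt Z)) := by
    intro e he
    have hcs := csIntegral (volume.restrict (Ioo c d)) (fun y => G (e,y)) (fun y => dx G (e,y))
      (cont1dIntegrableOn ((sliceContY hcG e).pow 2) c d)
      (cont1dIntegrableOn ((sliceContY hcGx e).pow 2) c d)
      (cont1dIntegrableOn (((sliceContY hcG e).mul (sliceContY hcGx e)).abs) c d)
    calc (∫ y in Ioo c d, |G (e,y) * dx G (e,y)|)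
        ≤ Real.sqrt (∫ y in Ioo c d, (G (e,y))^2) *
          Real.sqrt (∫ y in Ioo c d, (dx G (e,y))^2) := hcs
      _ ≤ Real.sqrt (M + 2*(Real.sqrt M * Real.sqrt S)) *
          Real.sqrt (S + 2*(Real.sqrt S * Real.sqrt Z)) := by
          apply mul_le_mul (Real.sqrt_le_sqrt (htraceG e he))
            (Real.sqrt_le_sqrt (htraceGx e he)) (Real.sqrt_nonneg _) (Real.sqrt_nonneg _)
  -- assemble
  have hT1int : IntegrableOn (fun y => G (b,y) * dx G (b,y)) (Ioo c d) :=
    cont1dIntegrableOn ((sliceContY hcG b).mul (sliceContY hcGx b)) c d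
  have hT2int : IntegrableOn (fun y => G (a,y) * dx G (a,y)) (Ioo c d) :=
    cont1dIntegrableOn ((sliceContY hcG a).mul (sliceContY hcGx a)) c d
  have hWint : IntegrableOn (fun y => ∫ x in Ioo a b, G (x,y) * dx (dx G) (x,y)) (Ioo c d) :=
    innerIntIntegrableY (hcG.mul hcGxx) a b c d
  have hWabsint : IntegrableOn (fun y => ∫ x in Ioo a b, |G (x,y) * dx (dx G) (x,y)|) (Ioo c d) :=
    innerIntIntegrableY ((hcG.mul hcGxx).abs) a b c d
  have hSrw : S = ∫ y in Ioo c d, (G (b,y) * dx G (b,y) - G (a,y) * dx G (a,y)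
      - ∫ x in Ioo a b, G (x,y) * dx (dx G) (x,y)) := by
    rw [hS, hQ, prodInt₂ (hcGx.fun_pow 2) a b c d]
    exact setIntegral_congr_fun measurableSet_Ioo (fun y _ => hslice y)
  have habs1 : (∫ y in Ioo c d, G (b,y) * dx G (b,y)) ≤
      ∫ y in Ioo c d, |G (b,y) * dx G (b,y)| := by
    apply integral_mono hT1int hT1int.abs (fun y => le_abs_self _)
  have habs2 : -(∫ y in Ioo c d, G (a,y) * dx G (a,y)) ≤
      ∫ y in Ioo c d, |G (a,y) * dx G (a,y)| := by
    rw [← integral_neg]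
    exact integral_mono hT2int.neg hT2int.abs (fun y => neg_le_abs _)
  have habs3 : -(∫ y in Ioo c d, ∫ x in Ioo a b, G (x,y) * dx (dx G) (x,y)) ≤
      ∫ y in Ioo c d, ∫ x in Ioo a b, |G (x,y) * dx (dx G) (x,y)| := by
    rw [← integral_neg]
    apply integral_mono hWint.neg hWabsint
    intro y
    calc -(∫ x in Ioo a b, G (x,y) * dx (dx G) (x,y))
        ≤ |∫ x in Ioo a b, G (x,y) * dx (dx G) (x,y)| := neg_le_abs _
      _ ≤ ∫ x in Ioo a b, |G (x,y) * dx (dx G) (x,y)| := by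
          have := norm_integral_le_integral_norm
            (μ := volume.restrict (Ioo a b)) (fun x => G (x,y) * dx (dx G) (x,y))
          simpa only [Real.norm_eq_abs] using this
  have hWcs : (∫ y in Ioo c d, ∫ x in Ioo a b, |G (x,y) * dx (dx G) (x,y)|)
      ≤ Real.sqrt M * Real.sqrt Z := by
    rw [← prodInt₂ ((hcG.fun_mul hcGxx).abs) a b c d]
    exact csQ G (dx (dx G)) hcG hcGxx
  have hsplit : S ≤ (∫ y in Ioo c d, |G (b,y) * dx G (b,y)|)
      + (∫ y in Ioo c d, |G (a,y) * dx G (a,y)|) + Real.sqrt M * Real.sqrt Z := by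
    have h12 : Integrable (fun y => G (b,y) * dx G (b,y) - G (a,y) * dx G (a,y))
        (volume.restrict (Ioo c d)) := hT1int.sub hT2int
    rw [hSrw, integral_sub h12 hWint, integral_sub hT1int hT2int]
    linarith [habs1, habs2, habs3, hWcs]
  have hfinal : S ≤ 2*Real.sqrt (M + 2*Real.sqrt M*Real.sqrt S) *
      Real.sqrt (S + 2*Real.sqrt S*Real.sqrt Z) + Real.sqrt M*Real.sqrt Z := by
    have hb1 := hbdry b (Or.inr rfl)
    have hb2 := hbdry a (Or.inl rfl)
    have heq1 : M + 2*(Real.sqrt M * Real.sqrt S) = M + 2*Real.sqrt M*Real.sqrt S := by ring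
    have heq2 : S + 2*(Real.sqrt S * Real.sqrt Z) = S + 2*Real.sqrt S*Real.sqrt Z := by ring
    rw [heq1, heq2] at hb1 hb2
    linarith [hsplit, hb1, hb2]
  exact algLemma M S Z hM0 hS0 hZ0 hfinal

lemma dyContDiff {F : ℝ×ℝ → ℝ} (hF : ContDiff ℝ 2 F) : ContDiff ℝ 1 (dy F) := by
  have h := hF.fderiv_right (m := 1) (by norm_num)
  exact h.clm_apply contDiff_const

lemma dyCont {F : ℝ×ℝ → ℝ} (hF : ContDiff ℝ 1 F) : Continuous (dy F) := by
  have h := hF.fderiv_right (m := 0) (by norm_num)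
  exact (h.clm_apply contDiff_const).continuous

lemma dxSwap {G : ℝ×ℝ→ℝ} (hG : Differentiable ℝ G) :
    ∀ p : ℝ×ℝ, dx (fun q : ℝ×ℝ => G (q.2, q.1)) p = dy G (p.2, p.1) := by
  intro p
  have hσd : HasFDerivAt (fun q : ℝ×ℝ => (q.2, q.1))
      ((ContinuousLinearMap.snd ℝ ℝ ℝ).prod (ContinuousLinearMap.fst ℝ ℝ ℝ)) p :=
    ((ContinuousLinearMap.snd ℝ ℝ ℝ).prod (ContinuousLinearMap.fst ℝ ℝ ℝ)).hasFDerivAt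
  have h := (hG (p.2, p.1)).hasFDerivAt.comp p hσd
  have h' : HasFDerivAt (fun q : ℝ×ℝ => G (q.2, q.1))
      ((fderiv ℝ G (p.2, p.1)).comp
        ((ContinuousLinearMap.snd ℝ ℝ ℝ).prod (ContinuousLinearMap.fst ℝ ℝ ℝ))) p := h
  have : dx (fun q : ℝ×ℝ => G (q.2, q.1)) p
      = ((fderiv ℝ G (p.2, p.1)).comp
        ((ContinuousLinearMap.snd ℝ ℝ ℝ).prod (ContinuousLinearMap.fst ℝ ℝ ℝ))) (1, 0) := by
    rw [dx, h'.fderiv]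
  rw [this]
  rfl

lemma swapIntegral (F : ℝ×ℝ→ℝ) (s t : Set ℝ) :
    ∫ p in s ×ˢ t, F p = ∫ p in t ×ˢ s, F (p.2, p.1) := by
  have hmp : MeasurePreserving (Prod.swap : ℝ×ℝ → ℝ×ℝ)
      ((volume : Measure ℝ).prod volume) ((volume : Measure ℝ).prod volume) :=
    Measure.measurePreserving_swap
  have hemb : MeasurableEmbedding (Prod.swap : ℝ×ℝ → ℝ×ℝ) :=
    (MeasurableEquiv.prodComm (α := ℝ) (β := ℝ)).measurableEmbedding
  have h := hmp.setIntegral_preimage_emb hemb F (s ×ˢ t)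
  rw [show (volume : Measure (ℝ×ℝ)) = ((volume : Measure ℝ).prod volume) from
    Measure.volume_eq_prod ℝ ℝ, ← h, Set.preimage_swap_prod]
  rfl

lemma coreGNy (a b c d : ℝ) (hcd : c + 1 ≤ d) {G : ℝ×ℝ → ℝ} (hG : ContDiff ℝ 2 G) :
    (∫ pt in Ioo a b ×ˢ Ioo c d, (dy G pt)^2) ≤
      200000 * ((∫ pt in Ioo a b ×ˢ Ioo c d, (G pt)^2) +
        Real.sqrt (∫ pt in Ioo a b ×ˢ Ioo c d, (G pt)^2) *
        Real.sqrt (∫ pt in Ioo a b ×ˢ Ioo c d, (dy (dy G) pt)^2)) := by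
  set H : ℝ×ℝ→ℝ := fun q => G (q.2, q.1) with hH
  have hHc : ContDiff ℝ 2 H := hG.comp (contDiff_snd.prodMk contDiff_fst)
  have h1 : ∀ p : ℝ×ℝ, dx H p = dy G (p.2, p.1) :=
    dxSwap (hG.differentiable (by norm_num))
  have hfun : dx H = fun q : ℝ×ℝ => dy G (q.2, q.1) := funext h1
  have h2 : ∀ p : ℝ×ℝ, dx (dx H) p = dy (dy G) (p.2, p.1) := by
    rw [hfun]
    exact dxSwap ((dyContDiff hG).differentiable (by norm_num))
  have e1 : (∫ pt in Ioo a b ×ˢ Ioo c d, (dy G pt)^2)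
      = ∫ pt in Ioo c d ×ˢ Ioo a b, (dx H pt)^2 := by
    rw [swapIntegral (fun p => (dy G p)^2) (Ioo a b) (Ioo c d)]
    exact setIntegral_congr_fun (measurableSet_Ioo.prod measurableSet_Ioo)
      (fun p _ => by rw [h1 p])
  have e2 : (∫ pt in Ioo a b ×ˢ Ioo c d, (G pt)^2)
      = ∫ pt in Ioo c d ×ˢ Ioo a b, (H pt)^2 := by
    rw [swapIntegral (fun p => (G p)^2) (Ioo a b) (Ioo c d)]
  have e3 : (∫ pt in Ioo a b ×ˢ Ioo c d, (dy (dy G) pt)^2)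
      = ∫ pt in Ioo c d ×ˢ Ioo a b, (dx (dx H) pt)^2 := by
    rw [swapIntegral (fun p => (dy (dy G) p)^2) (Ioo a b) (Ioo c d)]
    exact setIntegral_congr_fun (measurableSet_Ioo.prod measurableSet_Ioo)
      (fun p _ => by rw [h2 p])
  rw [e1, e2, e3]
  exact coreGN c d a b hcd hHc

lemma innerIntIntegrableX {F : ℝ×ℝ → ℝ} (hF : Continuous F) (a b c d : ℝ) :
    IntegrableOn (fun x => ∫ y in Ioo c d, F (x, y)) (Ioo a b) := by
  have h1 : IntegrableOn F (Ioo a b ×ˢ Ioo c d) := contIntegrableOn hF a b c d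
  rw [IntegrableOn, show (volume : Measure (ℝ×ℝ)) = (volume : Measure ℝ).prod volume from
    Measure.volume_eq_prod ℝ ℝ, ← Measure.prod_restrict] at h1
  exact h1.integral_prod_left

lemma sqIntBound (f f' : ℝ→ℝ) (hf : Continuous f) (hc : Continuous f')
    (hbd : ∀ y ∈ Ioo (0:ℝ) 1, |f y| ≤ ∫ t in Ioo (0:ℝ) 1, |f' t|) :
    ∫ y in Ioo (0:ℝ) 1, (f y)^2 ≤ ∫ y in Ioo (0:ℝ) 1, (f' y)^2 := by
  set J := ∫ t in Ioo (0:ℝ) 1, |f' t| with hJ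
  have hJ0 : 0 ≤ J := setIntegral_nonneg measurableSet_Ioo (fun _ _ => abs_nonneg _)
  have hQ0 : 0 ≤ ∫ y in Ioo (0:ℝ) 1, (f' y)^2 :=
    setIntegral_nonneg measurableSet_Ioo (fun _ _ => sq_nonneg _)
  have hmeas1 : (volume (Ioo (0:ℝ) 1)).toReal = 1 := by rw [Real.volume_Ioo]; simp
  have hJle : J ≤ Real.sqrt (∫ y in Ioo (0:ℝ) 1, (f' y)^2) := by
    have hcs := csIntegral (volume.restrict (Ioo (0:ℝ) 1)) f' (fun _ => (1:ℝ))
      (cont1dIntegrableOn (hc.pow 2) 0 1)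
      (cont1dIntegrableOn (continuous_const.pow 2) 0 1)
      (cont1dIntegrableOn ((hc.mul continuous_const).abs) 0 1)
    have e1 : ∫ t in Ioo (0:ℝ) 1, |f' t * 1| = J := by
      rw [hJ]
      exact setIntegral_congr_fun measurableSet_Ioo (fun t _ => by rw [mul_one])
    have e2 : (∫ t in Ioo (0:ℝ) 1, ((1:ℝ))^2) = 1 := by
      rw [setIntegral_const]
      simp [hmeas1]
    rw [e1, e2, Real.sqrt_one, mul_one] at hcs
    exact hcs
  have hpt : ∀ y ∈ Ioo (0:ℝ) 1, (f y)^2 ≤ ∫ t in Ioo (0:ℝ) 1, (f' t)^2 := by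
    intro y hy
    have h1 : (f y)^2 ≤ J^2 := by
      rw [← sq_abs (f y)]
      exact pow_le_pow_left₀ (abs_nonneg _) (hbd y hy) 2
    have h2 : J^2 ≤ (Real.sqrt (∫ t in Ioo (0:ℝ) 1, (f' t)^2))^2 :=
      pow_le_pow_left₀ hJ0 hJle 2
    rw [Real.sq_sqrt hQ0] at h2
    linarith
  calc ∫ y in Ioo (0:ℝ) 1, (f y)^2
      ≤ ∫ (_y : ℝ) in Ioo (0:ℝ) 1, (∫ t in Ioo (0:ℝ) 1, (f' t)^2) := by
        apply setIntegral_mono_on (cont1dIntegrableOn (hf.pow 2) 0 1)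
          (cont1dIntegrableOn continuous_const 0 1) measurableSet_Ioo hpt
    _ = ∫ t in Ioo (0:ℝ) 1, (f' t)^2 := by
        rw [setIntegral_const, measureReal_def, hmeas1, one_smul]

lemma poincare1dMean (f f' : ℝ → ℝ) (hd : ∀ t, HasDerivAt f (f' t) t) (hc : Continuous f')
    (hf : Continuous f) (hmean : ∫ t in Ioo (0:ℝ) 1, f t = 0) :
    ∫ y in Ioo (0:ℝ) 1, (f y)^2 ≤ ∫ y in Ioo (0:ℝ) 1, (f' y)^2 := by
  apply sqIntBound f f' hf hc
  intro y hy
  set J := ∫ t in Ioo (0:ℝ) 1, |f' t| with hJdef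
  have hmeas1 : (volume (Ioo (0:ℝ) 1)).toReal = 1 := by rw [Real.volume_Ioo]; simp
  have hdiff : ∀ t ∈ Ioo (0:ℝ) 1, |f y - f t| ≤ J := by
    intro t ht
    have hftc := intervalIntegral.integral_eq_sub_of_hasDerivAt
      (f := f) (f' := f') (a := t) (b := y) (fun s _ => hd s)
      (hc.intervalIntegrable t y)
    have habs := absIntervalLe hc 0 1 t y ⟨ht.1.le, ht.2.le⟩ ⟨hy.1.le, hy.2.le⟩
    rw [hftc] at habs
    exact habs
  have hrep : f y = ∫ t in Ioo (0:ℝ) 1, (f y - f t) := by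
    rw [integral_sub (cont1dIntegrableOn continuous_const 0 1)
      (cont1dIntegrableOn hf 0 1), hmean, sub_zero, setIntegral_const, measureReal_def, hmeas1, one_smul]
  calc |f y| = |∫ t in Ioo (0:ℝ) 1, (f y - f t)| := by rw [← hrep]
    _ ≤ ∫ t in Ioo (0:ℝ) 1, |f y - f t| := by
        have := norm_integral_le_integral_norm
          (μ := volume.restrict (Ioo (0:ℝ) 1)) (fun t => f y - f t)
        simpa only [Real.norm_eq_abs] using this
    _ ≤ ∫ (_t : ℝ) in Ioo (0:ℝ) 1, J := by
        apply setIntegral_mono_on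
          (cont1dIntegrableOn (continuous_const.sub hf).abs 0 1)
          (cont1dIntegrableOn continuous_const 0 1) measurableSet_Ioo hdiff
    _ = J := by rw [setIntegral_const, measureReal_def, hmeas1, one_smul]

lemma poincare1dZero (f f' : ℝ → ℝ) (hd : ∀ t, HasDerivAt f (f' t) t) (hc : Continuous f')
    (hf : Continuous f) (h0 : f 0 = 0) :
    ∫ y in Ioo (0:ℝ) 1, (f y)^2 ≤ ∫ y in Ioo (0:ℝ) 1, (f' y)^2 := by
  apply sqIntBound f f' hf hc
  intro y hy
  have hftc := intervalIntegral.integral_eq_sub_of_hasDerivAt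
    (f := f) (f' := f') (a := 0) (b := y) (fun s _ => hd s)
    (hc.intervalIntegrable 0 y)
  have habs := absIntervalLe hc 0 1 0 y ⟨le_rfl, zero_le_one⟩ ⟨hy.1.le, hy.2.le⟩
  rw [hftc, h0, sub_zero] at habs
  exact habs

lemma poincareDirichlet (a b : ℝ) {g : ℝ×ℝ→ℝ} (hg : ContDiff ℝ 1 g)
    (h0 : ∀ x ∈ Ioo a b, g (x, 0) = 0) :
    ∫ pt in Ioo a b ×ˢ Ioo (0:ℝ) 1, (g pt)^2 ≤
      ∫ pt in Ioo a b ×ˢ Ioo (0:ℝ) 1, (dy g pt)^2 := by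
  have hgc : Continuous g := hg.continuous
  have hgy : Continuous (dy g) := dyCont hg
  rw [prodInt₁ (hgc.fun_pow 2), prodInt₁ (hgy.fun_pow 2)]
  apply setIntegral_mono_on (innerIntIntegrableX (hgc.pow 2) a b 0 1)
    (innerIntIntegrableX (hgy.pow 2) a b 0 1) measurableSet_Ioo
  intro x hx
  exact poincare1dZero (fun y => g (x,y)) (fun y => dy g (x,y))
    (fun t => sliceDerivY (hg.differentiable (by norm_num)) x t)
    (sliceContY hgy x) (sliceContY hgc x) (h0 x hx)

lemma poincareMeanZero (a b : ℝ) {g : ℝ×ℝ→ℝ} (hg : ContDiff ℝ 1 g)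
    (hmean : ∀ x ∈ Ioo a b, ∫ y in Ioo (0:ℝ) 1, g (x,y) = 0) :
    ∫ pt in Ioo a b ×ˢ Ioo (0:ℝ) 1, (g pt)^2 ≤
      ∫ pt in Ioo a b ×ˢ Ioo (0:ℝ) 1, (dy g pt)^2 := by
  have hgc : Continuous g := hg.continuous
  have hgy : Continuous (dy g) := dyCont hg
  rw [prodInt₁ (hgc.fun_pow 2), prodInt₁ (hgy.fun_pow 2)]
  apply setIntegral_mono_on (innerIntIntegrableX (hgc.pow 2) a b 0 1)
    (innerIntIntegrableX (hgy.pow 2) a b 0 1) measurableSet_Ioo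
  intro x hx
  exact poincare1dMean (fun y => g (x,y)) (fun y => dy g (x,y))
    (fun t => sliceDerivY (hg.differentiable (by norm_num)) x t)
    (sliceContY hgy x) (sliceContY hgc x) (hmean x hx)

/-- first-derivative entries -/
lemma fderivEntry {u : ℝ×ℝ → ℝ×ℝ} (hu : Differentiable ℝ u) (p v : ℝ×ℝ) :
    fderiv ℝ (fun q => (u q).1) p v = (fderiv ℝ u p v).1 ∧
    fderiv ℝ (fun q => (u q).2) p v = (fderiv ℝ u p v).2 := by
  constructor
  · have h := ((ContinuousLinearMap.fst ℝ ℝ ℝ).hasFDerivAt.comp p (hu p).hasFDerivAt)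
    have h' : HasFDerivAt (fun q => (u q).1)
        ((ContinuousLinearMap.fst ℝ ℝ ℝ).comp (fderiv ℝ u p)) p := h
    rw [h'.fderiv]; rfl
  · have h := ((ContinuousLinearMap.snd ℝ ℝ ℝ).hasFDerivAt.comp p (hu p).hasFDerivAt)
    have h' : HasFDerivAt (fun q => (u q).2)
        ((ContinuousLinearMap.snd ℝ ℝ ℝ).comp (fderiv ℝ u p)) p := h
    rw [h'.fderiv]; rfl

/-- norms on ℝ × ℝ -/
lemma prodNormSqLe (v : ℝ×ℝ) : ‖v‖^2 ≤ v.1^2 + v.2^2 := by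
  have h : ‖v‖ = max ‖v.1‖ ‖v.2‖ := rfl
  rcases max_cases ‖v.1‖ ‖v.2‖ with ⟨h1, _⟩ | ⟨h1, _⟩ <;> rw [h, h1] <;>
    simp only [Real.norm_eq_abs, sq_abs] <;> nlinarith [sq_nonneg v.1, sq_nonneg v.2, sq_abs v.1, sq_abs v.2]

lemma compSqLe (v : ℝ×ℝ) : v.1^2 ≤ ‖v‖^2 ∧ v.2^2 ≤ ‖v‖^2 := by
  constructor
  · have := norm_fst_le v
    have h2 : |v.1| ≤ ‖v‖ := by simpa [Real.norm_eq_abs] using this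
    nlinarith [abs_nonneg v.1, sq_abs v.1]
  · have := norm_snd_le v
    have h2 : |v.2| ≤ ‖v‖ := by simpa [Real.norm_eq_abs] using this
    nlinarith [abs_nonneg v.2, sq_abs v.2]

lemma normE1 : ‖((1:ℝ), (0:ℝ))‖ = 1 := by
  simp [Prod.norm_def]

lemma normE2 : ‖((0:ℝ), (1:ℝ))‖ = 1 := by
  simp [Prod.norm_def]

/-- operator norm bounded by the two column norms -/
lemma opNormLeCols (A : (ℝ×ℝ) →L[ℝ] (ℝ×ℝ)) : ‖A‖ ≤ ‖A (1,0)‖ + ‖A (0,1)‖ := by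
  apply ContinuousLinearMap.opNorm_le_bound A (by positivity)
  intro v
  have hv : v = v.1 • ((1:ℝ), (0:ℝ)) + v.2 • ((0:ℝ), (1:ℝ)) := by
    ext <;> simp
  calc ‖A v‖ = ‖v.1 • A (1,0) + v.2 • A (0,1)‖ := by
        conv_lhs => rw [hv]
        rw [map_add, _root_.map_smul, _root_.map_smul]
    _ ≤ ‖v.1 • A (1,0)‖ + ‖v.2 • A (0,1)‖ := norm_add_le _ _
    _ = |v.1| * ‖A (1,0)‖ + |v.2| * ‖A (0,1)‖ := by
        rw [norm_smul, norm_smul, Real.norm_eq_abs, Real.norm_eq_abs]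
    _ ≤ ‖v‖ * ‖A (1,0)‖ + ‖v‖ * ‖A (0,1)‖ := by
        have h1 : |v.1| ≤ ‖v‖ := by simpa [Real.norm_eq_abs] using norm_fst_le v
        have h2 : |v.2| ≤ ‖v‖ := by simpa [Real.norm_eq_abs] using norm_snd_le v
        have := norm_nonneg (A (1,0))
        have := norm_nonneg (A (0,1))
        nlinarith
    _ = (‖A (1,0)‖ + ‖A (0,1)‖) * ‖v‖ := by ring

lemma d2Entry {u : ℝ×ℝ → ℝ×ℝ} (hu : ContDiff ℝ 2 u) (v w : ℝ×ℝ) (p : ℝ×ℝ) :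
    fderiv ℝ (fun q => (fderiv ℝ u q v).1) p w = ((fderiv ℝ (fderiv ℝ u) p w) v).1 ∧
    fderiv ℝ (fun q => (fderiv ℝ u q v).2) p w = ((fderiv ℝ (fderiv ℝ u) p w) v).2 := by
  have hD : Differentiable ℝ (fderiv ℝ u) :=
    (hu.fderiv_right (m := 1) (by norm_num)).differentiable (by norm_num)
  constructor
  · set Φ : ((ℝ×ℝ) →L[ℝ] (ℝ×ℝ)) →L[ℝ] ℝ :=
      (ContinuousLinearMap.fst ℝ ℝ ℝ).comp ((ContinuousLinearMap.apply ℝ (ℝ×ℝ)) v) with hΦ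
    have h := (Φ.hasFDerivAt.comp p (hD p).hasFDerivAt)
    have h' : HasFDerivAt (fun q => (fderiv ℝ u q v).1)
        (Φ.comp (fderiv ℝ (fderiv ℝ u) p)) p := h
    rw [h'.fderiv]; rfl
  · set Φ : ((ℝ×ℝ) →L[ℝ] (ℝ×ℝ)) →L[ℝ] ℝ :=
      (ContinuousLinearMap.snd ℝ ℝ ℝ).comp ((ContinuousLinearMap.apply ℝ (ℝ×ℝ)) v) with hΦ
    have h := (Φ.hasFDerivAt.comp p (hD p).hasFDerivAt)
    have h' : HasFDerivAt (fun q => (fderiv ℝ u q v).2)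
        (Φ.comp (fderiv ℝ (fderiv ℝ u) p)) p := h
    rw [h'.fderiv]; rfl

lemma meanZeroU1 (L : ℝ) (u : ℝ×ℝ → ℝ×ℝ) (hu : ContDiff ℝ 2 u)
    (hdiv : ∀ p : ℝ×ℝ, dx (fun q => (u q).1) p + dy (fun q => (u q).2) p = 0)
    (hlat : ∀ y ∈ Icc (0:ℝ) 1, (u (-L, y)).1 = 0 ∧ (u (L, y)).1 = 0)
    (htb : ∀ x ∈ Icc (-L) L, (u (x, 0)).2 = 0 ∧ (u (x, 1)).2 = 0) :
    ∀ x ∈ Ioo (-L) L, ∫ y in Ioo (0:ℝ) 1, (u (x,y)).1 = 0 := by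
  intro x hx
  have hu1 : ContDiff ℝ 2 (fun q => (u q).1) := contDiff_fst.comp hu
  have hu2 : ContDiff ℝ 2 (fun q => (u q).2) := contDiff_snd.comp hu
  have hu1d : Differentiable ℝ (fun q => (u q).1) := hu1.differentiable (by norm_num)
  have hu2d : Differentiable ℝ (fun q => (u q).2) := hu2.differentiable (by norm_num)
  have hcdx1 : Continuous (dx (fun q => (u q).1)) := dxCont (hu1.of_le (by norm_num))
  have hcdy2 : Continuous (dy (fun q => (u q).2)) := dyCont (hu2.of_le (by norm_num))
  have hxL : -L ≤ x := hx.1.le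
  have hrep : ∀ y ∈ Ioo (0:ℝ) 1, (u (x,y)).1
      = ∫ t in Ioo (-L) x, dx (fun q => (u q).1) (t,y) := by
    intro y hy
    have hftc := intervalIntegral.integral_eq_sub_of_hasDerivAt
      (f := fun t => (u (t,y)).1) (f' := fun t => dx (fun q => (u q).1) (t,y))
      (a := -L) (b := x) (fun t _ => sliceDerivX hu1d t y)
      ((sliceContX hcdx1 y).intervalIntegrable (-L) x)
    beta_reduce at hftc
    rw [(hlat y ⟨hy.1.le, hy.2.le⟩).1, sub_zero] at hftc
    rw [← intervalToIoo _ (-L) x hxL, hftc]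
  have hinner : ∀ t ∈ Ioo (-L) x, (∫ y in Ioo (0:ℝ) 1, dx (fun q => (u q).1) (t,y)) = 0 := by
    intro t ht
    have htI : t ∈ Icc (-L) L := ⟨ht.1.le, ht.2.le.trans hx.2.le⟩
    have hftc := intervalIntegral.integral_eq_sub_of_hasDerivAt
      (f := fun s => (u (t,s)).2) (f' := fun s => dy (fun q => (u q).2) (t,s))
      (a := 0) (b := 1) (fun s _ => sliceDerivY hu2d t s)
      ((sliceContY hcdy2 t).intervalIntegrable 0 1)
    beta_reduce at hftc
    rw [(htb t htI).1, (htb t htI).2, sub_zero] at hftc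
    have he : (∫ y in Ioo (0:ℝ) 1, dx (fun q => (u q).1) (t,y))
        = ∫ y in Ioo (0:ℝ) 1, -(dy (fun q => (u q).2) (t,y)) := by
      apply setIntegral_congr_fun measurableSet_Ioo
      intro y _
      beta_reduce
      have := hdiv (t,y)
      linarith
    rw [he, integral_neg, ← intervalToIoo _ 0 1 zero_le_one, hftc, neg_zero]
  calc ∫ y in Ioo (0:ℝ) 1, (u (x,y)).1
      = ∫ y in Ioo (0:ℝ) 1, ∫ t in Ioo (-L) x, dx (fun q => (u q).1) (t,y) :=
        setIntegral_congr_fun measurableSet_Ioo hrep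
    _ = ∫ t in Ioo (-L) x, ∫ y in Ioo (0:ℝ) 1, dx (fun q => (u q).1) (t,y) := by
        rw [← prodInt₂ hcdx1 (-L) x 0 1, prodInt₁ hcdx1 (-L) x 0 1]
    _ = ∫ (_t : ℝ) in Ioo (-L) x, (0:ℝ) :=
        setIntegral_congr_fun measurableSet_Ioo hinner
    _ = 0 := by simp

lemma sqApply1 (A : (ℝ×ℝ) →L[ℝ] (ℝ×ℝ)) (v : ℝ×ℝ) (hv : ‖v‖ = 1) :
    ((A v).1)^2 ≤ ‖A‖^2 ∧ ((A v).2)^2 ≤ ‖A‖^2 := by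
  have h1 : ‖A v‖ ≤ ‖A‖ := by
    calc ‖A v‖ ≤ ‖A‖ * ‖v‖ := A.le_opNorm v
      _ = ‖A‖ := by rw [hv, mul_one]
  have hc := compSqLe (A v)
  have hsq : ‖A v‖^2 ≤ ‖A‖^2 := by nlinarith [norm_nonneg (A v), norm_nonneg A]
  exact ⟨hc.1.trans hsq, hc.2.trans hsq⟩

lemma sqApply2 (B : (ℝ×ℝ) →L[ℝ] ((ℝ×ℝ) →L[ℝ] (ℝ×ℝ))) (w v : ℝ×ℝ)
    (hw : ‖w‖ = 1) (hv : ‖v‖ = 1) :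
    ((B w v).1)^2 ≤ ‖B‖^2 ∧ ((B w v).2)^2 ≤ ‖B‖^2 := by
  have h1 : ‖B w v‖ ≤ ‖B‖ := by
    calc ‖B w v‖ ≤ ‖B w‖ * ‖v‖ := (B w).le_opNorm v
      _ = ‖B w‖ := by rw [hv, mul_one]
      _ ≤ ‖B‖ * ‖w‖ := B.le_opNorm w
      _ = ‖B‖ := by rw [hw, mul_one]
  have hc := compSqLe (B w v)
  have hsq : ‖B w v‖^2 ≤ ‖B‖^2 := by nlinarith [norm_nonneg (B w v), norm_nonneg B]
  exact ⟨hc.1.trans hsq, hc.2.trans hsq⟩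

set_option maxHeartbeats 5000000 in
/-- Uniform-in-`L` interpolation inequality for the gradient under Navier-slip boundary
conditions on `Ω_L = (-L,L)×(0,1)`: `‖∇u‖²_{L²} ≤ C ‖u‖_{L²} ‖∇u‖_{H¹}` with
`C = C(μ,k₀,k₁)` independent of `L ≥ 1`. -/
theorem uniform_gradient_interpolation (μ k₀ k₁ : ℝ) (hμ : 0 < μ) :
    ∃ C > 0, ∀ (L : ℝ), 1 ≤ L → ∀ (u : ℝ × ℝ → ℝ × ℝ),
      ContDiff ℝ 2 u →
      (∀ p : ℝ × ℝ, dx (fun q => (u q).1) p + dy (fun q => (u q).2) p = 0) →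
      (∀ y ∈ Set.Icc (0 : ℝ) 1, (u (-L, y)).1 = 0 ∧ (u (L, y)).1 = 0) →
      (∀ x ∈ Set.Icc (-L) L, (u (x, 0)).2 = 0 ∧ (u (x, 1)).2 = 0) →
      (∀ x ∈ Set.Icc (-L) L,
        μ * dy (fun q => (u q).1) (x, 0) = -k₀ * (u (x, 0)).1 ∧
        μ * dy (fun q => (u q).1) (x, 1) = k₁ * (u (x, 1)).1) →
      (∫ p in rect L, ‖fderiv ℝ u p‖ ^ 2) ≤
        C * (∫ p in rect L, ‖u p‖ ^ 2) ^ ((1 : ℝ) / 2) *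
          ((∫ p in rect L, ‖fderiv ℝ u p‖ ^ 2) +
            (∫ p in rect L, ‖fderiv ℝ (fderiv ℝ u) p‖ ^ 2)) ^ ((1 : ℝ) / 2) := by
  refine ⟨10^7, by norm_num, ?_⟩
  intro L hL u hu hdiv hlat htb _hnav
  have hRrw : rect L = Ioo (-L) L ×ˢ Ioo (0:ℝ) 1 := rfl
  rw [hRrw]
  -- abbreviations
  have hu1c : ContDiff ℝ 2 (fun q => (u q).1) := contDiff_fst.comp hu
  have hu2c : ContDiff ℝ 2 (fun q => (u q).2) := contDiff_snd.comp hu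
  have hud : Differentiable ℝ u := hu.differentiable (by norm_num)
  have hcu : Continuous u := hu.continuous
  have hcu1 : Continuous (fun q => (u q).1) := hu1c.continuous
  have hcu2 : Continuous (fun q => (u q).2) := hu2c.continuous
  have hDc : Continuous (fderiv ℝ u) := hu.continuous_fderiv (by norm_num)
  have hD1 : ContDiff ℝ 1 (fderiv ℝ u) := hu.fderiv_right (m := 1) (by norm_num)
  have hD2c : Continuous (fderiv ℝ (fderiv ℝ u)) := hD1.continuous_fderiv (by norm_num)
  have hcdx1 : Continuous (dx (fun q => (u q).1)) := dxCont (hu1c.of_le (by norm_num))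
  have hcdx2 : Continuous (dx (fun q => (u q).2)) := dxCont (hu2c.of_le (by norm_num))
  have hcdy1 : Continuous (dy (fun q => (u q).1)) := dyCont (hu1c.of_le (by norm_num))
  have hcdy2 : Continuous (dy (fun q => (u q).2)) := dyCont (hu2c.of_le (by norm_num))
  have hcdxx1 : Continuous (dx (dx (fun q => (u q).1))) := dxCont (dxContDiff hu1c)
  have hcdxx2 : Continuous (dx (dx (fun q => (u q).2))) := dxCont (dxContDiff hu2c)
  have hcdyy1 : Continuous (dy (dy (fun q => (u q).1))) := dyCont (dyContDiff hu1c)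
  have hcdyy2 : Continuous (dy (dy (fun q => (u q).2))) := dyCont (dyContDiff hu2c)
  set R : Set (ℝ×ℝ) := Ioo (-L) L ×ˢ Ioo (0:ℝ) 1 with hRdef
  have hRm : MeasurableSet R := measurableSet_Ioo.prod measurableSet_Ioo
  set X := ∫ p in R, ‖fderiv ℝ u p‖ ^ 2 with hX
  set MM := ∫ p in R, ‖u p‖ ^ 2 with hMM
  set ZZ := ∫ p in R, ‖fderiv ℝ (fderiv ℝ u) p‖ ^ 2 with hZZ
  set M1 := ∫ p in R, ((u p).1)^2 with hM1
  set M2 := ∫ p in R, ((u p).2)^2 with hM2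
  set Sx1 := ∫ p in R, (dx (fun q => (u q).1) p)^2 with hSx1
  set Sx2 := ∫ p in R, (dx (fun q => (u q).2) p)^2 with hSx2
  set Sy1 := ∫ p in R, (dy (fun q => (u q).1) p)^2 with hSy1
  set Sy2 := ∫ p in R, (dy (fun q => (u q).2) p)^2 with hSy2
  set Zx1 := ∫ p in R, (dx (dx (fun q => (u q).1)) p)^2 with hZx1
  set Zx2 := ∫ p in R, (dx (dx (fun q => (u q).2)) p)^2 with hZx2
  set Zy1 := ∫ p in R, (dy (dy (fun q => (u q).1)) p)^2 with hZy1
  set Zy2 := ∫ p in R, (dy (dy (fun q => (u q).2)) p)^2 with hZy2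
  have hX0 : 0 ≤ X := setIntegral_nonneg hRm (fun _ _ => sq_nonneg _)
  have hMM0 : 0 ≤ MM := setIntegral_nonneg hRm (fun _ _ => sq_nonneg _)
  have hZZ0 : 0 ≤ ZZ := setIntegral_nonneg hRm (fun _ _ => sq_nonneg _)
  -- entry identities
  have hE1 : ∀ p : ℝ×ℝ, dx (fun q => (u q).1) p = (fderiv ℝ u p (1,0)).1 := by
    intro p; simp only [dx]; exact (fderivEntry hud p (1,0)).1
  have hE2 : ∀ p : ℝ×ℝ, dx (fun q => (u q).2) p = (fderiv ℝ u p (1,0)).2 := by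
    intro p; simp only [dx]; exact (fderivEntry hud p (1,0)).2
  have hE3 : ∀ p : ℝ×ℝ, dy (fun q => (u q).1) p = (fderiv ℝ u p (0,1)).1 := by
    intro p; simp only [dy]; exact (fderivEntry hud p (0,1)).1
  have hE4 : ∀ p : ℝ×ℝ, dy (fun q => (u q).2) p = (fderiv ℝ u p (0,1)).2 := by
    intro p; simp only [dy]; exact (fderivEntry hud p (0,1)).2
  -- second-derivative entry bounds
  have hD2xx1 : ∀ p : ℝ×ℝ, dx (dx (fun q => (u q).1)) p
      = ((fderiv ℝ (fderiv ℝ u) p (1,0)) (1,0)).1 := by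
    intro p
    have hfun : dx (fun q => (u q).1) = fun q => (fderiv ℝ u q (1,0)).1 := funext hE1
    rw [hfun]
    simp only [dx]
    exact (d2Entry hu (1,0) (1,0) p).1
  have hD2xx2 : ∀ p : ℝ×ℝ, dx (dx (fun q => (u q).2)) p
      = ((fderiv ℝ (fderiv ℝ u) p (1,0)) (1,0)).2 := by
    intro p
    have hfun : dx (fun q => (u q).2) = fun q => (fderiv ℝ u q (1,0)).2 := funext hE2
    rw [hfun]
    simp only [dx]
    exact (d2Entry hu (1,0) (1,0) p).2
  have hD2yy1 : ∀ p : ℝ×ℝ, dy (dy (fun q => (u q).1)) p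
      = ((fderiv ℝ (fderiv ℝ u) p (0,1)) (0,1)).1 := by
    intro p
    have hfun : dy (fun q => (u q).1) = fun q => (fderiv ℝ u q (0,1)).1 := funext hE3
    rw [hfun]
    simp only [dy]
    exact (d2Entry hu (0,1) (0,1) p).1
  have hD2yy2 : ∀ p : ℝ×ℝ, dy (dy (fun q => (u q).2)) p
      = ((fderiv ℝ (fderiv ℝ u) p (0,1)) (0,1)).2 := by
    intro p
    have hfun : dy (fun q => (u q).2) = fun q => (fderiv ℝ u q (0,1)).2 := funext hE4
    rw [hfun]
    simp only [dy]
    exact (d2Entry hu (0,1) (0,1) p).2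
  -- comparison of integrals with MM, ZZ
  have hintMM : IntegrableOn (fun p => ‖u p‖^2) R := contIntegrableOn (hcu.norm.fun_pow 2) _ _ _ _
  have hintZZ : IntegrableOn (fun p => ‖fderiv ℝ (fderiv ℝ u) p‖^2) R :=
    contIntegrableOn (F := fun p => ‖fderiv ℝ (fderiv ℝ u) p‖^2) (by have h := (continuous_norm (E := ℝ×ℝ →L[ℝ] ℝ×ℝ →L[ℝ] ℝ×ℝ)).comp hD2c; exact h.fun_pow 2) _ _ _ _
  have hintX : IntegrableOn (fun p => ‖fderiv ℝ u p‖^2) R :=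
    contIntegrableOn (hDc.norm.fun_pow 2) _ _ _ _
  have hM1le : M1 ≤ MM := by
    apply setIntegral_mono_on (contIntegrableOn (hcu1.pow 2) _ _ _ _) hintMM hRm
    exact fun p _ => (compSqLe (u p)).1
  have hM2le : M2 ≤ MM := by
    apply setIntegral_mono_on (contIntegrableOn (hcu2.pow 2) _ _ _ _) hintMM hRm
    exact fun p _ => (compSqLe (u p)).2
  have hZx1le : Zx1 ≤ ZZ := by
    apply setIntegral_mono_on (contIntegrableOn (hcdxx1.fun_pow 2) _ _ _ _) hintZZ hRm
    intro p _
    rw [hD2xx1 p]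
    exact (sqApply2 (fderiv ℝ (fderiv ℝ u) p) (1,0) (1,0) normE1 normE1).1
  have hZx2le : Zx2 ≤ ZZ := by
    apply setIntegral_mono_on (contIntegrableOn (hcdxx2.fun_pow 2) _ _ _ _) hintZZ hRm
    intro p _
    rw [hD2xx2 p]
    exact (sqApply2 (fderiv ℝ (fderiv ℝ u) p) (1,0) (1,0) normE1 normE1).2
  have hZy1le : Zy1 ≤ ZZ := by
    apply setIntegral_mono_on (contIntegrableOn (hcdyy1.fun_pow 2) _ _ _ _) hintZZ hRm
    intro p _
    rw [hD2yy1 p]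
    exact (sqApply2 (fderiv ℝ (fderiv ℝ u) p) (0,1) (0,1) normE2 normE2).1
  have hZy2le : Zy2 ≤ ZZ := by
    apply setIntegral_mono_on (contIntegrableOn (hcdyy2.fun_pow 2) _ _ _ _) hintZZ hRm
    intro p _
    rw [hD2yy2 p]
    exact (sqApply2 (fderiv ℝ (fderiv ℝ u) p) (0,1) (0,1) normE2 normE2).2
  -- X bounded by entries
  have hXle : X ≤ 2*(Sx1 + Sx2 + Sy1 + Sy2) := by
    have hpt : ∀ p ∈ R, ‖fderiv ℝ u p‖^2 ≤
        2*((dx (fun q => (u q).1) p)^2 + (dx (fun q => (u q).2) p)^2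
          + ((dy (fun q => (u q).1) p)^2 + (dy (fun q => (u q).2) p)^2)) := by
      intro p _
      have hcols := opNormLeCols (fderiv ℝ u p)
      have hc1 := prodNormSqLe (fderiv ℝ u p (1,0))
      have hc2 := prodNormSqLe (fderiv ℝ u p (0,1))
      rw [hE1 p, hE2 p, hE3 p, hE4 p]
      nlinarith [norm_nonneg (fderiv ℝ u p), norm_nonneg (fderiv ℝ u p (1,0)),
        norm_nonneg (fderiv ℝ u p (0,1)), sq_nonneg (‖fderiv ℝ u p (1,0)‖ - ‖fderiv ℝ u p (0,1)‖)]
    have hint1 : IntegrableOn (fun p => (dx (fun q => (u q).1) p)^2) R :=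
      contIntegrableOn (hcdx1.pow 2) _ _ _ _
    have hint2 : IntegrableOn (fun p => (dx (fun q => (u q).2) p)^2) R :=
      contIntegrableOn (hcdx2.pow 2) _ _ _ _
    have hint3 : IntegrableOn (fun p => (dy (fun q => (u q).1) p)^2) R :=
      contIntegrableOn (hcdy1.pow 2) _ _ _ _
    have hint4 : IntegrableOn (fun p => (dy (fun q => (u q).2) p)^2) R :=
      contIntegrableOn (hcdy2.pow 2) _ _ _ _
    calc X ≤ ∫ p in R, 2*((dx (fun q => (u q).1) p)^2 + (dx (fun q => (u q).2) p)^2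
          + ((dy (fun q => (u q).1) p)^2 + (dy (fun q => (u q).2) p)^2)) := by
          apply setIntegral_mono_on hintX _ hRm hpt
          exact (((hint1.add hint2).add (hint3.add hint4)).const_mul 2)
      _ = 2*(Sx1 + Sx2 + Sy1 + Sy2) := by
          have hint12 : IntegrableOn (fun p => (dx (fun q => (u q).1) p)^2
              + (dx (fun q => (u q).2) p)^2) R := hint1.add hint2
          have hint34 : IntegrableOn (fun p => (dy (fun q => (u q).1) p)^2
              + (dy (fun q => (u q).2) p)^2) R := hint3.add hint4
          rw [integral_const_mul, integral_add hint12 hint34,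
            integral_add hint1 hint2, integral_add hint3 hint4]
          ring
  -- Poincare : MM ≤ 2X
  have hmean := meanZeroU1 L u hu hdiv hlat htb
  have hM1p : M1 ≤ Sy1 := poincareMeanZero (-L) L (hu1c.of_le (by norm_num)) hmean
  have hM2p : M2 ≤ Sy2 := by
    apply poincareDirichlet (-L) L (hu2c.of_le (by norm_num))
    intro x hx
    exact (htb x ⟨hx.1.le, hx.2.le⟩).1
  have hSy1X : Sy1 ≤ X := by
    apply setIntegral_mono_on (contIntegrableOn (hcdy1.fun_pow 2) _ _ _ _) hintX hRm
    intro p _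
    rw [hE3 p]
    exact (sqApply1 (fderiv ℝ u p) (0,1) normE2).1
  have hSy2X : Sy2 ≤ X := by
    apply setIntegral_mono_on (contIntegrableOn (hcdy2.fun_pow 2) _ _ _ _) hintX hRm
    intro p _
    rw [hE4 p]
    exact (sqApply1 (fderiv ℝ u p) (0,1) normE2).2
  have hMMle : MM ≤ 2*X := by
    have h1 : MM ≤ M1 + M2 := by
      have hpt : ∀ p ∈ R, ‖u p‖^2 ≤ ((u p).1)^2 + ((u p).2)^2 :=
        fun p _ => prodNormSqLe (u p)
      calc MM ≤ ∫ p in R, (((u p).1)^2 + ((u p).2)^2) := by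
            apply setIntegral_mono_on hintMM _ hRm hpt
            exact (contIntegrableOn (hcu1.pow 2) _ _ _ _).add
              (contIntegrableOn (hcu2.pow 2) _ _ _ _)
        _ = M1 + M2 := integral_add (contIntegrableOn (hcu1.pow 2) _ _ _ _)
            (contIntegrableOn (hcu2.pow 2) _ _ _ _)
    linarith [hM1p, hM2p, hSy1X, hSy2X]
  -- core GN estimates
  have hab : -L + 1 ≤ L := by linarith
  have hcd : (0:ℝ) + 1 ≤ 1 := by norm_num
  have hK : ∀ (Sv Mv Zv : ℝ), Sv ≤ 200000*(Mv + Real.sqrt Mv * Real.sqrt Zv) →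
      Mv ≤ MM → Zv ≤ ZZ → 0 ≤ Mv → 0 ≤ Zv →
      Sv ≤ 200000*(MM + Real.sqrt MM * Real.sqrt ZZ) := by
    intro Sv Mv Zv h hm hz hm0 hz0
    have h1 : Real.sqrt Mv ≤ Real.sqrt MM := Real.sqrt_le_sqrt hm
    have h2 : Real.sqrt Zv ≤ Real.sqrt ZZ := Real.sqrt_le_sqrt hz
    have h3 : Real.sqrt Mv * Real.sqrt Zv ≤ Real.sqrt MM * Real.sqrt ZZ :=
      mul_le_mul h1 h2 (Real.sqrt_nonneg _) (Real.sqrt_nonneg _)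
    linarith
  have hMv0 : ∀ (g : ℝ×ℝ → ℝ), 0 ≤ ∫ p in R, (g p)^2 :=
    fun g => setIntegral_nonneg hRm (fun _ _ => sq_nonneg _)
  have hSx1b : Sx1 ≤ 200000*(MM + Real.sqrt MM * Real.sqrt ZZ) :=
    hK _ _ _ (coreGN (-L) L 0 1 hab hu1c) hM1le hZx1le (hMv0 _) (hMv0 _)
  have hSx2b : Sx2 ≤ 200000*(MM + Real.sqrt MM * Real.sqrt ZZ) :=
    hK _ _ _ (coreGN (-L) L 0 1 hab hu2c) hM2le hZx2le (hMv0 _) (hMv0 _)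
  have hSy1b : Sy1 ≤ 200000*(MM + Real.sqrt MM * Real.sqrt ZZ) :=
    hK _ _ _ (coreGNy (-L) L 0 1 hcd hu1c) hM1le hZy1le (hMv0 _) (hMv0 _)
  have hSy2b : Sy2 ≤ 200000*(MM + Real.sqrt MM * Real.sqrt ZZ) :=
    hK _ _ _ (coreGNy (-L) L 0 1 hcd hu2c) hM2le hZy2le (hMv0 _) (hMv0 _)
  have h8 : X ≤ 1600000*(MM + Real.sqrt MM * Real.sqrt ZZ) := by linarith
  -- final numeric step
  have hsqMM : Real.sqrt MM ≤ Real.sqrt 2 * Real.sqrt (X + ZZ) := by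
    rw [← Real.sqrt_mul (by norm_num : (0:ℝ) ≤ 2)]
    apply Real.sqrt_le_sqrt
    linarith
  have hsqZZ : Real.sqrt ZZ ≤ Real.sqrt (X + ZZ) := by
    apply Real.sqrt_le_sqrt
    linarith
  have h15 : Real.sqrt 2 ≤ 1.5 := by
    nlinarith [Real.sq_sqrt (by norm_num : (0:ℝ) ≤ 2), Real.sqrt_nonneg 2]
  have hfinal : X ≤ 10^7 * Real.sqrt MM * Real.sqrt (X + ZZ) := by
    calc X ≤ 1600000*(MM + Real.sqrt MM * Real.sqrt ZZ) := h8
      _ = 1600000*(Real.sqrt MM * Real.sqrt MM + Real.sqrt MM * Real.sqrt ZZ) := by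
          rw [Real.mul_self_sqrt hMM0]
      _ = 1600000*Real.sqrt MM*(Real.sqrt MM + Real.sqrt ZZ) := by ring
      _ ≤ 1600000*Real.sqrt MM*(Real.sqrt 2 * Real.sqrt (X+ZZ) + Real.sqrt (X+ZZ)) := by
          apply mul_le_mul_of_nonneg_left _ (by positivity)
          exact add_le_add hsqMM hsqZZ
      _ = 1600000*(Real.sqrt 2+1)*(Real.sqrt MM * Real.sqrt (X+ZZ)) := by ring
      _ ≤ 10^7*(Real.sqrt MM * Real.sqrt (X+ZZ)) := by
          apply mul_le_mul_of_nonneg_right _ (by positivity)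
          nlinarith [h15, Real.sqrt_nonneg 2]
      _ = 10^7 * Real.sqrt MM * Real.sqrt (X + ZZ) := by ring
  rw [← Real.sqrt_eq_rpow, ← Real.sqrt_eq_rpow]
  exact hfinal
end
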